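/- arXiv:0806.0433 — 12 statements merged into one kernel-verified Lean document; each statement's English description precedes it below -/
import Mathlib

section
/- For n ≥ 2 and S ⊆ {1,...,n}, there exists a permutation σ of {1,...,n} whose circular descent set equals S if and only if 1 ∉ S. -/
/-- `i` (0-based position) is a circular descent position of `σ`. -/
def isCDesB {n : ℕ} (σ : Equiv.Perm (Fin n)) (i : Fin n) : Bool :=
  if h : (i : ℕ) + 1 < n then decide (σ ⟨(i : ℕ) + 1, h⟩ < σ i) else false

/-- The circular descent set of `σ`, as a set of 1-based values in `[2,n]`. -/
def cdesSet (n : ℕ) (σ : Equiv.Perm (Fin n)) : Finset ℕ :=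
  (Finset.univ.filter (fun i => isCDesB σ i = true)).image (fun i => (σ i : ℕ) + 1)

/-- The number of permutations of `[n]` with circular descent set `S`. -/
def cdes (n : ℕ) (S : Finset ℕ) : ℕ :=
  (Finset.univ.filter (fun σ : Equiv.Perm (Fin n) => cdesSet n σ = S)).card
theorem stmt_0 (n : ℕ) (hn : 2 ≤ n) (S : Finset ℕ) (hS : S ⊆ Finset.Icc 1 n) :
    (∃ σ : Equiv.Perm (Fin n), cdesSet n σ = S) ↔ 1 ∉ S := by
  classical
  constructor
  · rintro ⟨σ, rfl⟩ h1
    simp only [cdesSet, Finset.mem_image, Finset.mem_filter, Finset.mem_univ, true_and] at h1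
    obtain ⟨i, hi, hv⟩ := h1
    unfold isCDesB at hi
    split at hi
    · rename_i h
      have hlt : σ ⟨(i : ℕ) + 1, h⟩ < σ i := of_decide_eq_true hi
      have : (σ ⟨(i : ℕ) + 1, h⟩ : ℕ) < (σ i : ℕ) := hlt
      omega
    · simp at hi
  · intro h1
    -- the set of 0-based values whose 1-based version lies in S
    set T : Finset (Fin n) := Finset.univ.filter (fun v => (v : ℕ) + 1 ∈ S) with hTdef
    set z : Fin n := ⟨0, by omega⟩ with hzdef
    have hTz : z ∉ T := by
      simp only [hTdef, Finset.mem_filter, Finset.mem_univ, true_and, hzdef]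
      exact h1
    have hTimg : T.image (fun v : Fin n => (v : ℕ) + 1) = S := by
      ext s
      simp only [Finset.mem_image, hTdef, Finset.mem_filter, Finset.mem_univ, true_and]
      constructor
      · rintro ⟨v, hv, rfl⟩; exact hv
      · intro hs
        have hb := Finset.mem_Icc.mp (hS hs)
        have h2 : s - 1 + 1 = s := by omega
        refine ⟨⟨s - 1, by omega⟩, ?_, by show s - 1 + 1 = s; omega⟩
        show s - 1 + 1 ∈ S
        rw [h2]; exact hs
    set k := T.card with hkdef
    set l1 : List (Fin n) := (T.sort (· ≤ ·)).reverse with hl1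
    set l2 : List (Fin n) := (Tᶜ.sort (· ≤ ·)) with hl2
    have hm1 : ∀ x, x ∈ l1 ↔ x ∈ T := by
      intro x; simp [hl1, Finset.mem_sort]
    have hm2 : ∀ x, x ∈ l2 ↔ x ∉ T := by
      intro x; simp [hl2, Finset.mem_sort]
    have hlen1 : l1.length = k := by simp [hl1, hkdef]
    have hlen2 : l2.length = n - k := by
      simp [hl2, hkdef, Finset.card_compl]
    have hkn : k < n := by
      have hsub : T ⊆ Finset.univ.erase z := fun x hx =>
        Finset.mem_erase.mpr ⟨fun h => hTz (h ▸ hx), Finset.mem_univ x⟩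
      have := Finset.card_le_card hsub
      rw [Finset.card_erase_of_mem (Finset.mem_univ z)] at this
      simp only [Finset.card_univ, Fintype.card_fin] at this
      omega
    have hlen : (l1 ++ l2).length = n := by
      simp only [List.length_append, hlen1, hlen2]; omega
    have hnd : (l1 ++ l2).Nodup := by
      refine List.Nodup.append ?_ (Finset.sort_nodup _ _) ?_
      · exact List.nodup_reverse.mpr (Finset.sort_nodup _ _)
      · intro x hx1 hx2
        exact (hm2 x).mp hx2 ((hm1 x).mp hx1)
    have hall : ∀ x : Fin n, x ∈ l1 ++ l2 := by
      intro x
      by_cases hx : x ∈ T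
      · exact List.mem_append_left _ ((hm1 x).mpr hx)
      · exact List.mem_append_right _ ((hm2 x).mpr hx)
    obtain ⟨σ, hσ⟩ : ∃ σ : Equiv.Perm (Fin n),
        ∀ (m : ℕ) (hm : m < n), σ ⟨m, hm⟩ = (l1 ++ l2)[m]'(by omega) := by
      refine ⟨(finCongr hlen).symm.trans (hnd.getEquivOfForallMemList _ hall), ?_⟩
      intro m hm
      simp [List.Nodup.getEquivOfForallMemList_apply]
    -- l1 entries
    have hl1mem : ∀ (m : ℕ) (hm : m < k), l1[m]'(by omega) ∈ T := by
      intro m hm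
      exact (hm1 _).mp (List.getElem_mem _)
    -- l1 strictly decreasing
    have hl1dec : ∀ (m m' : ℕ) (hm : m < m') (hm' : m' < k),
        l1[m']'(by omega) < l1[m]'(by omega) := by
      intro m m' hmm hm'
      have hs := T.sortedLT_sort
      have hlth : (T.sort (· ≤ ·)).length = k := by simp [hkdef]
      simp only [hl1]
      rw [List.getElem_reverse, List.getElem_reverse]
      have := hs.strictMono_get (a := ⟨(T.sort (· ≤ ·)).length - 1 - m', by omega⟩)
        (b := ⟨(T.sort (· ≤ ·)).length - 1 - m, by omega⟩) (by simp only [Fin.mk_lt_mk]; omega)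
      simpa using this
    -- l2 strictly increasing
    have hl2srt : List.SortedLT l2 := by
      rw [hl2]; exact Tᶜ.sortedLT_sort
    have hl2inc : ∀ (m m' : ℕ) (hm : m < m') (hm' : m' < l2.length),
        l2[m]'(by omega) < l2[m']'(by omega) := by
      intro m m' hmm hm'
      have := hl2srt.strictMono_get (a := ⟨m, by omega⟩) (b := ⟨m', hm'⟩)
        (by simp only [Fin.mk_lt_mk]; omega)
      simpa using this
    -- first element of l2 is z
    have hl2z : ∀ (h : 0 < l2.length), l2[0]'h = z := by
      intro h
      have hzmem : z ∈ l2 := (hm2 z).mpr hTz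
      obtain ⟨j, hj, hjz⟩ := List.mem_iff_getElem.mp hzmem
      rcases Nat.eq_zero_or_pos j with rfl | hj0
      · exact hjz
      · have := hl2inc 0 j hj0 hj
        rw [hjz] at this
        exact absurd (Fin.lt_iff_val_lt_val.mp this) (by simp [hzdef])
    -- descent characterization
    have hdes : ∀ (m : ℕ) (hm : m + 1 < n),
        ((l1 ++ l2)[m + 1]'(by omega) < (l1 ++ l2)[m]'(by omega) ↔ m < k) := by
      intro m hm
      constructor
      · intro hd
        by_contra hmk
        push_neg at hmk
        rw [List.getElem_append_right (by omega), List.getElem_append_right (by omega)] at hd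
        have := hl2inc (m - l1.length) (m + 1 - l1.length) (by omega) (by omega)
        exact absurd hd (not_lt.mpr (le_of_lt this))
      · intro hmk
        rcases lt_or_eq_of_le (Nat.succ_le_of_lt hmk) with hlt | heq
        · -- m + 1 < k : both in l1
          rw [List.getElem_append_left (by omega), List.getElem_append_left (by omega)]
          exact hl1dec m (m + 1) (by omega) hlt
        · -- m + 1 = k
          rw [List.getElem_append_left (by omega : m < l1.length),
            List.getElem_append_right (by omega : l1.length ≤ m + 1)]
          have h0 : m + 1 - l1.length = 0 := by omega
          have hT : l1[m]'(by omega) ∈ T := hl1mem m hmk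
          have hne : l1[m]'(by omega) ≠ z := fun h => hTz (h ▸ hT)
          have hne' : (l1[m]'(by omega) : ℕ) ≠ 0 := fun h0' => hne (Fin.ext h0')
          have : l2[m + 1 - l1.length]'(by omega) = z := by
            rw [show l2[m + 1 - l1.length]'(by omega) = l2[0]'(by omega) by congr 1]
            exact hl2z _
          rw [this, Fin.lt_iff_val_lt_val]
          simp only [hzdef]
          omega
    -- now compute cdesSet
    refine ⟨σ, ?_⟩
    have hfilter : Finset.univ.filter (fun i => isCDesB σ i = true)
        = Finset.univ.filter (fun i : Fin n => (i : ℕ) < k) := by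
      ext i
      simp only [Finset.mem_filter, Finset.mem_univ, true_and]
      unfold isCDesB
      split
      · rename_i h
        rw [decide_eq_true_eq]
        rw [hσ _ h, show σ i = (l1 ++ l2)[(i : ℕ)]'(by omega) from hσ i.1 i.2]
        exact hdes i.1 h
      · rename_i h
        simp only [Bool.false_eq_true, false_iff]
        omega
    rw [cdesSet, hfilter]
    have himg : (Finset.univ.filter (fun i : Fin n => (i : ℕ) < k)).image (fun i => σ i) = T := by
      ext v
      simp only [Finset.mem_image, Finset.mem_filter, Finset.mem_univ, true_and]
      constructor
      · rintro ⟨i, hik, rfl⟩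
        have : σ i = l1[(i : ℕ)]'(by omega) := by
          rw [show σ i = (l1 ++ l2)[(i : ℕ)]'(by omega) from hσ i.1 i.2,
            List.getElem_append_left (by omega)]
        rw [this]
        exact hl1mem _ (by omega)
      · intro hv
        obtain ⟨m, hm, hmv⟩ := List.mem_iff_getElem.mp ((hm1 v).mpr hv)
        refine ⟨⟨m, by omega⟩, by simpa using (by omega : m < k), ?_⟩
        rw [hσ m (by omega), List.getElem_append_left (by omega)]
        exact hmv
    calc (Finset.univ.filter (fun i : Fin n => (i : ℕ) < k)).image (fun i => (σ i : ℕ) + 1)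
        = ((Finset.univ.filter (fun i : Fin n => (i : ℕ) < k)).image (fun i => σ i)).image
            (fun v : Fin n => (v : ℕ) + 1) := by rw [Finset.image_image]; rfl
      _ = T.image (fun v : Fin n => (v : ℕ) + 1) := by rw [himg]
      _ = S := hTimg
end

section
/- For n ≥ 3 and S ⊆ [3,n], the number of permutations of [n] with circular descent set S ∪ {2} equals the number of permutations of [n-1] with circular descent set δ(S) = {s-1 : s ∈ S}. -/
namespace CDAux

open Equiv

lemma mem_cdesSet {n : ℕ} (σ : Equiv.Perm (Fin n)) (a : ℕ) :
    a ∈ cdesSet n σ ↔ ∃ i : Fin n, ∃ h : (i : ℕ) + 1 < n,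
      σ ⟨(i : ℕ) + 1, h⟩ < σ i ∧ (σ i : ℕ) + 1 = a := by
  simp only [cdesSet, Finset.mem_image, Finset.mem_filter, Finset.mem_univ, true_and, isCDesB]
  constructor
  · rintro ⟨i, hi, rfl⟩
    by_cases h : (i : ℕ) + 1 < n
    · refine ⟨i, h, ?_, rfl⟩
      simpa [h] using hi
    · simp [h] at hi
  · rintro ⟨i, h, hd, rfl⟩
    exact ⟨i, by simp [h, hd], rfl⟩

lemma two_le_of_mem_cdesSet {n : ℕ} {σ : Equiv.Perm (Fin n)} {a : ℕ}
    (ha : a ∈ cdesSet n σ) : 2 ≤ a := by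
  rw [mem_cdesSet] at ha
  obtain ⟨i, h, hd, rfl⟩ := ha
  have : (σ ⟨(i : ℕ) + 1, h⟩ : ℕ) < (σ i : ℕ) := hd
  omega

variable {m : ℕ}

/-- Delete the value `0` from `σ` and shift all values down by one. -/
def delP (σ : Equiv.Perm (Fin (m+2))) : Equiv.Perm (Fin (m+1)) :=
  Equiv.removeNone ((finSuccEquiv' (σ⁻¹ 0)).symm.trans (σ.trans (finSuccEquiv' 0)))

lemma delP_succ (σ : Equiv.Perm (Fin (m+2))) (j : Fin (m+1)) :
    (delP σ j).succ = σ ((σ⁻¹ 0).succAbove j) := by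
  have hx : σ ((σ⁻¹ 0).succAbove j) ≠ 0 := by
    intro h
    exact Fin.succAbove_ne (σ⁻¹ 0) j (Equiv.Perm.eq_inv_iff_eq.mpr h)
  obtain ⟨y, hy⟩ : ∃ y : Fin (m+1), σ ((σ⁻¹ 0).succAbove j) = y.succ :=
    ⟨(σ ((σ⁻¹ 0).succAbove j)).pred hx, (Fin.succ_pred _ hx).symm⟩
  set e : Option (Fin (m+1)) ≃ Option (Fin (m+1)) :=
    (finSuccEquiv' (σ⁻¹ 0)).symm.trans (σ.trans (finSuccEquiv' 0)) with he
  have key : e (some j) = some y := by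
    rw [he]
    simp only [Equiv.trans_apply, finSuccEquiv'_symm_some, hy]
    rw [finSuccEquiv'_above (Fin.zero_le _)]
  have h2 := Equiv.removeNone_some e ⟨_, key⟩
  rw [key] at h2
  have h3 : delP σ j = y := Option.some_injective _ h2
  rw [h3, hy]

/-- Insert the value `0` right after the position of the value `0` of `τ`,
and shift all values up by one. -/
def insP (τ : Equiv.Perm (Fin (m+1))) : Equiv.Perm (Fin (m+2)) :=
  (finSuccEquiv' ((τ⁻¹ 0).succ)).trans ((τ.optionCongr).trans (finSuccEquiv' (0 : Fin (m+2))).symm)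

lemma insP_q (τ : Equiv.Perm (Fin (m+1))) : insP τ ((τ⁻¹ 0).succ) = 0 := by
  simp [insP, finSuccEquiv'_at, finSuccEquiv'_symm_none]

lemma insP_succAbove (τ : Equiv.Perm (Fin (m+1))) (j : Fin (m+1)) :
    insP τ (((τ⁻¹ 0).succ).succAbove j) = (τ j).succ := by
  simp only [insP, Equiv.trans_apply, finSuccEquiv'_succAbove, Equiv.optionCongr_apply,
    Option.map_some, finSuccEquiv'_symm_some, Fin.succAbove_zero]

lemma insP_inv_zero (τ : Equiv.Perm (Fin (m+1))) : (insP τ)⁻¹ 0 = (τ⁻¹ 0).succ := by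
  have := insP_q τ
  exact ((Equiv.symm_apply_eq _).2 this.symm).symm

lemma delP_insP (τ : Equiv.Perm (Fin (m+1))) : delP (insP τ) = τ := by
  ext1 j
  have h1 : (delP (insP τ) j).succ = insP τ (((insP τ)⁻¹ 0).succAbove j) := delP_succ _ j
  rw [insP_inv_zero] at h1
  rw [insP_succAbove] at h1
  exact Fin.succ_injective _ h1


lemma val_succAbove (p : Fin (m+2)) (j : Fin (m+1)) :
    ((p.succAbove j : Fin (m+2)) : ℕ) = if (j:ℕ) < (p:ℕ) then (j:ℕ) else (j:ℕ)+1 := by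
  rcases Nat.lt_or_ge (j:ℕ) (p:ℕ) with h | h
  · rw [Fin.succAbove_of_castSucc_lt _ _ (by simpa [Fin.lt_def] using h), if_pos h,
      Fin.coe_castSucc]
  · rw [Fin.succAbove_of_le_castSucc _ _ (by simpa [Fin.le_def] using h),
      if_neg (by omega), Fin.val_succ]

lemma cdesSet_delP (σ : Equiv.Perm (Fin (m+2))) (i₁ : Fin (m+2)) (h1 : (i₁ : ℕ) + 1 < m + 2)
    (hσ1 : σ i₁ = 1) (hσ0 : σ ⟨(i₁ : ℕ) + 1, h1⟩ = 0) :
    cdesSet (m+1) (delP σ) = ((cdesSet (m+2) σ).erase 2).image (fun s => s - 1) := by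
  have inv0 : σ⁻¹ 0 = ⟨(i₁:ℕ)+1, h1⟩ := (Equiv.Perm.eq_inv_iff_eq.mpr hσ0).symm
  have i0val : ((σ⁻¹ 0 : Fin (m+2)) : ℕ) = (i₁:ℕ) + 1 := by rw [inv0]
  have vdel : ∀ j : Fin (m+1), (σ ((σ⁻¹ 0).succAbove j) : ℕ) = (delP σ j : ℕ) + 1 := by
    intro j; rw [← delP_succ σ j, Fin.val_succ]
  have vpos : ∀ j : Fin (m+1),
      ((σ⁻¹ 0).succAbove j : ℕ) = if (j:ℕ) < (i₁:ℕ)+1 then (j:ℕ) else (j:ℕ)+1 := by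
    intro j; rw [val_succAbove, i0val]
  have vpos' : ∀ (x : ℕ) (hx : x < m+1),
      (((σ⁻¹ 0).succAbove ⟨x, hx⟩ : Fin (m+2)) : ℕ) = if x < (i₁:ℕ)+1 then x else x+1 :=
    fun x hx => vpos ⟨x, hx⟩
  ext a
  simp only [Finset.mem_image, Finset.mem_erase]
  constructor
  · intro ha
    rw [mem_cdesSet] at ha
    obtain ⟨j, hj, hd, ha⟩ := ha
    replace hd : (delP σ ⟨(j:ℕ)+1, hj⟩ : ℕ) < (delP σ j : ℕ) := hd
    refine ⟨a + 1, ⟨by omega, ?_⟩, by simp⟩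
    rw [mem_cdesSet]
    have hplt : (((σ⁻¹ 0).succAbove j : Fin (m+2)) : ℕ)+1 < m+2 := by
      have h3 := j.isLt
      rw [vpos j]; split_ifs <;> omega
    refine ⟨(σ⁻¹ 0).succAbove j, hplt, ?_, by rw [vdel]; omega⟩
    rw [Fin.lt_def]
    by_cases hc : (j:ℕ) = (i₁:ℕ)
    · -- next position is the position of 0
      have e2 : (⟨(((σ⁻¹ 0).succAbove j : Fin (m+2)) : ℕ)+1, hplt⟩ : Fin (m+2))
          = ⟨(i₁:ℕ)+1, h1⟩ := by
        apply Fin.ext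
        show (((σ⁻¹ 0).succAbove j : Fin (m+2)) : ℕ)+1 = (i₁:ℕ)+1
        rw [vpos j]; split_ifs <;> omega
      rw [e2, hσ0, vdel]
      simp only [Fin.val_zero]
      omega
    · have e2 : (⟨(((σ⁻¹ 0).succAbove j : Fin (m+2)) : ℕ)+1, hplt⟩ : Fin (m+2))
          = (σ⁻¹ 0).succAbove ⟨(j:ℕ)+1, hj⟩ := by
        apply Fin.ext
        show (((σ⁻¹ 0).succAbove j : Fin (m+2)) : ℕ)+1
            = (((σ⁻¹ 0).succAbove (⟨(j:ℕ)+1, hj⟩ : Fin (m+1)) : Fin (m+2)) : ℕ)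
        rw [vpos' ((j:ℕ)+1) hj, vpos j]
        split_ifs <;> omega
      rw [e2, vdel, vdel]
      omega
  · rintro ⟨b, ⟨hb2, hbmem⟩, rfl⟩
    show b - 1 ∈ cdesSet (m+1) (delP σ)
    rw [mem_cdesSet] at hbmem
    obtain ⟨i, hi, hd, hb⟩ := hbmem
    replace hd : (σ ⟨(i:ℕ)+1, hi⟩ : ℕ) < (σ i : ℕ) := hd
    have hvi2 : 2 ≤ (σ i : ℕ) := by omega
    have hne1 : (i:ℕ) ≠ (i₁:ℕ) := by
      intro h
      have hii : i = i₁ := Fin.ext h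
      rw [hii, hσ1] at hvi2
      simp [Fin.val_one] at hvi2
    have hne0 : (i:ℕ) ≠ (i₁:ℕ)+1 := by
      intro h
      have hii : i = ⟨(i₁:ℕ)+1, h1⟩ := Fin.ext h
      rw [hii, hσ0] at hvi2
      simp at hvi2
    rw [mem_cdesSet]
    rcases Nat.lt_or_ge (i:ℕ) (i₁:ℕ) with hlt | hge
    · have hjlt : (i:ℕ) < m+1 := by omega
      have hjj : (i:ℕ)+1 < m+1 := by omega
      have e1 : (σ⁻¹ 0).succAbove ⟨(i:ℕ), hjlt⟩ = i := by
        apply Fin.ext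
        rw [vpos' (i:ℕ) hjlt]
        split_ifs <;> omega
      have e2 : (σ⁻¹ 0).succAbove ⟨(i:ℕ)+1, hjj⟩ = ⟨(i:ℕ)+1, hi⟩ := by
        apply Fin.ext
        show _ = (i:ℕ)+1
        rw [vpos' ((i:ℕ)+1) hjj]
        split_ifs <;> omega
      have v1 := vdel ⟨(i:ℕ), hjlt⟩
      rw [e1] at v1
      have v2 := vdel ⟨(i:ℕ)+1, hjj⟩
      rw [e2] at v2
      refine ⟨⟨(i:ℕ), hjlt⟩, hjj,
        show delP σ ⟨(i:ℕ)+1, hjj⟩ < delP σ ⟨(i:ℕ), hjlt⟩ from ?_,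
        show (delP σ ⟨(i:ℕ), hjlt⟩ : ℕ) + 1 = b - 1 from ?_⟩
      · rw [Fin.lt_def]; omega
      · omega
    · have hge2 : (i₁:ℕ)+2 ≤ (i:ℕ) := by omega
      have hjlt : (i:ℕ)-1 < m+1 := by omega
      have hjj : (i:ℕ) < m+1 := by omega
      have e1 : (σ⁻¹ 0).succAbove ⟨(i:ℕ)-1, hjlt⟩ = i := by
        apply Fin.ext
        rw [vpos' ((i:ℕ)-1) hjlt]
        split_ifs <;> omega
      have e2 : (σ⁻¹ 0).succAbove ⟨(i:ℕ), hjj⟩ = ⟨(i:ℕ)+1, hi⟩ := by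
        apply Fin.ext
        show _ = (i:ℕ)+1
        rw [vpos' (i:ℕ) hjj]
        split_ifs <;> omega
      have v1 := vdel ⟨(i:ℕ)-1, hjlt⟩
      rw [e1] at v1
      have v2 := vdel ⟨(i:ℕ), hjj⟩
      rw [e2] at v2
      have hjj' : ((i:ℕ)-1)+1 < m+1 := by omega
      refine ⟨⟨(i:ℕ)-1, hjlt⟩, hjj',
        show delP σ ⟨((i:ℕ)-1)+1, hjj'⟩ < delP σ ⟨(i:ℕ)-1, hjlt⟩ from ?_,
        show (delP σ ⟨(i:ℕ)-1, hjlt⟩ : ℕ) + 1 = b - 1 from ?_⟩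
      · have e4 : (⟨((i:ℕ)-1)+1, hjj'⟩ : Fin (m+1)) = ⟨(i:ℕ), hjj⟩ := by
          apply Fin.ext
          show (i:ℕ)-1+1 = (i:ℕ)
          omega
        rw [e4, Fin.lt_def]; omega
      · omega


lemma exists_of_two_mem {σ : Equiv.Perm (Fin (m+2))} (h : 2 ∈ cdesSet (m+2) σ) :
    ∃ (i₁ : Fin (m+2)) (h1 : (i₁:ℕ)+1 < m+2), σ i₁ = 1 ∧ σ ⟨(i₁:ℕ)+1, h1⟩ = 0 := by
  rw [mem_cdesSet] at h
  obtain ⟨i, hi, hd, h2⟩ := h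
  have hv1 : (σ i : ℕ) = 1 := by omega
  have hd' : (σ ⟨(i:ℕ)+1, hi⟩ : ℕ) < (σ i : ℕ) := hd
  refine ⟨i, hi, Fin.ext (by rw [hv1, Fin.val_one]), Fin.ext (by
    show (σ ⟨(i:ℕ)+1, hi⟩ : ℕ) = (0 : Fin (m+2)).val
    rw [Fin.val_zero]; omega)⟩

lemma insP_delP (σ : Equiv.Perm (Fin (m+2))) (i₁ : Fin (m+2)) (h1 : (i₁ : ℕ) + 1 < m + 2)
    (hσ1 : σ i₁ = 1) (hσ0 : σ ⟨(i₁ : ℕ) + 1, h1⟩ = 0) :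
    insP (delP σ) = σ := by
  have inv0 : σ⁻¹ 0 = ⟨(i₁:ℕ)+1, h1⟩ := (Equiv.Perm.eq_inv_iff_eq.mpr hσ0).symm
  have hjlt : (i₁:ℕ) < m+1 := by omega
  have hsa : (σ⁻¹ 0).succAbove ⟨(i₁:ℕ), hjlt⟩ = i₁ := by
    apply Fin.ext
    rw [val_succAbove, inv0]
    have r1 : ((⟨(i₁:ℕ)+1, h1⟩ : Fin (m+2)) : ℕ) = (i₁:ℕ)+1 := rfl
    have r2 : ((⟨(i₁:ℕ), hjlt⟩ : Fin (m+1)) : ℕ) = (i₁:ℕ) := rfl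
    rw [r1, r2]
    split_ifs <;> omega
  have hd0 : delP σ ⟨(i₁:ℕ), hjlt⟩ = 0 := by
    apply Fin.succ_injective
    rw [delP_succ, hsa, hσ1]
    rfl
  have hq : (delP σ)⁻¹ 0 = ⟨(i₁:ℕ), hjlt⟩ := (Equiv.Perm.eq_inv_iff_eq.mpr hd0).symm
  have hqs : ((delP σ)⁻¹ 0).succ = σ⁻¹ 0 := by
    apply Fin.ext
    rw [hq, inv0]
    rfl
  ext1 i
  by_cases hc : i = σ⁻¹ 0
  · rw [hc, ← hqs, insP_q]
    rw [hqs]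
    exact (Equiv.apply_symm_apply σ 0).symm
  · obtain ⟨j', hj'⟩ := Fin.exists_succAbove_eq hc
    rw [← hj', ← hqs, insP_succAbove, delP_succ, hqs]

lemma insP_one (τ : Equiv.Perm (Fin (m+1))) :
    ∃ (h1 : (((τ⁻¹ 0).castSucc : Fin (m+2)) : ℕ) + 1 < m + 2),
      insP τ (τ⁻¹ 0).castSucc = 1 ∧ insP τ ⟨(((τ⁻¹ 0).castSucc : Fin (m+2)) : ℕ)+1, h1⟩ = 0 := by
  have h1 : (((τ⁻¹ 0).castSucc : Fin (m+2)) : ℕ) + 1 < m + 2 := by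
    have := (τ⁻¹ 0).isLt
    rw [Fin.coe_castSucc]
    omega
  refine ⟨h1, ?_, ?_⟩
  · have hsa : ((τ⁻¹ 0).succ).succAbove (τ⁻¹ 0) = (τ⁻¹ 0).castSucc :=
      Fin.succAbove_of_castSucc_lt _ _ (Fin.castSucc_lt_succ)
    rw [← hsa, insP_succAbove]
    rw [show τ (τ⁻¹ 0) = 0 from Equiv.apply_symm_apply τ 0]
    rfl
  · have : (⟨(((τ⁻¹ 0).castSucc : Fin (m+2)) : ℕ)+1, h1⟩ : Fin (m+2)) = (τ⁻¹ 0).succ := by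
      apply Fin.ext
      rw [Fin.val_succ]
      show ((τ⁻¹ 0).castSucc : ℕ) + 1 = _
      rw [Fin.coe_castSucc]
    rw [this, insP_q]

lemma image_pred_inj {A B : Finset ℕ} (hA : ∀ x ∈ A, 3 ≤ x) (hB : ∀ x ∈ B, 3 ≤ x)
    (h : A.image (fun s => s - 1) = B.image (fun s => s - 1)) : A = B := by
  ext x
  constructor <;> intro hx
  · have hx' : x - 1 ∈ B.image (fun s => s - 1) := h ▸ Finset.mem_image_of_mem _ hx
    obtain ⟨y, hy, hxy⟩ := Finset.mem_image.1 hx'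
    have h3x := hA x hx
    have h3y := hB y hy
    have : y = x := by omega
    exact this ▸ hy
  · have hx' : x - 1 ∈ A.image (fun s => s - 1) := h ▸ Finset.mem_image_of_mem _ hx
    obtain ⟨y, hy, hxy⟩ := Finset.mem_image.1 hx'
    have h3x := hB x hx
    have h3y := hA y hy
    have : y = x := by omega
    exact this ▸ hy

end CDAux

theorem stmt_2 (n : ℕ) (hn : 3 ≤ n) (S : Finset ℕ) (hS : S ⊆ Finset.Icc 3 n) :
    cdes n (insert 2 S) = cdes (n - 1) (S.image (fun s => s - 1)) := by
  obtain ⟨m, rfl⟩ : ∃ m, n = m + 2 := ⟨n - 2, by omega⟩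
  have h2S : 2 ∉ S := by
    intro h
    have := Finset.mem_Icc.1 (hS h)
    omega
  have hS3 : ∀ x ∈ S, 3 ≤ x := fun x hx => (Finset.mem_Icc.1 (hS hx)).1
  have hn1 : m + 2 - 1 = m + 1 := rfl
  rw [hn1]
  unfold cdes
  apply Finset.card_bij' (fun σ _ => CDAux.delP σ) (fun τ _ => CDAux.insP τ)
  · intro σ hσ
    simp only [Finset.mem_filter, Finset.mem_univ, true_and] at hσ ⊢
    have h2mem : 2 ∈ cdesSet (m+2) σ := hσ ▸ Finset.mem_insert_self 2 S
    obtain ⟨i₁, h1, e1, e0⟩ := CDAux.exists_of_two_mem h2mem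
    rw [CDAux.cdesSet_delP σ i₁ h1 e1 e0, hσ, Finset.erase_insert h2S]
  · intro τ hτ
    simp only [Finset.mem_filter, Finset.mem_univ, true_and] at hτ ⊢
    obtain ⟨h1, e1, e0⟩ := CDAux.insP_one τ
    have key := CDAux.cdesSet_delP (CDAux.insP τ) _ h1 e1 e0
    rw [CDAux.delP_insP] at key
    have h2mem : 2 ∈ cdesSet (m+2) (CDAux.insP τ) := by
      rw [CDAux.mem_cdesSet]
      refine ⟨(τ⁻¹ 0).castSucc, h1, ?_, ?_⟩
      · rw [e0, e1, Fin.lt_def, Fin.val_zero, Fin.val_one]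
        omega
      · rw [e1, Fin.val_one]
    have hT3 : ∀ x ∈ (cdesSet (m+2) (CDAux.insP τ)).erase 2, 3 ≤ x := by
      intro x hx
      have h2 := CDAux.two_le_of_mem_cdesSet (Finset.mem_of_mem_erase hx)
      have h3 := Finset.ne_of_mem_erase hx
      omega
    have hTS : (cdesSet (m+2) (CDAux.insP τ)).erase 2 = S :=
      CDAux.image_pred_inj hT3 hS3 (by rw [← key, hτ])
    rw [← hTS, Finset.insert_erase h2mem]
  · intro σ hσ
    simp only [Finset.mem_filter, Finset.mem_univ, true_and] at hσ
    have h2mem : 2 ∈ cdesSet (m+2) σ := hσ ▸ Finset.mem_insert_self 2 S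
    obtain ⟨i₁, h1, e1, e0⟩ := CDAux.exists_of_two_mem h2mem
    exact CDAux.insP_delP σ i₁ h1 e1 e0
  · intro τ _
    exact CDAux.delP_insP τ
end

section
/- Let S ⊆ [2,n] be nonempty with maximum element j. Then for every integer n ≥ j, cdes_n(S) = cdes_j(S). -/
/-- Extend a permutation of `Fin n` to one of `Fin (n+1)` fixing the last point. -/
def extPerm {n : ℕ} (τ : Equiv.Perm (Fin n)) : Equiv.Perm (Fin (n + 1)) :=
  finSuccEquivLast.symm.permCongr τ.optionCongr

lemma extPerm_castSucc {n : ℕ} (τ : Equiv.Perm (Fin n)) (i : Fin n) :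
    extPerm τ i.castSucc = (τ i).castSucc := by
  simp [extPerm, Equiv.permCongr_apply]

lemma extPerm_last {n : ℕ} (τ : Equiv.Perm (Fin n)) :
    extPerm τ (Fin.last n) = Fin.last n := by
  simp [extPerm, Equiv.permCongr_apply]

lemma isCDesB_extPerm_castSucc {n : ℕ} (τ : Equiv.Perm (Fin n)) (k : Fin n) :
    isCDesB (extPerm τ) k.castSucc = isCDesB τ k := by
  unfold isCDesB
  have hk1 : (k.castSucc : ℕ) + 1 < n + 1 := by
    simp [Fin.castSucc]
  rw [dif_pos hk1]
  by_cases h : (k : ℕ) + 1 < n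
  · rw [dif_pos h]
    have he : (⟨(k.castSucc : ℕ) + 1, hk1⟩ : Fin (n + 1)) =
        (⟨(k : ℕ) + 1, h⟩ : Fin n).castSucc := by
      simp [Fin.castSucc, Fin.castAdd, Fin.castLE]
    rw [he, extPerm_castSucc, extPerm_castSucc]
    simp [Fin.castSucc_lt_castSucc_iff]
  · rw [dif_neg h]
    have hn : (k : ℕ) + 1 = n := by have := k.isLt; omega
    have he : (⟨(k.castSucc : ℕ) + 1, hk1⟩ : Fin (n + 1)) = Fin.last n := by
      simp [Fin.castSucc, Fin.castAdd, Fin.castLE, Fin.last, Fin.ext_iff, hn]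
    rw [he, extPerm_last, extPerm_castSucc]
    simp [not_lt.mpr (Fin.castSucc_lt_last (τ k)).le]

lemma isCDesB_last {n : ℕ} (σ : Equiv.Perm (Fin (n + 1))) :
    isCDesB σ (Fin.last n) = false := by
  unfold isCDesB
  rw [dif_neg]
  simp [Fin.last]

lemma cdesSet_extPerm {n : ℕ} (τ : Equiv.Perm (Fin n)) :
    cdesSet (n + 1) (extPerm τ) = cdesSet n τ := by
  ext a
  simp only [cdesSet, Finset.mem_image, Finset.mem_filter, Finset.mem_univ, true_and]
  constructor
  · rintro ⟨i, hi, rfl⟩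
    induction i using Fin.lastCases with
    | last => rw [isCDesB_last] at hi; exact absurd hi (by simp)
    | cast k =>
      refine ⟨k, ?_, ?_⟩
      · rwa [isCDesB_extPerm_castSucc] at hi
      · rw [extPerm_castSucc]; simp [Fin.castSucc]
  · rintro ⟨k, hk, rfl⟩
    refine ⟨k.castSucc, ?_, ?_⟩
    · rwa [isCDesB_extPerm_castSucc]
    · rw [extPerm_castSucc]; simp [Fin.castSucc]

lemma extPerm_injective {n : ℕ} : Function.Injective (extPerm (n := n)) := by
  intro τ τ' h
  ext i
  have h1 : extPerm τ i.castSucc = extPerm τ' i.castSucc := by rw [h]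
  rw [extPerm_castSucc, extPerm_castSucc] at h1
  exact congrArg Fin.val (Fin.castSucc_injective n h1)

lemma fixes_last {n : ℕ} (σ : Equiv.Perm (Fin (n + 1))) (h : (n + 1) ∉ cdesSet (n + 1) σ) :
    σ (Fin.last n) = Fin.last n := by
  by_contra hne
  set i := σ.symm (Fin.last n) with hi
  have hσi : σ i = Fin.last n := Equiv.apply_symm_apply σ _
  have hil : i ≠ Fin.last n := by
    intro hl; exact hne (hl ▸ hσi)
  have hlt : (i : ℕ) + 1 < n + 1 := by
    have := i.isLt
    have : (i : ℕ) ≠ n := fun hc => hil (Fin.ext hc)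
    omega
  have hdes : isCDesB σ i = true := by
    unfold isCDesB
    rw [dif_pos hlt, decide_eq_true_iff]
    have hne2 : σ ⟨(i : ℕ) + 1, hlt⟩ ≠ Fin.last n := by
      intro hc
      have : (⟨(i : ℕ) + 1, hlt⟩ : Fin (n + 1)) = i := by
        rw [← hσi] at hc; exact σ.injective hc
      simp [Fin.ext_iff] at this
    rw [hσi]
    exact lt_of_le_of_ne (Fin.le_last _) hne2
  apply h
  simp only [cdesSet, Finset.mem_image, Finset.mem_filter, Finset.mem_univ, true_and]
  exact ⟨i, hdes, by rw [hσi]; simp [Fin.last]⟩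

lemma extPerm_surj {n : ℕ} (σ : Equiv.Perm (Fin (n + 1))) (hfix : σ (Fin.last n) = Fin.last n) :
    ∃ τ : Equiv.Perm (Fin n), extPerm τ = σ := by
  set e : Option (Fin n) ≃ Option (Fin n) := finSuccEquivLast.permCongr σ with he
  have henone : e none = none := by
    simp [he, Equiv.permCongr_apply, hfix]
  refine ⟨Equiv.removeNone e, ?_⟩
  ext x
  induction x using Fin.lastCases with
  | last => rw [extPerm_last, hfix]
  | cast k =>
    rw [extPerm_castSucc]
    have hsome : ∃ y, e (some k) = some y := by
      rcases hc : e (some k) with _ | y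
      · exfalso
        have := e.injective (hc.trans henone.symm)
        simp at this
      · exact ⟨y, rfl⟩
    have h1 : some (Equiv.removeNone e k) = e (some k) := Equiv.removeNone_some e hsome
    have h2 : e (some k) = finSuccEquivLast (σ k.castSucc) := by
      simp [he, Equiv.permCongr_apply]
    rw [h2] at h1
    have h3 := congrArg finSuccEquivLast.symm h1
    simp only [Equiv.symm_apply_apply, finSuccEquivLast_symm_some] at h3
    simpa using congrArg Fin.val h3

lemma cdes_succ {n : ℕ} (S : Finset ℕ) (hS : (n + 1) ∉ S) : cdes (n + 1) S = cdes n S := by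
  unfold cdes
  symm
  apply Finset.card_bij (fun τ _ => extPerm τ)
  · intro τ hτ
    simp only [Finset.mem_filter, Finset.mem_univ, true_and] at hτ ⊢
    rw [cdesSet_extPerm, hτ]
  · intro τ _ τ' _ h
    exact extPerm_injective h
  · intro σ hσ
    simp only [Finset.mem_filter, Finset.mem_univ, true_and] at hσ
    have hfix : σ (Fin.last n) = Fin.last n :=
      fixes_last σ (by rw [hσ]; exact hS)
    obtain ⟨τ, hτ⟩ := extPerm_surj σ hfix
    refine ⟨τ, ?_, hτ⟩
    simp only [Finset.mem_filter, Finset.mem_univ, true_and]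
    rw [← cdesSet_extPerm τ, hτ, hσ]

theorem stmt_3 (j : ℕ) (S : Finset ℕ) (hne : S.Nonempty)
    (h2 : ∀ s ∈ S, 2 ≤ s) (hj : S.max' hne = j) :
    ∀ n : ℕ, j ≤ n → cdes n S = cdes j S := by
  intro n
  induction n with
  | zero =>
    intro h
    have : j = 0 := Nat.le_zero.mp h
    rw [this]
  | succ n ih =>
    intro h
    rcases Nat.lt_or_ge j (n + 1) with hlt | hge
    · have hle : j ≤ n := Nat.lt_succ_iff.mp hlt
      have hnot : (n + 1) ∉ S := by
        intro hmem
        have := S.le_max' _ hmem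
        rw [hj] at this
        omega
      rw [cdes_succ S hnot, ih hle]
    · have : j = n + 1 := le_antisymm h hge
      rw [this]
end

section
/- For n ≥ 2, the number of permutations of [n] whose circular descent set is exactly {n} equals 2^{n-1} - 1. -/
namespace CDesAux

open Finset

variable {n m : ℕ}

lemma isCDesB_true_iff (σ : Equiv.Perm (Fin n)) (i : Fin n) :
    isCDesB σ i = true ↔ ∃ h : (i : ℕ) + 1 < n, σ ⟨(i : ℕ) + 1, h⟩ < σ i := by
  rw [isCDesB]
  split_ifs with h
  · simp only [decide_eq_true_eq]
    exact ⟨fun hd => ⟨h, hd⟩, fun ⟨h', hd⟩ => hd⟩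
  · simp [h]

lemma chain_lt (σ : Equiv.Perm (Fin n)) :
    ∀ (d a : ℕ) (h : a + d + 1 < n),
      (∀ (t : ℕ) (ht1 : a ≤ t) (ht2 : t + 1 ≤ a + d + 1), σ ⟨t, by omega⟩ < σ ⟨t + 1, by omega⟩) →
      σ ⟨a, by omega⟩ < σ ⟨a + d + 1, h⟩ := by
  intro d
  induction d with
  | zero => intro a h hs; exact hs a le_rfl (by omega)
  | succ d ih =>
    intro a h hs
    have h1 : a + d + 1 < n := by omega
    have hfirst := ih a h1 (fun t ht1 ht2 => hs t ht1 (by omega))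
    have hlast := hs (a + d + 1) (by omega) (by omega)
    exact lt_trans hfirst hlast

lemma chain_lt' (σ : Equiv.Perm (Fin n)) (a b : ℕ) (hb : b < n) (hab : a < b)
    (hs : ∀ (t : ℕ) (ht1 : a ≤ t) (ht2 : t + 1 ≤ b), σ ⟨t, by omega⟩ < σ ⟨t + 1, by omega⟩) :
    σ ⟨a, by omega⟩ < σ ⟨b, hb⟩ := by
  obtain ⟨d, rfl⟩ : ∃ d, b = a + d + 1 := ⟨b - a - 1, by omega⟩
  exact chain_lt σ d a hb hs

/-- The top element of `Fin (m+2)`. -/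
def top (m : ℕ) : Fin (m + 2) := ⟨m + 1, by omega⟩

lemma le_top' (x : Fin (m + 2)) : x ≤ top m := by
  have := x.isLt
  exact show (x : ℕ) ≤ m + 1 by omega

lemma card_compl_add (A : Finset (Fin (m + 2))) : A.card + Aᶜ.card = m + 2 := by
  have h := Finset.card_add_card_compl A
  simpa using h

/-- The permutation built from the set `A` of "second run" values: first the elements of
`Aᶜ` in increasing order, then the elements of `A` in increasing order. -/
noncomputable def bperm (m : ℕ) (A : Finset (Fin (m + 2))) : Fin (m + 2) → Fin (m + 2) :=
  fun i =>
    if h : (i : ℕ) < Aᶜ.card then Aᶜ.orderEmbOfFin rfl ⟨i, h⟩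
    else A.orderEmbOfFin rfl ⟨(i : ℕ) - Aᶜ.card, by
      have h1 := card_compl_add A
      have h2 := i.isLt
      omega⟩

lemma bperm_apply_of_lt (A : Finset (Fin (m + 2))) (i : Fin (m + 2)) (h : (i : ℕ) < Aᶜ.card) :
    bperm m A i = Aᶜ.orderEmbOfFin rfl ⟨(i : ℕ), h⟩ := dif_pos h

lemma bperm_apply_of_ge (A : Finset (Fin (m + 2))) (i : Fin (m + 2)) (h : Aᶜ.card ≤ (i : ℕ)) :
    bperm m A i = A.orderEmbOfFin rfl ⟨(i : ℕ) - Aᶜ.card, by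
      have h1 := card_compl_add A
      have h2 := i.isLt
      omega⟩ := dif_neg (Nat.not_lt.mpr h)

lemma bperm_mem_iff (A : Finset (Fin (m + 2))) (i : Fin (m + 2)) :
    bperm m A i ∈ A ↔ Aᶜ.card ≤ (i : ℕ) := by
  by_cases h : (i : ℕ) < Aᶜ.card
  · rw [bperm_apply_of_lt A i h]
    simp only [show ¬ Aᶜ.card ≤ (i : ℕ) by omega, iff_false]
    have := Aᶜ.orderEmbOfFin_mem rfl ⟨(i : ℕ), h⟩
    rw [Finset.mem_compl] at this
    exact this
  · rw [bperm_apply_of_ge A i (by omega)]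
    simp only [show Aᶜ.card ≤ (i : ℕ) by omega, iff_true]
    exact A.orderEmbOfFin_mem rfl _

lemma bperm_injective (A : Finset (Fin (m + 2))) : Function.Injective (bperm m A) := by
  intro i j hij
  rw [bperm, bperm] at hij
  split_ifs at hij with h1 h2 h2
  · have := (Aᶜ.orderEmbOfFin rfl).injective hij
    simp only [Fin.mk.injEq] at this
    exact Fin.ext this
  · exfalso
    have hm1 := Aᶜ.orderEmbOfFin_mem rfl ⟨(i : ℕ), h1⟩
    rw [hij, Finset.mem_compl] at hm1
    exact hm1 (A.orderEmbOfFin_mem rfl _)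
  · exfalso
    have hm1 := Aᶜ.orderEmbOfFin_mem rfl ⟨(j : ℕ), h2⟩
    rw [← hij, Finset.mem_compl] at hm1
    exact hm1 (A.orderEmbOfFin_mem rfl _)
  · have := (A.orderEmbOfFin rfl).injective hij
    simp only [Fin.mk.injEq] at this
    exact Fin.ext (by omega)

/-- The permutation built from `A`, as an `Equiv.Perm`. -/
noncomputable def bpermE (m : ℕ) (A : Finset (Fin (m + 2))) : Equiv.Perm (Fin (m + 2)) :=
  Equiv.ofBijective (bperm m A) (Finite.injective_iff_bijective.mp (bperm_injective A))

lemma bpermE_apply (A : Finset (Fin (m + 2))) (i : Fin (m + 2)) :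
    bpermE m A i = bperm m A i := rfl

section Props

variable (A : Finset (Fin (m + 2)))

lemma compl_card_pos (htop : top m ∉ A) : 0 < Aᶜ.card :=
  Finset.card_pos.mpr ⟨top m, Finset.mem_compl.mpr htop⟩

lemma compl_card_lt (hA : A.Nonempty) : Aᶜ.card < m + 2 := by
  have h1 := card_compl_add A
  have h2 := Finset.card_pos.mpr hA
  omega

lemma bperm_boundary (htop : top m ∉ A) :
    bperm m A ⟨Aᶜ.card - 1, by have := card_compl_add A; omega⟩ = top m := by
  have hpos := compl_card_pos A htop
  have hmax := Finset.orderEmbOfFin_last (s := Aᶜ) rfl hpos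
  have hv : bperm m A ⟨Aᶜ.card - 1, by have := card_compl_add A; omega⟩ =
      Aᶜ.max' ⟨top m, Finset.mem_compl.mpr htop⟩ := by
    rw [bperm_apply_of_lt A _ (show Aᶜ.card - 1 < Aᶜ.card from Nat.sub_lt hpos Nat.one_pos)]
    exact hmax
  rw [hv]
  exact le_antisymm (Finset.max'_le _ _ _ (fun y _ => le_top' y))
    (Finset.le_max' _ _ (Finset.mem_compl.mpr htop))

lemma bperm_descent_iff (hA : A.Nonempty) (htop : top m ∉ A) (i : Fin (m + 2)) :
    isCDesB (bpermE m A) i = true ↔ (i : ℕ) = Aᶜ.card - 1 := by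
  have hpos := compl_card_pos A htop
  have hlt := compl_card_lt A hA
  rw [isCDesB_true_iff]
  constructor
  · rintro ⟨h, hd⟩
    rw [bpermE_apply, bpermE_apply] at hd
    by_contra hne
    rcases lt_or_ge (i : ℕ) Aᶜ.card with hi | hi
    · -- i < Aᶜ.card, i ≠ Aᶜ.card - 1, so i + 1 < Aᶜ.card : both in first block
      have hi1 : (i : ℕ) + 1 < Aᶜ.card := by omega
      rw [bperm_apply_of_lt A i hi,
        bperm_apply_of_lt A ⟨(i : ℕ) + 1, h⟩ (show (i : ℕ) + 1 < Aᶜ.card from hi1)] at hd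
      have hmono := (Aᶜ.orderEmbOfFin rfl).strictMono
        (show (⟨(i : ℕ), hi⟩ : Fin Aᶜ.card) < ⟨(i : ℕ) + 1, hi1⟩ from
          Fin.mk_lt_mk.mpr (by omega))
      exact absurd hd (not_lt.mpr hmono.le)
    · -- both in second block
      have hcc := card_compl_add A
      have hilt := i.isLt
      rw [bperm_apply_of_ge A i hi,
        bperm_apply_of_ge A ⟨(i : ℕ) + 1, h⟩ (show Aᶜ.card ≤ (i : ℕ) + 1 by omega)] at hd
      have hmono := (A.orderEmbOfFin rfl).strictMono
        (show (⟨(i : ℕ) - Aᶜ.card, by omega⟩ : Fin A.card) <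
            ⟨(i : ℕ) + 1 - Aᶜ.card, by omega⟩ from Fin.mk_lt_mk.mpr (by omega))
      exact absurd hd (not_lt.mpr hmono.le)
  · intro hi
    have h : (i : ℕ) + 1 < m + 2 := by omega
    refine ⟨h, ?_⟩
    rw [bpermE_apply, bpermE_apply]
    have hival : i = (⟨Aᶜ.card - 1, by omega⟩ : Fin (m + 2)) := Fin.ext hi
    have hb : bperm m A i = top m := by rw [hival]; exact bperm_boundary A htop
    rw [hb]
    have h1 : bperm m A ⟨(i : ℕ) + 1, h⟩ ∈ A := by
      rw [bperm_mem_iff]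
      exact show Aᶜ.card ≤ (i : ℕ) + 1 by omega
    have h2 : bperm m A ⟨(i : ℕ) + 1, h⟩ ≠ top m := fun he => htop (he ▸ h1)
    exact lt_of_le_of_ne (le_top' _) h2

lemma cdesSet_bpermE (hA : A.Nonempty) (htop : top m ∉ A) :
    cdesSet (m + 2) (bpermE m A) = {m + 2} := by
  have hpos := compl_card_pos A htop
  have hlt := compl_card_lt A hA
  have hfilter : Finset.univ.filter (fun i => isCDesB (bpermE m A) i = true) =
      {(⟨Aᶜ.card - 1, by omega⟩ : Fin (m + 2))} := by
    ext i
    simp only [Finset.mem_filter, Finset.mem_univ, true_and, Finset.mem_singleton,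
      bperm_descent_iff A hA htop]
    constructor
    · intro h; exact Fin.ext h
    · intro h; subst h; rfl
  rw [cdesSet, hfilter, Finset.image_singleton, bpermE_apply]
  have hb : bperm m A (⟨Aᶜ.card - 1, by omega⟩ : Fin (m + 2)) = top m :=
    bperm_boundary A htop
  rw [hb]
  rfl

end Props

section Forward

/-- The forward map: the set of values appearing after the maximum. -/
def fmap (σ : Equiv.Perm (Fin (m + 2))) : Finset (Fin (m + 2)) :=
  Finset.univ.filter (fun j => (σ.symm (top m) : ℕ) < (σ.symm j : ℕ))

variable (σ : Equiv.Perm (Fin (m + 2)))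

lemma fmap_mem_iff (j : Fin (m + 2)) :
    j ∈ fmap σ ↔ (σ.symm (top m) : ℕ) < (σ.symm j : ℕ) := by
  simp [fmap]

lemma fmap_top_notMem : top m ∉ fmap σ := by
  simp [fmap]

lemma top_pos_lt (hσ : cdesSet (m + 2) σ = {m + 2}) : (σ.symm (top m) : ℕ) < m + 1 := by
  have hmem : m + 2 ∈ cdesSet (m + 2) σ := by rw [hσ]; exact Finset.mem_singleton_self _
  rw [cdesSet, Finset.mem_image] at hmem
  obtain ⟨i, hi, hval⟩ := hmem
  rw [Finset.mem_filter] at hi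
  obtain ⟨h, hd⟩ := (isCDesB_true_iff σ i).mp hi.2
  have hσi : σ i = top m := by
    apply Fin.ext
    exact show (σ i : ℕ) = m + 1 by omega
  have : σ.symm (top m) = i := by rw [← hσi, Equiv.symm_apply_apply]
  rw [this]
  omega

lemma no_other_descent (hσ : cdesSet (m + 2) σ = {m + 2}) (i : ℕ) (h : i + 1 < m + 2)
    (hne : i ≠ (σ.symm (top m) : ℕ)) : σ ⟨i, by omega⟩ < σ ⟨i + 1, h⟩ := by
  rcases lt_or_ge (σ ⟨i, by omega⟩) (σ ⟨i + 1, h⟩) with hlt | hle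
  · exact hlt
  · exfalso
    have hne2 : σ ⟨i + 1, h⟩ ≠ σ ⟨i, by omega⟩ := by
      intro he
      have := σ.injective he
      simp only [Fin.mk.injEq] at this
      omega
    have hd : isCDesB σ ⟨i, by omega⟩ = true := by
      rw [isCDesB_true_iff]
      exact ⟨h, lt_of_le_of_ne hle hne2⟩
    have hmem : (σ ⟨i, by omega⟩ : ℕ) + 1 ∈ cdesSet (m + 2) σ := by
      rw [cdesSet, Finset.mem_image]
      exact ⟨⟨i, by omega⟩, Finset.mem_filter.mpr ⟨Finset.mem_univ _, hd⟩, rfl⟩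
    rw [hσ, Finset.mem_singleton] at hmem
    have hσi : σ ⟨i, by omega⟩ = top m := by
      apply Fin.ext
      exact show (σ ⟨i, by omega⟩ : ℕ) = m + 1 by omega
    apply hne
    rw [← hσi, Equiv.symm_apply_apply]

lemma fmap_nonempty (hσ : cdesSet (m + 2) σ = {m + 2}) : (fmap σ).Nonempty := by
  have hM := top_pos_lt σ hσ
  refine ⟨σ ⟨(σ.symm (top m) : ℕ) + 1, by omega⟩, ?_⟩
  rw [fmap_mem_iff, Equiv.symm_apply_apply]
  exact show (σ.symm (top m) : ℕ) < (σ.symm (top m) : ℕ) + 1 from Nat.lt_succ_self _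

lemma fmap_compl_card (hσ : cdesSet (m + 2) σ = {m + 2}) :
    (fmap σ)ᶜ.card = (σ.symm (top m) : ℕ) + 1 := by
  set M := (σ.symm (top m) : ℕ) with hM
  have hMlt := top_pos_lt σ hσ
  have himg : (fmap σ)ᶜ =
      Finset.image σ (Finset.univ.filter (fun i : Fin (m + 2) => (i : ℕ) ≤ M)) := by
    ext j
    simp only [Finset.mem_compl, fmap_mem_iff, Finset.mem_image, Finset.mem_filter,
      Finset.mem_univ, true_and, not_lt]
    constructor
    · intro hle
      exact ⟨σ.symm j, hle, by simp⟩
    · rintro ⟨i, hi, rfl⟩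
      rw [Equiv.symm_apply_apply]
      exact hi
  rw [himg, Finset.card_image_of_injective _ σ.injective]
  have hIic : Finset.univ.filter (fun i : Fin (m + 2) => (i : ℕ) ≤ M) =
      Finset.Iic (⟨M, by omega⟩ : Fin (m + 2)) := by
    ext i
    simp [Fin.le_def]
  rw [hIic, Fin.card_Iic]

lemma bpermE_fmap (hσ : cdesSet (m + 2) σ = {m + 2}) : bpermE m (fmap σ) = σ := by
  set M := (σ.symm (top m) : ℕ) with hM
  have hMlt := top_pos_lt σ hσ
  have hk : (fmap σ)ᶜ.card = M + 1 := fmap_compl_card σ hσ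
  have hcards := card_compl_add (fmap σ)
  -- the first run of σ is the increasing enumeration of (fmap σ)ᶜ
  have hf1 : (fun j : Fin ((fmap σ)ᶜ.card) => σ ⟨(j : ℕ), by have := j.isLt; omega⟩) =
      ⇑((fmap σ)ᶜ.orderEmbOfFin rfl) := by
    apply Finset.orderEmbOfFin_unique
    · intro j
      rw [Finset.mem_compl, fmap_mem_iff, Equiv.symm_apply_apply]
      exact Nat.not_lt.mpr (show (j : ℕ) ≤ M by have := j.isLt; omega)
    · intro a b hab
      rw [Fin.lt_def] at hab
      refine chain_lt' σ (a : ℕ) (b : ℕ) (by have := b.isLt; omega) hab ?_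
      intro t ht1 ht2
      refine no_other_descent σ hσ t (by have := b.isLt; omega) ?_
      have := b.isLt
      omega
  -- the second run of σ is the increasing enumeration of fmap σ
  have hf2 : (fun j : Fin ((fmap σ).card) => σ ⟨M + 1 + (j : ℕ), by have := j.isLt; omega⟩) =
      ⇑((fmap σ).orderEmbOfFin rfl) := by
    apply Finset.orderEmbOfFin_unique
    · intro j
      rw [fmap_mem_iff, Equiv.symm_apply_apply]
      exact show M < M + 1 + (j : ℕ) by omega
    · intro a b hab
      rw [Fin.lt_def] at hab
      refine chain_lt' σ (M + 1 + (a : ℕ)) (M + 1 + (b : ℕ)) (by have := b.isLt; omega)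
        (by omega) ?_
      intro t ht1 ht2
      exact no_other_descent σ hσ t (by have := b.isLt; omega) (by omega)
  ext i
  rw [bpermE_apply]
  by_cases h : (i : ℕ) < (fmap σ)ᶜ.card
  · rw [bperm_apply_of_lt _ i h]
    have hc := congrFun hf1 ⟨(i : ℕ), h⟩
    rw [← hc]
  · have hile := i.isLt
    rw [bperm_apply_of_ge _ i (by omega)]
    have hc := congrFun hf2 ⟨(i : ℕ) - (fmap σ)ᶜ.card, by omega⟩
    rw [← hc]
    exact congrArg (fun x : Fin (m + 2) => (σ x : ℕ))
      (Fin.ext (show M + 1 + ((i : ℕ) - (fmap σ)ᶜ.card) = (i : ℕ) by omega))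

lemma fmap_bpermE (A : Finset (Fin (m + 2))) (hA : A.Nonempty) (htop : top m ∉ A) :
    fmap (bpermE m A) = A := by
  have hpos := compl_card_pos A htop
  have hlt := compl_card_lt A hA
  have hsymm : (bpermE m A).symm (top m) = ⟨Aᶜ.card - 1, by omega⟩ := by
    rw [Equiv.symm_apply_eq]
    exact (bperm_boundary A htop).symm
  ext j
  rw [fmap_mem_iff, hsymm]
  have hj : bperm m A ((bpermE m A).symm j) = j := Equiv.apply_symm_apply (bpermE m A) j
  conv_rhs => rw [← hj]
  rw [bperm_mem_iff]
  show Aᶜ.card - 1 < (((bpermE m A).symm j : ℕ)) ↔ Aᶜ.card ≤ (((bpermE m A).symm j : ℕ))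
  omega

end Forward

end CDesAux

theorem stmt_5 (n : ℕ) (hn : 2 ≤ n) : cdes n {n} = 2 ^ (n - 1) - 1 := by
  obtain ⟨m, rfl⟩ : ∃ m, n = m + 2 := ⟨n - 2, by omega⟩
  open CDesAux in
  have hcard : cdes (m + 2) {m + 2} =
      ((((Finset.univ.erase (top m)).powerset)).erase ∅).card := by
    rw [cdes]
    refine Finset.card_bij' (fun σ _ => fmap σ) (fun A _ => bpermE m A) ?_ ?_ ?_ ?_
    · intro σ hσ
      rw [Finset.mem_filter] at hσ
      have hσ := hσ.2
      rw [Finset.mem_erase]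
      constructor
      · exact Finset.nonempty_iff_ne_empty.mp (fmap_nonempty σ hσ)
      · rw [Finset.mem_powerset]
        intro j hj
        rw [Finset.mem_erase]
        refine ⟨?_, Finset.mem_univ _⟩
        intro he
        rw [he] at hj
        exact fmap_top_notMem σ hj
    · intro A hA
      rw [Finset.mem_erase, Finset.mem_powerset] at hA
      have hne : A.Nonempty := Finset.nonempty_iff_ne_empty.mpr hA.1
      have htop : top m ∉ A := fun h => (Finset.mem_erase.mp (hA.2 h)).1 rfl
      rw [Finset.mem_filter]
      exact ⟨Finset.mem_univ _, cdesSet_bpermE A hne htop⟩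
    · intro σ hσ
      rw [Finset.mem_filter] at hσ
      exact bpermE_fmap σ hσ.2
    · intro A hA
      rw [Finset.mem_erase, Finset.mem_powerset] at hA
      have hne : A.Nonempty := Finset.nonempty_iff_ne_empty.mpr hA.1
      have htop : top m ∉ A := fun h => (Finset.mem_erase.mp (hA.2 h)).1 rfl
      exact fmap_bpermE A hne htop
  rw [hcard]
  rw [Finset.card_erase_of_mem (Finset.empty_mem_powerset _), Finset.card_powerset,
    Finset.card_erase_of_mem (Finset.mem_univ _)]
  simp
end

section
/- For any permutation σ of [n] with circular descent set S having maximum element j, one has σ(k) = k for all k with j+1 ≤ k ≤ n. -/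
lemma mem_cdesSet {n : ℕ} (σ : Equiv.Perm (Fin n)) (i : Fin n) (h : (i : ℕ) + 1 < n)
    (hd : σ ⟨(i : ℕ) + 1, h⟩ < σ i) : (σ i : ℕ) + 1 ∈ cdesSet n σ := by
  apply Finset.mem_image.2
  refine ⟨i, Finset.mem_filter.2 ⟨Finset.mem_univ _, ?_⟩, rfl⟩
  simp [isCDesB, h, hd]

theorem stmt_6 (n : ℕ) (σ : Equiv.Perm (Fin n)) (hne : (cdesSet n σ).Nonempty)
    (j : ℕ) (hj : (cdesSet n σ).max' hne = j) :
    ∀ k : Fin n, j + 1 ≤ (k : ℕ) + 1 → σ k = k := by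
  have hmax : ∀ v ∈ cdesSet n σ, v ≤ j := fun v hv => hj ▸ Finset.le_max' _ v hv
  have key : ∀ d : ℕ, ∀ k : Fin n, j ≤ (k : ℕ) → n - (k : ℕ) = d → σ k = k := by
    intro d
    induction d using Nat.strong_induction_on with
    | _ d ih =>
      intro k hk hd
      set i : Fin n := σ.symm k with hi
      have hik : σ i = k := σ.apply_symm_apply k
      rcases lt_trichotomy (i : ℕ) (k : ℕ) with hlt | heq | hgt
      · -- i < k
        have hi1 : (i : ℕ) + 1 < n := lt_of_le_of_lt hlt k.isLt
        rcases lt_trichotomy (σ ⟨(i : ℕ) + 1, hi1⟩) (σ i) with h1 | h2 | h3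
        · exfalso
          have := hmax _ (mem_cdesSet σ i hi1 h1)
          rw [hik] at this
          omega
        · exfalso
          have : (⟨(i : ℕ) + 1, hi1⟩ : Fin n) = i := σ.injective h2
          have := congrArg (Fin.val) this
          simp at this
        · -- σ (i+1) > σ i = k
          exfalso
          set m : Fin n := σ ⟨(i : ℕ) + 1, hi1⟩ with hm
          have hmk : (k : ℕ) < (m : ℕ) := by rw [← hik]; exact h3
          have hfix : σ m = m := by
            refine ih (n - (m : ℕ)) (by omega) m (by omega) rfl
          have : (⟨(i : ℕ) + 1, hi1⟩ : Fin n) = m := σ.injective (hm ▸ hfix.symm)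
          have := congrArg (Fin.val) this
          simp at this
          omega
      · -- i = k
        have : i = k := Fin.ext heq
        rw [← this, hik, this]
      · -- i > k : contradiction via IH on i
        exfalso
        have hfix : σ i = i := ih (n - (i : ℕ)) (by omega) i (by omega) rfl
        rw [hik] at hfix
        have := congrArg (Fin.val) hfix
        omega
  intro k hk
  exact key (n - (k : ℕ)) k (by omega) rfl
end

section
/- For n ≥ 3 and S ⊆ [2,n-1], cdes_n(S ∪ {n}) = (n-1-|S|)·cdes_{n-1}(S) + Σ_{i ∈ [2,n-1]\S} cdes_{n-1}(S ∪ {i}). -/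
open Equiv Finset


/-- Insert the largest value `m` (0-based) at position `k` into a permutation of `Fin m`. -/
def ins {m : ℕ} (k : Fin (m+1)) (σ : Perm (Fin m)) : Perm (Fin (m+1)) :=
  (finSuccEquiv' k).trans ((σ.optionCongr).trans finSuccEquivLast.symm)

lemma ins_apply_self {m : ℕ} (k : Fin (m+1)) (σ : Perm (Fin m)) :
    ins k σ k = Fin.last m := by
  simp [ins]

lemma ins_apply_lt {m : ℕ} (k : Fin (m+1)) (σ : Perm (Fin m)) (i : ℕ) (hik : i < k.val) :
    ins k σ ⟨i, by omega⟩ = (σ ⟨i, by omega⟩).castSucc := by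
  have him : i < m := by have := k.isLt; omega
  have h1 : (⟨i, by omega⟩ : Fin (m+1)) = (⟨i, him⟩ : Fin m).castSucc := rfl
  have h2 : (⟨i, him⟩ : Fin m).castSucc < k := by
    simp [Fin.lt_def, hik]
  simp only [ins, Equiv.trans_apply]
  rw [h1, finSuccEquiv'_below h2]
  simp

lemma ins_apply_gt {m : ℕ} (k : Fin (m+1)) (σ : Perm (Fin m)) (i : ℕ)
    (hik : k.val < i) (him : i < m + 1) :
    ins k σ ⟨i, him⟩ = (σ ⟨i - 1, by omega⟩).castSucc := by
  have h1 : (⟨i, him⟩ : Fin (m+1)) = (⟨i - 1, by omega⟩ : Fin m).succ := by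
    simp [Fin.ext_iff, Fin.succ]; omega
  have h2 : k ≤ (⟨i - 1, by omega⟩ : Fin m).castSucc := by
    simp [Fin.le_def]; omega
  simp only [ins, Equiv.trans_apply]
  rw [h1, finSuccEquiv'_above h2]
  simp

lemma ins_succAbove {m : ℕ} (k : Fin (m+1)) (σ : Perm (Fin m)) (j : Fin m) :
    ins k σ (k.succAbove j) = (σ j).castSucc := by
  simp [ins, finSuccEquiv'_succAbove]

lemma ins_bijective {m : ℕ} :
    Function.Bijective (fun p : Fin (m+1) × Perm (Fin m) => ins p.1 p.2) := by
  rw [Fintype.bijective_iff_injective_and_card]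
  constructor
  · rintro ⟨k, σ⟩ ⟨k', σ'⟩ h
    simp only at h
    have hk : k = k' := by
      by_contra hkk
      have hne : k.val ≠ k'.val := fun he => hkk (Fin.ext he)
      have h1 : ins k σ k = Fin.last m := ins_apply_self k σ
      have h2 : ins k' σ' k ≠ Fin.last m := by
        have hkk' : (k : Fin (m+1)) = ⟨k.val, k.isLt⟩ := rfl
        rcases Nat.lt_or_ge k.val k'.val with hlt | hge
        · rw [hkk', ins_apply_lt k' σ' k.val hlt]
          exact (Fin.castSucc_lt_last _).ne
        · have hlt : k'.val < k.val := by omega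
          rw [hkk', ins_apply_gt k' σ' k.val hlt k.isLt]
          exact (Fin.castSucc_lt_last _).ne
      exact h2 (h ▸ h1)
    subst hk
    have hσ : σ = σ' := by
      ext j
      have hval : ins k σ (k.succAbove j) = ins k σ' (k.succAbove j) := by rw [h]
      rw [ins_succAbove, ins_succAbove] at hval
      exact congrArg Fin.val (Fin.castSucc_injective m hval)
    simp [hσ]
  · simp [Fintype.card_perm, Nat.factorial_succ]


/-- `v` is the top value (1-based) of a descent of `σ` at 0-based position `j`. -/
def dtop {m : ℕ} (σ : Perm (Fin m)) (j v : ℕ) : Prop :=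
  ∃ h : j + 1 < m, σ ⟨j+1, h⟩ < σ ⟨j, by omega⟩ ∧ (σ ⟨j, by omega⟩ : ℕ) + 1 = v

lemma mem_cdesSet_iff {N : ℕ} (σ : Perm (Fin N)) (v : ℕ) :
    v ∈ cdesSet N σ ↔ ∃ j, ∃ h : j + 1 < N,
      σ ⟨j+1, h⟩ < σ ⟨j, by omega⟩ ∧ (σ ⟨j, by omega⟩ : ℕ) + 1 = v := by
  unfold cdesSet isCDesB
  simp only [mem_image, mem_filter, mem_univ, true_and]
  constructor
  · rintro ⟨i, hi, rfl⟩
    by_cases h : (i : ℕ) + 1 < N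
    · simp only [dif_pos h, decide_eq_true_eq] at hi
      exact ⟨i.val, h, by simpa using hi, by simp⟩
    · simp [dif_neg h] at hi
  · rintro ⟨j, h, hlt, hv⟩
    refine ⟨⟨j, by omega⟩, ?_, hv⟩
    simp only [dif_pos h, decide_eq_true_eq]
    exact hlt

lemma mem_cdesSet_iff_dtop {m : ℕ} (σ : Perm (Fin m)) (v : ℕ) :
    v ∈ cdesSet m σ ↔ ∃ j, dtop σ j v := mem_cdesSet_iff σ v

lemma dtop_left_unique {m : ℕ} {σ : Perm (Fin m)} {j j' v : ℕ}
    (h : dtop σ j v) (h' : dtop σ j' v) : j = j' := by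
  obtain ⟨h1, _, h3⟩ := h
  obtain ⟨h1', _, h3'⟩ := h'
  have : σ ⟨j, by omega⟩ = σ ⟨j', by omega⟩ := Fin.ext (by omega)
  have := σ.injective this
  exact congrArg Fin.val this

lemma dtop_bounds {m : ℕ} {σ : Perm (Fin m)} {j v : ℕ} (h : dtop σ j v) :
    2 ≤ v ∧ v ≤ m := by
  obtain ⟨h1, h2, h3⟩ := h
  have hlt := Fin.lt_def.mp h2
  have := (σ ⟨j, by omega⟩).isLt
  omega

lemma last_mem_cdesSet_ins_iff {m : ℕ} (k : Fin (m+1)) (σ : Perm (Fin m)) :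
    (m + 1) ∈ cdesSet (m+1) (ins k σ) ↔ k.val < m := by
  rw [mem_cdesSet_iff]
  constructor
  · rintro ⟨j, h, hlt, hv⟩
    have hjk : j = k.val := by
      by_contra hne
      rcases Nat.lt_or_ge j k.val with hc | hc
      · rw [ins_apply_lt k σ j hc] at hv
        have := (σ ⟨j, by omega⟩).isLt
        simp [Fin.coe_castSucc] at hv
        omega
      · have hc' : k.val < j := by omega
        rw [ins_apply_gt k σ j hc' (by omega)] at hv
        have := (σ ⟨j - 1, by omega⟩).isLt
        simp [Fin.coe_castSucc] at hv
        omega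
    omega
  · intro hk
    refine ⟨k.val, by omega, ?_, ?_⟩
    · rw [ins_apply_gt k σ (k.val + 1) (by omega) (by omega)]
      have : (⟨k.val, by omega⟩ : Fin (m+1)) = k := Fin.ext rfl
      rw [this, ins_apply_self]
      exact Fin.castSucc_lt_last _
    · have : (⟨k.val, by omega⟩ : Fin (m+1)) = k := Fin.ext rfl
      rw [this, ins_apply_self]
      simp [Fin.last]

lemma mem_cdesSet_ins_iff {m : ℕ} (k : Fin (m+1)) (σ : Perm (Fin m)) {v : ℕ}
    (hv : v ≠ m + 1) :
    v ∈ cdesSet (m+1) (ins k σ) ↔ ∃ j, dtop σ j v ∧ j + 1 ≠ k.val := by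
  rw [mem_cdesSet_iff]
  constructor
  · rintro ⟨i, h, hlt, htop⟩
    have hik : i ≠ k.val := by
      intro he
      have : (⟨i, by omega⟩ : Fin (m+1)) = k := Fin.ext he
      rw [this, ins_apply_self] at htop
      simp [Fin.last] at htop
      omega
    rcases Nat.lt_or_ge i k.val with hc | hc
    · -- i < k
      have hik1 : i + 1 ≠ k.val := by
        intro he
        have h2 : (⟨i+1, h⟩ : Fin (m+1)) = k := Fin.ext he
        rw [h2, ins_apply_self] at hlt
        exact absurd hlt (not_lt.mpr (Fin.le_last _))
      have hc1 : i + 1 < k.val := by omega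
      rw [ins_apply_lt k σ i hc] at hlt htop
      rw [ins_apply_lt k σ (i+1) hc1] at hlt
      refine ⟨i, ⟨by have := k.isLt; omega, ?_, ?_⟩, by omega⟩
      · exact Fin.castSucc_lt_castSucc_iff.mp (by convert hlt using 2 <;> omega)
      · simpa using htop
    · have hc' : k.val < i := by omega
      obtain ⟨j, rfl⟩ : ∃ j, i = j + 1 := ⟨i - 1, by omega⟩
      rw [ins_apply_gt k σ (j+1) hc' (by omega)] at hlt htop
      rw [ins_apply_gt k σ (j+1+1) (by omega) h] at hlt
      refine ⟨j, ⟨by omega, ?_, ?_⟩, by omega⟩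
      · exact Fin.castSucc_lt_castSucc_iff.mp (by convert hlt using 3 <;> simp [Fin.ext_iff] <;> omega)
      · simpa using htop
  · rintro ⟨j, ⟨hj, hlt, htop⟩, hne⟩
    rcases Nat.lt_or_ge (j+1) k.val with hc | hc
    · refine ⟨j, by omega, ?_, ?_⟩
      · rw [ins_apply_lt k σ j (by omega), ins_apply_lt k σ (j+1) hc]
        exact Fin.castSucc_lt_castSucc_iff.mpr (by convert hlt using 2 <;> omega)
      · rw [ins_apply_lt k σ j (by omega)]
        simpa using htop
    · have hc' : k.val < j + 1 := by omega
      refine ⟨j + 1, by omega, ?_, ?_⟩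
      · rw [ins_apply_gt k σ (j+1) hc' (by omega), ins_apply_gt k σ (j+1+1) (by omega) (by omega)]
        exact Fin.castSucc_lt_castSucc_iff.mpr (by convert hlt using 3 <;> omega)
      · rw [ins_apply_gt k σ (j+1) hc' (by omega)]
        simpa using htop

lemma dtop_right_unique {m : ℕ} {σ : Perm (Fin m)} {j v v' : ℕ}
    (h : dtop σ j v) (h' : dtop σ j v') : v = v' := by
  obtain ⟨h1, _, h3⟩ := h
  obtain ⟨h1', _, h3'⟩ := h'
  rw [← h3, ← h3']

lemma isCDesB_iff {m : ℕ} (σ : Perm (Fin m)) (i : Fin m) :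
    isCDesB σ i = true ↔ ∃ h : (i : ℕ) + 1 < m, σ ⟨(i : ℕ) + 1, h⟩ < σ i := by
  unfold isCDesB
  by_cases h : (i : ℕ) + 1 < m
  · simp [h]
  · simp [h]

lemma cdesSet_ins_eq_iff {m : ℕ} {S : Finset ℕ} (hmS : (m+1) ∉ S)
    (k : Fin (m+1)) (σ : Perm (Fin m)) :
    cdesSet (m+1) (ins k σ) = insert (m+1) S ↔
      (k.val < m ∧ ∀ v, ((∃ j, dtop σ j v ∧ j + 1 ≠ k.val) ↔ v ∈ S)) := by
  rw [Finset.ext_iff]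
  constructor
  · intro h
    have hk : k.val < m := (last_mem_cdesSet_ins_iff k σ).mp
      ((h (m+1)).mpr (Finset.mem_insert_self _ _))
    refine ⟨hk, fun v => ?_⟩
    by_cases hv : v = m + 1
    · subst hv
      constructor
      · rintro ⟨j, hd, _⟩
        exact absurd (dtop_bounds hd).2 (by omega)
      · intro hvS; exact absurd hvS hmS
    · rw [← mem_cdesSet_ins_iff k σ hv, h v, Finset.mem_insert]
      simp [hv]
  · rintro ⟨hk, hQ⟩ v
    by_cases hv : v = m + 1
    · subst hv
      simp [last_mem_cdesSet_ins_iff, hk]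
    · rw [mem_cdesSet_ins_iff k σ hv, hQ v, Finset.mem_insert]
      simp [hv]

lemma count_k {m : ℕ} {S : Finset ℕ} (hS : S ⊆ Finset.Icc 2 m) (σ : Perm (Fin m)) :
    (univ.filter fun k : Fin (m+1) => cdesSet (m+1) (ins k σ) = insert (m+1) S).card
      = (if cdesSet m σ = S then m - S.card else 0)
        + ∑ i ∈ Finset.Icc 2 m \ S, (if cdesSet m σ = insert i S then 1 else 0) := by
  have hmS : (m+1) ∉ S := fun h => by have := (Finset.mem_Icc.mp (hS h)).2; omega
  by_cases hA : cdesSet m σ = S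
  · -- Case A : the circular descent set of σ is exactly S
    rw [if_pos hA]
    have hsum0 : ∑ i ∈ Finset.Icc 2 m \ S, (if cdesSet m σ = insert i S then 1 else 0) = 0 := by
      refine Finset.sum_eq_zero fun i hi => ?_
      rw [if_neg]
      intro hcd
      have : i ∈ S := by
        have : i ∈ cdesSet m σ := hcd ▸ Finset.mem_insert_self i S
        rwa [hA] at this
      exact (Finset.mem_sdiff.mp hi).2 this
    set DescF : Finset (Fin m) := univ.filter (fun i => isCDesB σ i = true) with hDescF
    have hinj : Function.Injective (fun i : Fin m => (σ i : ℕ) + 1) := by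
      intro a b hab
      simp only at hab
      exact σ.injective (Fin.ext (by omega))
    have hcardD : DescF.card = S.card := by
      rw [← hA]
      unfold cdesSet
      rw [Finset.card_image_of_injective _ hinj]
    set B : Finset (Fin (m+1)) := DescF.image Fin.succ with hB
    have hcardB : B.card = S.card := by
      rw [hB, Finset.card_image_of_injective _ (Fin.succ_injective m), hcardD]
    set L : Finset (Fin (m+1)) := univ.filter (fun k => k.val < m) with hL
    have hcardL : L.card = m := by
      have : L = univ.erase (Fin.last m) := by
        ext k
        simp only [hL, Finset.mem_filter, Finset.mem_univ, true_and, Finset.mem_erase,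
          and_true]
        constructor
        · intro h he
          rw [he] at h; simp [Fin.last] at h
        · intro h
          have := k.isLt
          rcases Nat.lt_or_ge k.val m with h' | h'
          · exact h'
          · exact absurd (Fin.ext (by omega : k.val = m)) h
      rw [this, Finset.card_erase_of_mem (Finset.mem_univ _), Finset.card_univ,
        Fintype.card_fin]
      omega
    have hBL : B ⊆ L := by
      intro k hk
      rw [hB, Finset.mem_image] at hk
      obtain ⟨i, hiD, rfl⟩ := hk
      rw [hDescF, Finset.mem_filter] at hiD
      obtain ⟨h1, -⟩ := (isCDesB_iff σ i).mp hiD.2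
      simp only [hL, Finset.mem_filter, Finset.mem_univ, true_and, Fin.val_succ]
      exact h1
    have hFeq : (univ.filter fun k : Fin (m+1) =>
        cdesSet (m+1) (ins k σ) = insert (m+1) S) = L \ B := by
      ext k
      rw [Finset.mem_filter, Finset.mem_sdiff]
      rw [cdesSet_ins_eq_iff hmS k σ]
      simp only [Finset.mem_univ, true_and, hL, Finset.mem_filter]
      constructor
      · rintro ⟨hk, hQ⟩
        refine ⟨hk, ?_⟩
        intro hkB
        rw [hB, Finset.mem_image] at hkB
        obtain ⟨i, hiD, hik⟩ := hkB
        rw [hDescF, Finset.mem_filter] at hiD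
        obtain ⟨h1, h2⟩ := (isCDesB_iff σ i).mp hiD.2
        have hd : dtop σ (i : ℕ) ((σ i : ℕ) + 1) := ⟨h1, by simpa using h2, by simp⟩
        have hv : ((σ i : ℕ) + 1) ∈ S := by
          rw [← hA, mem_cdesSet_iff_dtop]; exact ⟨(i : ℕ), hd⟩
        obtain ⟨j, hdj, hne⟩ := (hQ _).mpr hv
        have : j = (i : ℕ) := dtop_left_unique hdj hd
        apply hne
        rw [this]
        have := congrArg Fin.val hik
        simpa using this
      · rintro ⟨hk, hkB⟩
        refine ⟨hk, fun v => ⟨?_, ?_⟩⟩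
        · rintro ⟨j, hd, -⟩
          rw [← hA, mem_cdesSet_iff_dtop]; exact ⟨j, hd⟩
        · intro hv
          rw [← hA, mem_cdesSet_iff_dtop] at hv
          obtain ⟨j, hd⟩ := hv
          refine ⟨j, hd, ?_⟩
          intro he
          apply hkB
          rw [hB, Finset.mem_image]
          obtain ⟨h1, h2, h3⟩ := hd
          refine ⟨⟨j, by omega⟩, ?_, Fin.ext (by simpa using he)⟩
          rw [hDescF, Finset.mem_filter]
          exact ⟨Finset.mem_univ _, (isCDesB_iff σ _).mpr ⟨h1, h2⟩⟩
    rw [hFeq, Finset.card_sdiff_of_subset hBL, hcardL, hcardB, hsum0]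
    omega
  · rw [if_neg hA, Nat.zero_add]
    by_cases hB1 : ∃ j₀ v₀, dtop σ j₀ v₀ ∧ v₀ ∉ S ∧ cdesSet m σ = insert v₀ S
    · obtain ⟨j₀, v₀, hd₀, hv₀S, hcd⟩ := hB1
      have hj₀ : j₀ + 1 < m := hd₀.choose
      have hFeq : (univ.filter fun k : Fin (m+1) =>
          cdesSet (m+1) (ins k σ) = insert (m+1) S) = {(⟨j₀+1, by omega⟩ : Fin (m+1))} := by
        ext k
        rw [Finset.mem_filter, Finset.mem_singleton, cdesSet_ins_eq_iff hmS k σ]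
        simp only [Finset.mem_univ, true_and]
        constructor
        · rintro ⟨hk, hQ⟩
          refine Fin.ext ?_
          show k.val = j₀ + 1
          by_contra hne
          have hv₀ : v₀ ∈ S := (hQ v₀).mp ⟨j₀, hd₀, fun he => hne he.symm⟩
          exact hv₀S hv₀
        · rintro rfl
          have hkv : ((⟨j₀+1, by omega⟩ : Fin (m+1)) : ℕ) = j₀ + 1 := rfl
          rw [hkv]
          refine ⟨by omega, fun v => ⟨?_, ?_⟩⟩
          · rintro ⟨j, hd, hne⟩
            have hjj : j ≠ j₀ := fun he => hne (by omega)
            have hv : v ∈ cdesSet m σ := (mem_cdesSet_iff_dtop _ _).mpr ⟨j, hd⟩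
            rw [hcd, Finset.mem_insert] at hv
            rcases hv with rfl | hv
            · exact absurd (dtop_left_unique hd hd₀) hjj
            · exact hv
          · intro hv
            have : v ∈ cdesSet m σ := by rw [hcd]; exact Finset.mem_insert_of_mem hv
            obtain ⟨j, hd⟩ := (mem_cdesSet_iff_dtop _ _).mp this
            refine ⟨j, hd, ?_⟩
            intro he
            have hjj : j = j₀ := by omega
            subst hjj
            exact hv₀S (dtop_right_unique hd₀ hd ▸ hv)
      rw [hFeq, Finset.card_singleton]
      have hv₀Icc : v₀ ∈ Finset.Icc 2 m \ S := by
        rw [Finset.mem_sdiff, Finset.mem_Icc]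
        exact ⟨⟨(dtop_bounds hd₀).1, (dtop_bounds hd₀).2⟩, hv₀S⟩
      rw [Finset.sum_eq_single_of_mem v₀ hv₀Icc]
      · rw [if_pos hcd]
      · intro b hb hbne
        rw [if_neg]
        intro hcb
        have : b ∈ cdesSet m σ := hcb ▸ Finset.mem_insert_self b S
        rw [hcd, Finset.mem_insert] at this
        rcases this with rfl | hbS
        · exact hbne rfl
        · exact (Finset.mem_sdiff.mp hb).2 hbS
    · have hFeq : (univ.filter fun k : Fin (m+1) =>
          cdesSet (m+1) (ins k σ) = insert (m+1) S) = ∅ := by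
        rw [Finset.filter_eq_empty_iff]
        intro k _
        rw [cdesSet_ins_eq_iff hmS k σ]
        rintro ⟨hk, hQ⟩
        by_cases hd : ∃ j v, dtop σ j v ∧ j + 1 = k.val
        · obtain ⟨j₀, v₀, hd₀, hje⟩ := hd
          apply hB1
          refine ⟨j₀, v₀, hd₀, ?_, ?_⟩
          · intro hv₀S
            obtain ⟨j, hdj, hne⟩ := (hQ v₀).mpr hv₀S
            exact hne ((dtop_left_unique hdj hd₀) ▸ hje)
          · ext v
            rw [mem_cdesSet_iff_dtop, Finset.mem_insert]
            constructor
            · rintro ⟨j, hdj⟩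
              by_cases hjj : j = j₀
              · subst hjj
                exact Or.inl (dtop_right_unique hdj hd₀)
              · exact Or.inr ((hQ v).mp ⟨j, hdj, by omega⟩)
            · rintro (rfl | hvS)
              · exact ⟨j₀, hd₀⟩
              · obtain ⟨j, hdj, -⟩ := (hQ v).mpr hvS
                exact ⟨j, hdj⟩
        · apply hA
          ext v
          rw [mem_cdesSet_iff_dtop]
          constructor
          · rintro ⟨j, hdj⟩
            exact (hQ v).mp ⟨j, hdj, fun he => hd ⟨j, v, hdj, he⟩⟩
          · intro hvS
            obtain ⟨j, hdj, -⟩ := (hQ v).mpr hvS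
            exact ⟨j, hdj⟩
      rw [hFeq, Finset.card_empty]
      symm
      refine Finset.sum_eq_zero fun i hi => ?_
      rw [if_neg]
      intro hcd
      apply hB1
      have : i ∈ cdesSet m σ := hcd ▸ Finset.mem_insert_self i S
      obtain ⟨j, hdj⟩ := (mem_cdesSet_iff_dtop _ _).mp this
      exact ⟨j, i, hdj, (Finset.mem_sdiff.mp hi).2, hcd⟩


theorem stmt_7 (n : ℕ) (hn : 3 ≤ n) (S : Finset ℕ) (hS : S ⊆ Finset.Icc 2 (n - 1)) :
    cdes n (insert n S) =
      (n - 1 - S.card) * cdes (n - 1) S +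
      ∑ i ∈ (Finset.Icc 2 (n - 1)) \ S, cdes (n - 1) (insert i S) := by
  obtain ⟨m, rfl⟩ : ∃ m, n = m + 1 := ⟨n - 1, by omega⟩
  simp only [Nat.add_sub_cancel] at hS ⊢
  have hstep1 : cdes (m+1) (insert (m+1) S) =
      ((univ : Finset (Fin (m+1) × Perm (Fin m))).filter
        (fun p => cdesSet (m+1) (ins p.1 p.2) = insert (m+1) S)).card := by
    unfold cdes
    refine (Finset.card_bij (fun p _ => ins p.1 p.2) ?_ ?_ ?_).symm
    · intro p hp
      rw [Finset.mem_filter] at hp ⊢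
      exact ⟨Finset.mem_univ _, hp.2⟩
    · intro p hp q hq h
      exact ins_bijective.1 h
    · intro σ hσ
      obtain ⟨p, hp⟩ := ins_bijective.2 σ
      refine ⟨p, ?_, hp⟩
      rw [Finset.mem_filter] at hσ ⊢
      have hp' : ins p.1 p.2 = σ := hp
      exact ⟨Finset.mem_univ _, by rw [hp']; exact hσ.2⟩
  rw [hstep1, Finset.card_filter, Fintype.sum_prod_type, Finset.sum_comm]
  have hinner : ∀ σ : Perm (Fin m), (∑ k : Fin (m+1),
      if cdesSet (m+1) (ins k σ) = insert (m+1) S then 1 else 0)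
      = (if cdesSet m σ = S then m - S.card else 0)
        + ∑ i ∈ Finset.Icc 2 m \ S, (if cdesSet m σ = insert i S then 1 else 0) := by
    intro σ
    rw [← Finset.card_filter]
    exact count_k hS σ
  rw [Finset.sum_congr rfl (fun σ _ => hinner σ), Finset.sum_add_distrib]
  congr 1
  · unfold cdes
    rw [Finset.card_filter, Finset.mul_sum]
    refine Finset.sum_congr rfl fun σ _ => ?_
    by_cases h : cdesSet m σ = S <;> simp [h]
  · rw [Finset.sum_comm]
    refine Finset.sum_congr rfl fun i _ => ?_
    unfold cdes
    rw [Finset.card_filter]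
end

section
/- Let n ≥ 2 and S = {s_1 > s_2 > ... > s_k} ⊆ [2,n] with k = |S| ≥ 1. Set d_i = s_i - s_{i+1} for i ∈ [k-1] and d_k = s_k - 1. Then cdes_n(S) = Σ over (x_1,...,x_k) ∈ {0,1}^k of (-1)^{k - Σ_j x_j} · Π_{i=1}^{k} (1 + x_1 + ... + x_i)^{d_i}. -/
section CDesAuxSection
open Finset Equiv

namespace CDesAux

variable {n : ℕ}

def insPerm (p : Fin (n+1)) (σ : Equiv.Perm (Fin n)) : Equiv.Perm (Fin (n+1)) :=
  (finSuccEquiv' p).trans ((σ.optionCongr).trans (finSuccEquiv' 0).symm)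

lemma insPerm_at (p : Fin (n+1)) (σ : Equiv.Perm (Fin n)) : insPerm p σ p = 0 := by
  simp [insPerm, finSuccEquiv'_at, finSuccEquiv'_symm_none]

lemma insPerm_succAbove (p : Fin (n+1)) (σ : Equiv.Perm (Fin n)) (j : Fin n) :
    insPerm p σ (p.succAbove j) = (σ j).succ := by
  simp [insPerm, finSuccEquiv'_succAbove, finSuccEquiv'_symm_some]

lemma coe_succAbove (p : Fin (n+1)) (j : Fin n) :
    (p.succAbove j : ℕ) = if (j : ℕ) < (p : ℕ) then (j : ℕ) else (j : ℕ) + 1 := by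
  rcases lt_or_ge (j : ℕ) (p : ℕ) with h | h
  · rw [Fin.succAbove_of_castSucc_lt _ _ (by simpa [Fin.lt_def] using h)]
    simp [h]
  · rw [Fin.succAbove_of_le_castSucc _ _ (by simpa [Fin.le_def] using h)]
    simp [Nat.not_lt.2 h]

lemma isCDesB_iff {σ : Equiv.Perm (Fin n)} {i : Fin n} :
    isCDesB σ i = true ↔ ∃ h : (i : ℕ) + 1 < n, σ ⟨(i : ℕ) + 1, h⟩ < σ i := by
  by_cases h : (i : ℕ) + 1 < n <;> simp [isCDesB, h]

def holds (n : ℕ) (P : ℕ → Bool) (σ : Equiv.Perm (Fin n)) : Prop :=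
  ∀ a ∈ cdesSet n σ, P a = true

lemma holds_iff (P : ℕ → Bool) (σ : Equiv.Perm (Fin n)) :
    holds n P σ ↔ ∀ i : Fin n, isCDesB σ i = true → P ((σ i : ℕ) + 1) = true := by
  unfold holds cdesSet
  simp

lemma holds_insPerm (P : ℕ → Bool) (p : Fin (n+1)) (σ : Equiv.Perm (Fin n)) :
    holds (n+1) P (insPerm p σ) ↔
      (holds n (fun m => P (m+1)) σ ∧
        ∀ h : p ≠ 0, P ((σ (p.pred h) : ℕ) + 2) = true) := by
  rw [holds_iff, holds_iff]
  constructor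
  · intro H
    constructor
    · intro i hi
      obtain ⟨h1, hdesc⟩ := isCDesB_iff.mp hi
      set a : Fin (n+1) := p.succAbove i with ha_def
      have ha_val : (a : ℕ) = if (i : ℕ) < (p : ℕ) then (i : ℕ) else (i : ℕ) + 1 :=
        coe_succAbove p i
      have ha_lt : (a : ℕ) + 1 < n + 1 := by
        split at ha_val <;> omega
      set b : Fin (n+1) := ⟨(a : ℕ) + 1, ha_lt⟩ with hb_def
      have hdesc' : insPerm p σ b < insPerm p σ a := by
        rcases eq_or_ne b p with hbp | hbp
        · rw [hbp, insPerm_at, ha_def, insPerm_succAbove]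
          exact Fin.succ_pos _
        · have hb : b = p.succAbove ⟨(i : ℕ) + 1, h1⟩ := by
            apply Fin.ext
            rw [coe_succAbove]
            have hbp' : ((b : ℕ)) ≠ (p : ℕ) := fun hc => hbp (Fin.ext hc)
            have hbv : (b : ℕ) = (a : ℕ) + 1 := rfl
            simp only []
            split at ha_val <;> split <;> omega
          rw [hb, ha_def, insPerm_succAbove, insPerm_succAbove]
          exact Fin.succ_lt_succ_iff.mpr hdesc
      have hD : isCDesB (insPerm p σ) a = true := isCDesB_iff.mpr ⟨ha_lt, hdesc'⟩
      have := H a hD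
      rwa [ha_def, insPerm_succAbove, Fin.val_succ] at this
    · intro hp
      set j : Fin n := p.pred hp with hj_def
      have hj_val : (j : ℕ) = (p : ℕ) - 1 := rfl
      have hp_pos : 0 < (p : ℕ) := Fin.pos_iff_ne_zero.mpr hp
      set a : Fin (n+1) := p.succAbove j with ha_def
      have ha_val : (a : ℕ) = (p : ℕ) - 1 := by
        rw [ha_def, coe_succAbove]
        rw [hj_val]
        simp only [if_pos (by omega : (p:ℕ) - 1 < (p:ℕ))]
      have ha_lt : (a : ℕ) + 1 < n + 1 := by
        have := p.isLt; omega
      have hb : (⟨(a : ℕ) + 1, ha_lt⟩ : Fin (n+1)) = p := by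
        apply Fin.ext; simp [ha_val]; omega
      have hdesc' : insPerm p σ ⟨(a : ℕ) + 1, ha_lt⟩ < insPerm p σ a := by
        rw [hb, insPerm_at, ha_def, insPerm_succAbove]
        exact Fin.succ_pos _
      have hD : isCDesB (insPerm p σ) a = true := isCDesB_iff.mpr ⟨ha_lt, hdesc'⟩
      have := H a hD
      rwa [ha_def, insPerm_succAbove, Fin.val_succ] at this
  · rintro ⟨H1, H2⟩ a haD
    obtain ⟨ha, hdesc⟩ := isCDesB_iff.mp haD
    have hap : a ≠ p := by
      intro hc
      have h0 : insPerm p σ a = 0 := by rw [hc]; exact insPerm_at p σ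
      rw [h0] at hdesc
      exact absurd hdesc (Fin.not_lt_zero _)
    obtain ⟨i, hi⟩ := Fin.exists_succAbove_eq hap
    have hav : (a : ℕ) = if (i : ℕ) < (p : ℕ) then (i : ℕ) else (i : ℕ) + 1 := by
      rw [← hi]; exact coe_succAbove p i
    have hgoal : (insPerm p σ a : ℕ) + 1 = ((σ i : ℕ) + 1) + 1 := by
      rw [← hi, insPerm_succAbove, Fin.val_succ]
    rw [hgoal]
    set b : Fin (n+1) := ⟨(a : ℕ) + 1, ha⟩ with hb_def
    rcases eq_or_ne b p with hbp | hbp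
    · have hp0 : p ≠ 0 := by
        intro hc
        have h := congrArg Fin.val (hbp.trans hc)
        simp [hb_def] at h
      have hpred : p.pred hp0 = i := by
        apply Fin.ext
        have h1 : (p : ℕ) = (a : ℕ) + 1 := by rw [← hbp]
        have h2 : (p.pred hp0 : ℕ) = (p : ℕ) - 1 := rfl
        split at hav <;> omega
      have := H2 hp0
      rwa [hpred] at this
    · obtain ⟨i', hi'⟩ := Fin.exists_succAbove_eq hbp
      have hbv : (b : ℕ) = if (i' : ℕ) < (p : ℕ) then (i' : ℕ) else (i' : ℕ) + 1 := by
        rw [← hi']; exact coe_succAbove p i'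
      have hbv2 : (b : ℕ) = (a : ℕ) + 1 := rfl
      have hpb : (p : ℕ) ≠ (b : ℕ) := fun hc => hbp (Fin.ext hc.symm)
      have hpa : (p : ℕ) ≠ (a : ℕ) := fun hc => hap (Fin.ext hc.symm)
      have hi'v : (i' : ℕ) = (i : ℕ) + 1 := by
        split at hav <;> split at hbv <;> omega
      have hi1 : (i : ℕ) + 1 < n := by
        have := i'.isLt; omega
      have hdesc2 : σ ⟨(i : ℕ) + 1, hi1⟩ < σ i := by
        have heq : (⟨(i : ℕ) + 1, hi1⟩ : Fin n) = i' := Fin.ext (by simp [hi'v])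
        rw [heq]
        have : insPerm p σ b < insPerm p σ a := hdesc
        rw [← hi, ← hi', insPerm_succAbove, insPerm_succAbove] at this
        exact Fin.succ_lt_succ_iff.mp this
      exact H1 i (isCDesB_iff.mpr ⟨hi1, hdesc2⟩)

lemma insPerm_injective :
    Function.Injective (fun pq : Fin (n+1) × Equiv.Perm (Fin n) => insPerm pq.1 pq.2) := by
  rintro ⟨p, σ⟩ ⟨q, τ⟩ h
  simp only at h
  have hpq : p = q := by
    by_contra hne
    obtain ⟨j, hj⟩ := Fin.exists_succAbove_eq hne
    have h1 : insPerm p σ p = 0 := insPerm_at p σ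
    have h2 : insPerm q τ p = (τ j).succ := by rw [← hj]; exact insPerm_succAbove q τ j
    rw [h] at h1
    rw [h1] at h2
    exact (Fin.succ_ne_zero _ h2.symm)
  subst hpq
  have hστ : σ = τ := by
    ext j
    have := congrArg (fun f => (f : Equiv.Perm (Fin (n+1))) (p.succAbove j)) h
    simp only [insPerm_succAbove] at this
    exact congrArg Fin.val (Fin.succ_injective _ this)
  simp [hστ]

lemma insPerm_bijective :
    Function.Bijective (fun pq : Fin (n+1) × Equiv.Perm (Fin n) => insPerm pq.1 pq.2) := by
  rw [Fintype.bijective_iff_injective_and_card]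
  refine ⟨insPerm_injective, ?_⟩
  simp [Fintype.card_perm, Nat.factorial_succ]

instance holdsDec (n : ℕ) (P : ℕ → Bool) : DecidablePred (holds n P) :=
  fun σ => inferInstanceAs (Decidable (∀ a ∈ cdesSet n σ, P a = true))

def keyCount (n : ℕ) (P : ℕ → Bool) : ℕ :=
  (univ.filter (holds n P)).card

def prodF : ℕ → (ℕ → Bool) → ℕ
  | 0, _ => 1
  | n+1, P =>
      (1 + ((range n).filter (fun u => P (u+2) = true)).card) * prodF n (fun m => P (m+1))

lemma slot_count (P : ℕ → Bool) (σ : Equiv.Perm (Fin n)) :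
    (∑ p : Fin (n+1),
        if (∀ h : p ≠ 0, P ((σ (p.pred h) : ℕ) + 2) = true) then 1 else 0)
      = 1 + ((range n).filter (fun u => P (u+2) = true)).card := by
  classical
  rw [Fin.sum_univ_succ]
  have h0 : (if (∀ h : (0 : Fin (n+1)) ≠ 0,
      P ((σ ((0 : Fin (n+1)).pred h) : ℕ) + 2) = true) then 1 else 0) = 1 :=
    if_pos (fun h => absurd rfl h)
  rw [h0]
  congr 1
  have hterm : ∀ j : Fin n,
      (if (∀ h : (j.succ : Fin (n+1)) ≠ 0,
          P ((σ ((j.succ).pred h) : ℕ) + 2) = true) then 1 else 0)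
        = if P ((σ j : ℕ) + 2) = true then 1 else 0 := by
    intro j
    have hiff : (∀ h : (j.succ : Fin (n+1)) ≠ 0,
        P ((σ ((j.succ).pred h) : ℕ) + 2) = true) ↔ P ((σ j : ℕ) + 2) = true := by
      constructor
      · intro H
        have := H (Fin.succ_ne_zero j)
        rwa [Fin.pred_succ] at this
      · intro H h
        rwa [Fin.pred_succ]
    simp only [hiff]
  rw [Finset.sum_congr rfl (fun j _ => hterm j)]
  rw [Equiv.sum_comp σ (fun v : Fin n => if P ((v : ℕ) + 2) = true then 1 else 0)]
  rw [Fin.sum_univ_eq_sum_range (fun u => if P (u+2) = true then 1 else 0)]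
  rw [Finset.card_filter]

lemma key_rec (n : ℕ) (P : ℕ → Bool) :
    keyCount (n+1) P
      = (1 + ((range n).filter (fun u => P (u+2) = true)).card)
        * keyCount n (fun m => P (m+1)) := by
  classical
  have hcard : keyCount (n+1) P
      = (univ.filter (fun pq : Fin (n+1) × Equiv.Perm (Fin n) =>
          holds (n+1) P (insPerm pq.1 pq.2))).card := by
    unfold keyCount
    refine (Finset.card_nbij (fun pq => insPerm pq.1 pq.2) ?_ ?_ ?_).symm
    · intro pq hpq
      simp only [mem_coe, mem_filter, mem_univ, true_and] at hpq ⊢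
      exact hpq
    · exact insPerm_injective.injOn
    · intro σ hσ
      simp only [mem_coe, mem_filter, mem_univ, true_and] at hσ
      obtain ⟨pq, hpq⟩ := insPerm_bijective.2 σ
      refine ⟨pq, ?_, hpq⟩
      simp only [mem_coe, mem_filter, mem_univ, true_and]
      rw [← hpq] at hσ
      simpa using hσ
  rw [hcard, Finset.card_filter, ← Finset.univ_product_univ, Finset.sum_product_right]
  have hinner : ∀ σ : Equiv.Perm (Fin n),
      (∑ p : Fin (n+1), if holds (n+1) P (insPerm p σ) then 1 else 0)
        = (if holds n (fun m => P (m+1)) σ then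
            (1 + ((range n).filter (fun u => P (u+2) = true)).card) else 0) := by
    intro σ
    by_cases hσ : holds n (fun m => P (m+1)) σ
    · rw [if_pos hσ, ← slot_count P σ]
      refine Finset.sum_congr rfl (fun p _ => ?_)
      simp only [holds_insPerm, hσ, true_and]
    · rw [if_neg hσ]
      refine Finset.sum_eq_zero (fun p _ => ?_)
      rw [if_neg]
      rw [holds_insPerm]
      exact fun hc => hσ hc.1
  rw [Finset.sum_congr rfl (fun σ _ => hinner σ)]
  have hA : ∀ σ : Equiv.Perm (Fin n),
      (if holds n (fun m => P (m+1)) σ then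
          (1 + ((range n).filter (fun u => P (u+2) = true)).card) else 0)
        = (1 + ((range n).filter (fun u => P (u+2) = true)).card)
          * (if holds n (fun m => P (m+1)) σ then 1 else 0) := by
    intro σ
    by_cases hσ : holds n (fun m => P (m+1)) σ <;> simp [hσ]
  rw [Finset.sum_congr rfl (fun σ _ => hA σ), ← Finset.mul_sum, ← Finset.card_filter]
  unfold keyCount
  congr 1

lemma key (n : ℕ) (P : ℕ → Bool) : keyCount n P = prodF n P := by
  induction n generalizing P with
  | zero =>
      have htriv : ∀ σ : Equiv.Perm (Fin 0), holds 0 P σ := by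
        intro σ a ha
        simp [cdesSet] at ha
      unfold keyCount prodF
      rw [Finset.filter_true_of_mem (fun σ _ => htriv σ)]
      simp
  | succ n ih =>
      rw [key_rec, ih]
      rfl

lemma card_shift (lo hi c : ℕ) (Q : ℕ → Bool) :
    ((Icc lo hi).filter (fun w => Q (w + c) = true)).card
      = ((Icc (lo+c) (hi+c)).filter (fun w => Q w = true)).card := by
  apply Finset.card_nbij (fun w => w + c)
  · intro a ha
    simp only [mem_coe, mem_filter, mem_Icc] at ha ⊢
    exact ⟨⟨by omega, by omega⟩, ha.2⟩
  · intro x _ y _ h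
    have hxy : x + c = y + c := h
    omega
  · intro b hb
    simp only [mem_coe, mem_filter, mem_Icc] at hb
    refine ⟨b - c, ?_, by show b - c + c = b; omega⟩
    simp only [mem_coe, mem_filter, mem_Icc]
    refine ⟨⟨by omega, by omega⟩, ?_⟩
    rw [Nat.sub_add_cancel (by omega : c ≤ b)]
    exact hb.2

lemma prodF_eq (n : ℕ) (P : ℕ → Bool) :
    prodF n P = ∏ j ∈ range n, (1 + ((Icc (j+2) n).filter (fun w => P w = true)).card) := by
  induction n generalizing P with
  | zero => simp [prodF]
  | succ n ih =>
      show (1 + ((range n).filter (fun u => P (u+2) = true)).card)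
          * prodF n (fun m => P (m+1)) = _
      rw [ih, Finset.prod_range_succ']
      have hA : ((range n).filter (fun u => P (u+2) = true)).card
          = ((Icc 2 (n+1)).filter (fun w => P w = true)).card := by
        apply Finset.card_nbij (fun w => w + 2)
        · intro a ha
          simp only [mem_coe, mem_filter, mem_range, mem_Icc] at ha ⊢
          exact ⟨⟨by omega, by omega⟩, ha.2⟩
        · intro x _ y _ h
          have hxy : x + 2 = y + 2 := h
          omega
        · intro b hb
          simp only [mem_coe, mem_filter, mem_Icc] at hb
          refine ⟨b - 2, ?_, by show b - 2 + 2 = b; omega⟩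
          simp only [mem_coe, mem_filter, mem_range]
          refine ⟨by omega, ?_⟩
          rw [Nat.sub_add_cancel (by omega : 2 ≤ b)]
          exact hb.2
      have hfac : ∀ j, ((Icc (j+2) n).filter (fun w => P (w+1) = true)).card
          = ((Icc (j+3) (n+1)).filter (fun w => P w = true)).card := by
        intro j
        have := card_shift (j+2) n 1 P
        simpa using this
      rw [hA]
      rw [Finset.prod_congr rfl (fun j _ => by rw [hfac j])]
      rw [mul_comm]

lemma antitone_of_step {g : ℕ → ℕ} {m : ℕ} (h : ∀ j, j < m → g (j+1) ≤ g j) :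
    ∀ a b, a ≤ b → b ≤ m → g b ≤ g a := by
  intro a b hab hbm
  induction b with
  | zero => have : a = 0 := by omega
            subst this; exact le_refl _
  | succ b ihb =>
      rcases Nat.lt_or_ge a (b+1) with h' | h'
      · exact le_trans (h b (by omega)) (ihb (by omega) (by omega))
      · have : a = b + 1 := by omega
        subst this; exact le_refl _

lemma tele (f : ℕ → ℕ) (g : ℕ → ℕ) (m : ℕ) (hg : ∀ j, j < m → g (j+1) ≤ g j) :
    ∏ j ∈ range m, ∏ w ∈ Ico (g (j+1)) (g j), f w = ∏ w ∈ Ico (g m) (g 0), f w := by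
  induction m with
  | zero => simp
  | succ m ih =>
      rw [Finset.prod_range_succ, ih (fun j hj => hg j (by omega))]
      rw [mul_comm]
      exact Finset.prod_Ico_consecutive f (hg m (by omega))
        (antitone_of_step (fun j hj => hg j (by omega)) 0 m (by omega) (le_refl _))

lemma fin2_cast (y : Fin 2) : (if y = 1 then (1:ℕ) else 0) = (y : ℕ) := by
  fin_cases y <;> simp

lemma prod_eval (n k : ℕ) (hk : 1 ≤ k) (s : Fin k → ℕ) (hs : StrictAnti s)
    (hrange : ∀ i, s i ∈ Finset.Icc 2 n) (d : Fin k → ℕ)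
    (hd : ∀ i : Fin k, d i = if h : (i : ℕ) + 1 < k then s i - s ⟨(i : ℕ) + 1, h⟩ else s i - 1)
    (x : Fin k → Fin 2) (T : Finset ℕ)
    (hT : T = Finset.image s (univ.filter (fun j => x j = 1))) :
    ∏ j ∈ range n, (1 + ((Icc (j+2) n).filter (fun w => decide (w ∈ T) = true)).card)
      = ∏ i : Fin k, (1 + ∑ j ∈ Finset.Iic i, (x j : ℕ)) ^ (d i) := by
  classical
  set f : ℕ → ℕ :=
    fun w => 1 + ((Icc (w+1) n).filter (fun t => decide (t ∈ T) = true)).card with hf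
  set g : ℕ → ℕ := fun i => if h : i < k then s ⟨i, h⟩ else 1 with hg
  have hg0 : g 0 = s ⟨0, hk⟩ := dif_pos hk
  have hstep : ∀ j, j < k → g (j+1) ≤ g j := by
    intro j hj
    by_cases h1 : j + 1 < k
    · simp only [hg, dif_pos h1, dif_pos hj]
      exact le_of_lt (hs (by simp [Fin.lt_def]))
    · simp only [hg, dif_neg h1, dif_pos hj]
      have := (mem_Icc.mp (hrange ⟨j, hj⟩)).1
      omega
  -- Step 1: reindex LHS
  have step1 : ∏ j ∈ range n, (1 + ((Icc (j+2) n).filter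
        (fun w => decide (w ∈ T) = true)).card)
      = ∏ w ∈ Ico 1 (n+1), f w := by
    rw [Finset.prod_Ico_eq_prod_range]
    simp only [Nat.add_sub_cancel]
    refine Finset.prod_congr rfl (fun j _ => ?_)
    have : 1 + j + 1 = j + 2 := by omega
    simp only [hf, this, Nat.add_comm 1 j]
  rw [step1]
  -- facts about s
  have hs_le_n : ∀ i : Fin k, s i ≤ n := fun i => (mem_Icc.mp (hrange i)).2
  have hs_ge_2 : ∀ i : Fin k, 2 ≤ s i := fun i => (mem_Icc.mp (hrange i)).1
  -- Step 2: drop the top part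
  have hg0n : g 0 ≤ n + 1 := by rw [hg0]; have := hs_le_n ⟨0, hk⟩; omega
  have hg01 : 1 ≤ g 0 := by rw [hg0]; have := hs_ge_2 ⟨0, hk⟩; omega
  have step2 : ∏ w ∈ Ico 1 (n+1), f w = ∏ w ∈ Ico 1 (g 0), f w := by
    rw [← Finset.prod_Ico_consecutive f hg01 hg0n]
    have htop : ∏ w ∈ Ico (g 0) (n+1), f w = 1 := by
      apply Finset.prod_eq_one
      intro w hw
      rw [mem_Ico] at hw
      simp only [hf]
      have : ((Icc (w+1) n).filter (fun t => decide (t ∈ T) = true)) = ∅ := by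
        apply Finset.filter_false_of_mem
        intro t ht h2
        rw [mem_Icc] at ht
        rw [decide_eq_true_iff, hT, Finset.mem_image] at h2
        obtain ⟨j', _, hj'⟩ := h2
        have h3 : s j' ≤ s ⟨0, hk⟩ := by
          rcases eq_or_ne j' ⟨0, hk⟩ with h | h
          · rw [h]
          · exact le_of_lt (hs (by
              simp only [Fin.lt_def]
              have : (j' : ℕ) ≠ 0 := fun hc => h (Fin.ext hc)
              omega))
        rw [hg0] at hw
        omega
      rw [this]
      simp
    rw [htop, mul_one]
  rw [step2]
  -- Step 3: telescope
  have hgk : g k = 1 := by simp [hg]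
  have step3 : ∏ w ∈ Ico 1 (g 0), f w
      = ∏ j ∈ range k, ∏ w ∈ Ico (g (j+1)) (g j), f w := by
    rw [tele f g k hstep, hgk]
  rw [step3]
  -- Step 4: evaluate each piece
  have step4 : ∀ j, ∀ hj : j < k, ∏ w ∈ Ico (g (j+1)) (g j), f w
      = (1 + ∑ j' ∈ Finset.Iic (⟨j, hj⟩ : Fin k), ((x j' : ℕ))) ^ (d ⟨j, hj⟩) := by
    intro j hj
    have hconst : ∀ w ∈ Ico (g (j+1)) (g j),
        f w = 1 + ∑ j' ∈ Finset.Iic (⟨j, hj⟩ : Fin k), ((x j' : ℕ)) := by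
      intro w hw
      rw [mem_Ico] at hw
      simp only [hf]
      congr 1
      have himg : (Icc (w+1) n).filter (fun t => decide (t ∈ T) = true)
          = Finset.image s ((Finset.Iic (⟨j, hj⟩ : Fin k)).filter (fun j' => x j' = 1)) := by
        ext t
        simp only [mem_filter, mem_Icc, Finset.mem_image, Finset.mem_Iic,
          decide_eq_true_iff, hT]
        constructor
        · rintro ⟨⟨hw1, hn1⟩, j', hj'mem, hj'⟩
          refine ⟨j', ⟨?_, hj'mem.2⟩, hj'⟩
          by_contra hcon
          have hlt : (⟨j, hj⟩ : Fin k) < j' := lt_of_not_ge hcon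
          have h1 : (j : ℕ) < (j' : ℕ) := hlt
          have h2 : s j' ≤ g (j+1) := by
            by_cases hc : j + 1 < k
            · simp only [hg, dif_pos hc]
              rcases eq_or_ne (j' : ℕ) (j+1) with he | hne
              · have : j' = (⟨j+1, hc⟩ : Fin k) := Fin.ext he
                rw [this]
              · exact le_of_lt (hs (show (j + 1 : ℕ) < (j' : ℕ) by omega))
            · exact absurd (lt_of_le_of_lt (by omega : j + 1 ≤ (j' : ℕ)) j'.isLt) hc
          omega
        · rintro ⟨j', ⟨hj'le, hj'1⟩, hj'⟩
          have h1 : s (⟨j, hj⟩ : Fin k) ≤ s j' := by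
            rcases eq_or_ne j' ⟨j, hj⟩ with he | hne
            · rw [he]
            · exact le_of_lt (hs (lt_of_le_of_ne hj'le hne))
          have h2 : g j = s ⟨j, hj⟩ := by simp [hg, hj]
          refine ⟨⟨?_, ?_⟩, j', ⟨mem_univ _, hj'1⟩, hj'⟩
          · omega
          · rw [← hj']; exact hs_le_n j'
      rw [himg, Finset.card_image_of_injOn
        (Set.InjOn.mono (Set.subset_univ _) hs.injective.injOn)]
      rw [Finset.card_filter]
      exact Finset.sum_congr rfl (fun j' _ => fin2_cast (x j'))
    rw [Finset.prod_congr rfl hconst, Finset.prod_const, Nat.card_Ico]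
    congr 1
    rw [hd ⟨j, hj⟩]
    by_cases hc : j + 1 < k
    · simp only [hg, dif_pos hc, dif_pos hj]
    · simp only [hg, dif_neg hc, dif_pos hj]
  -- Step 5: convert to a product over Fin k
  set F' : ℕ → ℕ := fun j =>
    if h : j < k then (1 + ∑ j' ∈ Finset.Iic (⟨j, h⟩ : Fin k), ((x j' : ℕ))) ^ (d ⟨j, h⟩)
    else 1 with hF'
  have step5 : ∏ j ∈ range k, ∏ w ∈ Ico (g (j+1)) (g j), f w = ∏ j ∈ range k, F' j := by
    refine Finset.prod_congr rfl (fun j hj => ?_)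
    rw [mem_range] at hj
    rw [step4 j hj]
    simp only [hF', dif_pos hj]
  rw [step5, ← Fin.prod_univ_eq_prod_range F' k]
  refine Finset.prod_congr rfl (fun i _ => ?_)
  simp only [hF', dif_pos i.isLt, Fin.eta]

lemma G_eq (n : ℕ) (T : Finset ℕ) :
    keyCount n (fun w => decide (w ∈ T)) = ∑ S' ∈ T.powerset, cdes n S' := by
  classical
  unfold keyCount
  rw [Finset.card_eq_sum_card_fiberwise
    (f := cdesSet n) (t := T.powerset) (fun σ hσ => by
      rw [mem_coe, mem_filter] at hσ
      rw [mem_coe, Finset.mem_powerset]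
      intro a ha
      have := hσ.2 a ha
      simpa using this)]
  refine Finset.sum_congr rfl (fun S' hS' => ?_)
  rw [Finset.mem_powerset] at hS'
  unfold cdes
  congr 1
  rw [Finset.filter_filter]
  refine Finset.filter_congr (fun σ _ => ?_)
  constructor
  · rintro ⟨_, h2⟩; exact h2
  · intro h
    refine ⟨?_, h⟩
    intro a ha
    rw [h] at ha
    simp [hS' ha]

lemma inner_sum (S S' : Finset ℕ) (hS' : S' ⊆ S) :
    (∑ T ∈ S.powerset.filter (fun T => S' ⊆ T), (-1 : ℤ) ^ ((S \ T).card))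
      = if S' = S then 1 else 0 := by
  classical
  have hre : (∑ T ∈ S.powerset.filter (fun T => S' ⊆ T), (-1 : ℤ) ^ ((S \ T).card))
      = ∑ U ∈ (S \ S').powerset, (-1 : ℤ) ^ U.card := by
    refine Finset.sum_nbij' (fun T => S \ T) (fun U => S \ U) ?_ ?_ ?_ ?_ ?_
    · intro T hT
      rw [mem_filter, Finset.mem_powerset] at hT
      rw [Finset.mem_powerset]
      exact Finset.sdiff_subset_sdiff (le_refl _) hT.2
    · intro U hU
      rw [Finset.mem_powerset] at hU
      rw [mem_filter, Finset.mem_powerset]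
      refine ⟨Finset.sdiff_subset, ?_⟩
      intro a ha
      rw [Finset.mem_sdiff]
      refine ⟨hS' ha, fun hc => ?_⟩
      have := hU hc
      rw [Finset.mem_sdiff] at this
      exact this.2 ha
    · intro T hT
      rw [mem_filter, Finset.mem_powerset] at hT
      exact Finset.sdiff_sdiff_eq_self hT.1
    · intro U hU
      rw [Finset.mem_powerset] at hU
      exact Finset.sdiff_sdiff_eq_self (hU.trans Finset.sdiff_subset)
    · intro T _
      rfl
  rw [hre, Finset.sum_powerset_neg_one_pow_card]
  by_cases h : S' = S
  · subst h; simp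
  · rw [if_neg h, if_neg]
    intro hc
    rw [Finset.sdiff_eq_empty_iff_subset] at hc
    exact h (Finset.Subset.antisymm hS' hc)

lemma mobius (n : ℕ) (S : Finset ℕ) :
    (cdes n S : ℤ)
      = ∑ T ∈ S.powerset,
          (-1 : ℤ) ^ ((S \ T).card) * (keyCount n (fun w => decide (w ∈ T)) : ℤ) := by
  classical
  have h1 : ∀ T : Finset ℕ, (keyCount n (fun w => decide (w ∈ T)) : ℤ)
      = ∑ S' ∈ T.powerset, (cdes n S' : ℤ) := by
    intro T
    rw [G_eq]
    push_cast
    rfl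
  calc (cdes n S : ℤ)
      = ∑ S' ∈ S.powerset,
          (∑ T ∈ S.powerset.filter (fun T => S' ⊆ T), (-1 : ℤ) ^ ((S \ T).card))
            * (cdes n S' : ℤ) := by
        rw [Finset.sum_congr rfl (fun S' hS' => by
          rw [inner_sum S S' (Finset.mem_powerset.mp hS'), ite_mul, one_mul, zero_mul])]
        rw [Finset.sum_ite_eq' S.powerset S (fun S' => (cdes n S' : ℤ))]
        simp
    _ = ∑ S' ∈ S.powerset, ∑ T ∈ S.powerset.filter (fun T => S' ⊆ T),
          (-1 : ℤ) ^ ((S \ T).card) * (cdes n S' : ℤ) := by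
        refine Finset.sum_congr rfl (fun S' _ => ?_)
        rw [Finset.sum_mul]
    _ = ∑ T ∈ S.powerset, ∑ S' ∈ T.powerset,
          (-1 : ℤ) ^ ((S \ T).card) * (cdes n S' : ℤ) := by
        refine Finset.sum_comm' ?_
        intro S' T
        simp only [mem_filter, Finset.mem_powerset]
        constructor
        · rintro ⟨h1, h2, h3⟩; exact ⟨h3, h2⟩
        · rintro ⟨h1, h2⟩; exact ⟨h1.trans h2, h2, h1⟩
    _ = ∑ T ∈ S.powerset,
          (-1 : ℤ) ^ ((S \ T).card) * (keyCount n (fun w => decide (w ∈ T)) : ℤ) := by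
        refine Finset.sum_congr rfl (fun T _ => ?_)
        rw [h1, Finset.mul_sum]


end CDesAux
end CDesAuxSection

theorem stmt_8 (n k : ℕ) (hn : 2 ≤ n) (hk : 1 ≤ k)
    (s : Fin k → ℕ) (hs : StrictAnti s)
    (S : Finset ℕ) (hS : S = Finset.image s Finset.univ)
    (hrange : ∀ i, s i ∈ Finset.Icc 2 n)
    (d : Fin k → ℕ)
    (hd : ∀ i : Fin k, d i = if h : (i : ℕ) + 1 < k then s i - s ⟨(i : ℕ) + 1, h⟩ else s i - 1) :
    (cdes n S : ℤ) =
      ∑ x : Fin k → Fin 2,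
        (-1 : ℤ) ^ (k - ∑ j, (x j : ℕ)) *
          ∏ i : Fin k, ((1 : ℤ) + ∑ j ∈ Finset.Iic i, (x j : ℕ)) ^ (d i) := by
  classical
  rw [CDesAux.mobius n S]
  refine Finset.sum_nbij'
    (fun T => fun i : Fin k => if s i ∈ T then (1 : Fin 2) else 0)
    (fun x => Finset.image s (Finset.univ.filter (fun j => x j = 1)))
    (fun T _ => Finset.mem_univ _) ?_ ?_ ?_ ?_
  · -- j maps into the powerset
    intro x _
    rw [Finset.mem_powerset, hS]
    exact Finset.image_subset_image (Finset.filter_subset _ _)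
  · -- left inverse
    intro T hT
    rw [Finset.mem_powerset] at hT
    ext t
    simp only [Finset.mem_image, Finset.mem_filter, Finset.mem_univ, true_and]
    constructor
    · rintro ⟨j', hj', rfl⟩
      by_cases hc : s j' ∈ T
      · exact hc
      · rw [if_neg hc] at hj'
        exact absurd hj' (by decide)
    · intro ht
      have htS : t ∈ S := hT ht
      rw [hS, Finset.mem_image] at htS
      obtain ⟨j', _, rfl⟩ := htS
      exact ⟨j', if_pos ht, rfl⟩
  · -- right inverse
    intro x _
    funext i
    show (if s i ∈ Finset.image s (Finset.univ.filter (fun j => x j = 1)) then (1 : Fin 2) else 0)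
        = x i
    have himg : s i ∈ Finset.image s (Finset.univ.filter (fun j => x j = 1)) ↔ x i = 1 := by
      simp only [Finset.mem_image, Finset.mem_filter, Finset.mem_univ, true_and]
      constructor
      · rintro ⟨j', hj', hsj'⟩
        rwa [← hs.injective hsj']
      · intro h; exact ⟨i, h, rfl⟩
    by_cases hc : x i = 1
    · rw [if_pos (himg.mpr hc), hc]
    · rw [if_neg (fun h => hc (himg.mp h))]
      have := (x i).isLt
      omega
  · -- terms agree
    intro T hT
    rw [Finset.mem_powerset] at hT
    set xT : Fin k → Fin 2 := fun i => if s i ∈ T then (1 : Fin 2) else 0 with hxT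
    have hfilter_eq : (Finset.univ.filter (fun j => xT j = 1))
        = (Finset.univ.filter (fun j : Fin k => s j ∈ T)) := by
      refine Finset.filter_congr (fun j _ => ?_)
      simp only [hxT]
      by_cases hc : s j ∈ T
      · simp [hc]
      · simp [hc]
    have hleft : Finset.image s (Finset.univ.filter (fun j => xT j = 1)) = T := by
      rw [hfilter_eq]
      ext t
      simp only [Finset.mem_image, Finset.mem_filter, Finset.mem_univ, true_and]
      constructor
      · rintro ⟨j', hj', rfl⟩; exact hj'
      · intro ht
        have htS : t ∈ S := hT ht
        rw [hS, Finset.mem_image] at htS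
        obtain ⟨j', _, rfl⟩ := htS
        exact ⟨j', ht, rfl⟩
    have hcard_sum : ∑ j, ((xT j : ℕ)) = T.card := by
      have h1 : ∀ j : Fin k, ((xT j : ℕ)) = if s j ∈ T then 1 else 0 := by
        intro j
        simp only [hxT]
        by_cases hc : s j ∈ T <;> simp [hc]
      rw [Finset.sum_congr rfl (fun j _ => h1 j), ← Finset.card_filter]
      have h2 : (Finset.univ.filter (fun j : Fin k => s j ∈ T)).card
          = (Finset.image s (Finset.univ.filter (fun j : Fin k => s j ∈ T))).card :=
        (Finset.card_image_of_injOn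
          (Set.InjOn.mono (Set.subset_univ _) hs.injective.injOn)).symm
      rw [h2, ← hfilter_eq, hleft]
    have hcardS : S.card = k := by
      rw [hS, Finset.card_image_of_injective _ hs.injective]
      simp
    have hsign : (S \ T).card = k - ∑ j, ((xT j : ℕ)) := by
      rw [Finset.card_sdiff_of_subset hT, hcardS, hcard_sum]
    have hkc : (CDesAux.keyCount n (fun w => decide (w ∈ T)) : ℤ)
        = ∏ i : Fin k, ((1 : ℤ) + ∑ j ∈ Finset.Iic i, ((xT j : ℕ))) ^ (d i) := by
      rw [CDesAux.key, CDesAux.prodF_eq,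
        CDesAux.prod_eval n k hk s hs hrange d hd xT T hleft.symm]
      push_cast
      rfl
    rw [hsign, hkc]
end

section
/- For k = 1, d_1 = n - 1: Σ_{x_1 ∈ {0,1}} (-1)^{1-x_1}(1+x_1)^{n-1} = 2^{n-1} - 1, which equals the number of permutations of [n] with circular descent set {n}. -/
/-- Structure predicate: the only descents of `σ` are at positions whose value is `n-1`,
and such a descent exists. -/
def Struct (n : ℕ) (σ : Equiv.Perm (Fin n)) : Prop :=
  (∀ i : Fin n, ∀ h : (i : ℕ) + 1 < n, (σ ⟨(i : ℕ) + 1, h⟩ < σ i ↔ (σ i : ℕ) = n - 1)) ∧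
  ∃ i : Fin n, ∃ _h : (i : ℕ) + 1 < n, (σ i : ℕ) = n - 1

lemma struct_char {n : ℕ} (hn : 2 ≤ n) (σ : Equiv.Perm (Fin n)) :
    cdesSet n σ = {n} ↔ Struct n σ := by
  constructor
  · intro h
    constructor
    · intro i hlt
      constructor
      · intro hd
        have hmem : (σ i : ℕ) + 1 ∈ cdesSet n σ := by
          apply Finset.mem_image_of_mem
          simp only [Finset.mem_filter, Finset.mem_univ, true_and, isCDesB, hlt, dif_pos]
          simp [isCDesB, hlt, hd]
        rw [h, Finset.mem_singleton] at hmem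
        omega
      · intro hv
        have hne : σ ⟨(i : ℕ) + 1, hlt⟩ ≠ σ i := by
          intro he
          have := σ.injective he
          have : ((i : ℕ) + 1 : ℕ) = (i : ℕ) := congrArg Fin.val this
          omega
        have h2 : (σ ⟨(i : ℕ) + 1, hlt⟩ : ℕ) < n := (σ _).isLt
        have h3 : (σ ⟨(i : ℕ) + 1, hlt⟩ : ℕ) ≠ (σ i : ℕ) := fun he => hne (Fin.ext he)
        exact Fin.lt_def.mpr (by omega)
    · have hmem : n ∈ cdesSet n σ := by rw [h]; exact Finset.mem_singleton_self n
      obtain ⟨i, hi, hval⟩ := Finset.mem_image.mp hmem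
      simp only [Finset.mem_filter, Finset.mem_univ, true_and] at hi
      by_cases h1 : (i : ℕ) + 1 < n
      · exact ⟨i, h1, by omega⟩
      · simp [isCDesB, h1] at hi
  · rintro ⟨h1, i0, hlt0, hv0⟩
    ext m
    simp only [Finset.mem_singleton]
    constructor
    · intro hm
      obtain ⟨i, hi, hval⟩ := Finset.mem_image.mp hm
      simp only [Finset.mem_filter, Finset.mem_univ, true_and] at hi
      by_cases h2 : (i : ℕ) + 1 < n
      · simp only [isCDesB, h2, dif_pos, decide_eq_true_eq] at hi
        have := (h1 i h2).mp hi
        omega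
      · simp [isCDesB, h2] at hi
    · intro hm
      subst hm
      apply Finset.mem_image.mpr
      refine ⟨i0, ?_, by omega⟩
      simp only [Finset.mem_filter, Finset.mem_univ, true_and, isCDesB, hlt0, dif_pos,
        decide_eq_true_eq]
      simp [isCDesB, hlt0, (h1 i0 hlt0).mpr hv0]

/-- Chain lemma: if all consecutive steps from `a` to `b` are ascents, then `σ a < σ b`. -/
lemma chain {n : ℕ} (σ : Equiv.Perm (Fin n)) (a b : Fin n) (hab : a < b)
    (hasc : ∀ i : Fin n, ∀ h : (i : ℕ) + 1 < n, a ≤ i → (i : ℕ) + 1 ≤ (b : ℕ) →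
      σ i < σ ⟨(i : ℕ) + 1, h⟩) :
    σ a < σ b := by
  obtain ⟨b, hb⟩ := b
  induction b with
  | zero => simp [Fin.lt_def] at hab
  | succ m ih =>
    have hab' : (a : ℕ) < m + 1 := by simpa [Fin.lt_def] using hab
    have hm : m < n := by omega
    have hstep : σ ⟨m, hm⟩ < σ ⟨m + 1, hb⟩ := by
      exact hasc ⟨m, hm⟩ hb (Fin.le_def.mpr (by simpa using Nat.lt_succ_iff.mp hab'))
        (by simp)
    rcases eq_or_lt_of_le (Nat.lt_succ_iff.mp hab') with he | hl
    · have : a = ⟨m, hm⟩ := Fin.ext he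
      rw [this]; exact hstep
    · exact lt_trans (ih hm (Fin.lt_def.mpr (by simpa using hl))
        (fun i h hai hib => hasc i h hai (by simp at hib ⊢; omega))) hstep


lemma struct_desc {n : ℕ} (hn : 2 ≤ n) (σ : Equiv.Perm (Fin n)) (hσ : Struct n σ)
    {k : ℕ} (hkn : k + 1 < n)
    (hk : ∀ i : Fin n, (σ i : ℕ) = n - 1 ↔ (i : ℕ) = k)
    {S : Finset (Fin n)} (hScard : S.card = k)
    (hS : ∀ x : Fin n, x ∈ S ↔ ∃ m : ℕ, ∃ hm : m < n, m < k ∧ σ ⟨m, hm⟩ = x)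
    {T : Finset (Fin n)} (hTcard : T.card = n - 1 - k)
    (hT : ∀ x : Fin n, x ∈ T ↔ (x ∉ S ∧ (x : ℕ) ≠ n - 1)) :
    ∀ i : Fin n, σ i = if h : (i : ℕ) < k
      then S.orderEmbOfFin hScard ⟨(i : ℕ), h⟩
      else if (i : ℕ) = k then ⟨n - 1, by omega⟩
      else T.orderEmbOfFin hTcard ⟨(i : ℕ) - k - 1, by have := i.isLt; omega⟩ := by
  have hasc : ∀ i : Fin n, ∀ h : (i : ℕ) + 1 < n, (i : ℕ) ≠ k → σ i < σ ⟨(i : ℕ) + 1, h⟩ := by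
    intro i h hik
    have h1 := (hσ.1 i h)
    have h2 : ¬ σ ⟨(i : ℕ) + 1, h⟩ < σ i := by
      intro hd
      exact hik ((hk i).mp (h1.mp hd))
    have h3 : σ i ≠ σ ⟨(i : ℕ) + 1, h⟩ := by
      intro he
      have := congrArg Fin.val (σ.injective he)
      simp at this
    exact lt_of_le_of_ne (not_lt.mp h2) h3
  have hf : ∀ m : Fin k, σ ⟨(m : ℕ), by have := m.isLt; omega⟩ = S.orderEmbOfFin hScard m := by
    have := Finset.orderEmbOfFin_unique (f := fun m : Fin k =>
        σ ⟨(m : ℕ), by have := m.isLt; omega⟩) hScard ?_ ?_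
    · intro m; exact congrFun this m
    · intro m
      exact (hS _).mpr ⟨(m : ℕ), by have := m.isLt; omega, m.isLt, rfl⟩
    · intro m m' hmm
      apply chain
      · exact Fin.lt_def.mpr (by simpa using hmm)
      · intro i h hai hib
        apply hasc i h
        simp only [Fin.le_def] at hai
        simp at hib
        have := m'.isLt
        omega
  have hg : ∀ m : Fin (n - 1 - k), σ ⟨k + 1 + (m : ℕ), by have := m.isLt; omega⟩ =
      T.orderEmbOfFin hTcard m := by
    have := Finset.orderEmbOfFin_unique (f := fun m : Fin (n - 1 - k) =>
        σ ⟨k + 1 + (m : ℕ), by have := m.isLt; omega⟩) hTcard ?_ ?_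
    · intro m; exact congrFun this m
    · intro m
      refine (hT _).mpr ⟨?_, ?_⟩
      · intro hmem
        obtain ⟨m', hm', hmk', he⟩ := (hS _).mp hmem
        have := congrArg Fin.val (σ.injective he)
        simp at this
        omega
      · intro he
        have := (hk _).mp he
        simp at this
        omega
    · intro m m' hmm
      apply chain
      · exact Fin.lt_def.mpr (by simpa using hmm)
      · intro i h hai hib
        apply hasc i h
        simp only [Fin.le_def] at hai
        simp at hai hib
        omega
  intro i
  by_cases h1 : (i : ℕ) < k
  · rw [dif_pos h1]
    have := hf ⟨(i : ℕ), h1⟩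
    simpa using this
  · rw [dif_neg h1]
    by_cases h2 : (i : ℕ) = k
    · rw [if_pos h2]
      exact Fin.ext ((hk i).mpr h2)
    · rw [if_neg h2]
      have hlt : (i : ℕ) - k - 1 < n - 1 - k := by have := i.isLt; omega
      have := hg ⟨(i : ℕ) - k - 1, hlt⟩
      have harg : (⟨k + 1 + ((i : ℕ) - k - 1), by have := i.isLt; omega⟩ : Fin n) = i := by
        apply Fin.ext; simp; omega
      rw [harg] at this
      exact this

lemma fin_lt_top {n : ℕ} (hn : 2 ≤ n) (a : Fin n) (ha : (a : ℕ) ≠ n - 1) :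
    a < (⟨n - 1, by omega⟩ : Fin n) := by
  have := a.isLt
  exact Fin.lt_def.mpr (by simp; omega)

def tpv {n : ℕ} (hn : 2 ≤ n) : Fin n :=
  ⟨n - 1, Nat.sub_lt (Nat.lt_of_lt_of_le Nat.zero_lt_two hn) Nat.one_pos⟩

def buildF {n : ℕ} (S T : Finset (Fin n)) {k : ℕ} (hkn : k + 1 < n)
    (hS : S.card = k) (hT : T.card = n - 1 - k) : Fin n → Fin n := fun i =>
  if h : (i : ℕ) < k then S.orderEmbOfFin hS ⟨(i : ℕ), h⟩
  else if (i : ℕ) = k then ⟨n - 1, by omega⟩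
  else T.orderEmbOfFin hT ⟨(i : ℕ) - k - 1, by have := i.isLt; omega⟩

lemma buildF_lt {n : ℕ} {S T : Finset (Fin n)} {k : ℕ} (hkn : k + 1 < n)
    (hS : S.card = k) (hT : T.card = n - 1 - k) (i : Fin n) (h : (i : ℕ) < k) :
    buildF S T hkn hS hT i = S.orderEmbOfFin hS ⟨(i : ℕ), h⟩ := by
  unfold buildF; rw [dif_pos h]

lemma buildF_eq {n : ℕ} {S T : Finset (Fin n)} {k : ℕ} (hkn : k + 1 < n)
    (hS : S.card = k) (hT : T.card = n - 1 - k) (i : Fin n) (h : (i : ℕ) = k) :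
    buildF S T hkn hS hT i = ⟨n - 1, by omega⟩ := by
  unfold buildF; rw [dif_neg (by omega), if_pos h]

lemma buildF_gt {n : ℕ} {S T : Finset (Fin n)} {k : ℕ} (hkn : k + 1 < n)
    (hS : S.card = k) (hT : T.card = n - 1 - k) (i : Fin n) (h : k < (i : ℕ)) :
    buildF S T hkn hS hT i
      = T.orderEmbOfFin hT ⟨(i : ℕ) - k - 1, by have := i.isLt; omega⟩ := by
  unfold buildF; rw [dif_neg (by omega), if_neg (by omega)]

set_option maxHeartbeats 2000000 in
lemma count_main {n : ℕ} (hn : 2 ≤ n) :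
    (Finset.univ.filter fun σ : Equiv.Perm (Fin n) => cdesSet n σ = {n}).card
      = 2 ^ (n - 1) - 1 := by
  have hBcard : (((Finset.univ.erase (tpv hn)).powerset).erase
      (Finset.univ.erase (tpv hn))).card = 2 ^ (n - 1) - 1 := by
    rw [Finset.card_erase_of_mem (Finset.mem_powerset_self _), Finset.card_powerset,
      Finset.card_erase_of_mem (Finset.mem_univ _), Finset.card_univ, Fintype.card_fin]
  rw [← hBcard]
  have hcard_erase : (Finset.univ.erase (tpv hn)).card = n - 1 := by
    rw [Finset.card_erase_of_mem (Finset.mem_univ _), Finset.card_univ, Fintype.card_fin]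
  -- facts about structured permutations
  have key : ∀ σ : Equiv.Perm (Fin n), Struct n σ →
      ((σ.symm (tpv hn) : ℕ) + 1 < n) ∧
      (∀ i : Fin n, (σ i : ℕ) = n - 1 ↔ (i : ℕ) = (σ.symm (tpv hn) : ℕ)) ∧
      ((Finset.Iio (σ.symm (tpv hn))).image σ).card
        = (σ.symm (tpv hn) : ℕ) ∧
      (Finset.Iio (σ.symm (tpv hn))).image σ
        ⊆ Finset.univ.erase (tpv hn) := by
    intro σ hσ
    have hiff : ∀ i : Fin n, (σ i : ℕ) = n - 1 ↔ (i : ℕ)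
        = (σ.symm (tpv hn) : ℕ) := by
      intro i
      constructor
      · intro h
        have h2 : σ i = (tpv hn) := Fin.ext (by simpa [tpv] using h)
        rw [← h2, Equiv.symm_apply_apply]
      · intro h
        have h2 : i = σ.symm (tpv hn) := Fin.ext h
        rw [h2, Equiv.apply_symm_apply]
        rfl
    have hjlt : (σ.symm (tpv hn) : ℕ) + 1 < n := by
      obtain ⟨i0, hlt0, hv0⟩ := hσ.2
      have := (hiff i0).mp hv0
      omega
    refine ⟨hjlt, hiff, ?_, ?_⟩
    · rw [Finset.card_image_of_injective _ σ.injective, Fin.card_Iio]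
    · intro x hx
      obtain ⟨i', hi', he⟩ := Finset.mem_image.mp hx
      rw [Finset.mem_erase]
      refine ⟨?_, Finset.mem_univ _⟩
      intro hxe
      rw [← he] at hxe
      have h3 : (σ i' : ℕ) = n - 1 := by rw [hxe]; rfl
      have h4 := (hiff i').mp h3
      rw [Finset.mem_Iio, Fin.lt_def] at hi'
      omega
  apply Finset.card_bij (fun (σ : Equiv.Perm (Fin n)) _ =>
    (Finset.Iio (σ.symm (tpv hn))).image σ)
  · -- maps into B
    intro σ hσ'
    have hσ : Struct n σ := (struct_char hn σ).mp (by simpa using hσ')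
    have hK := key σ hσ
    have hcard := hK.2.2.1
    rw [Finset.mem_erase]
    refine ⟨?_, Finset.mem_powerset.mpr hK.2.2.2⟩
    intro he
    have he' : (Finset.Iio (σ.symm (tpv hn))).image σ
        = Finset.univ.erase (tpv hn) := he
    rw [he', hcard_erase] at hcard
    omega
  · -- injective
    intro σ hσ' τ hτ' heq0
    have heq : (Finset.Iio (σ.symm (tpv hn))).image σ
        = (Finset.Iio (τ.symm (tpv hn))).image τ := heq0
    have hσ : Struct n σ := (struct_char hn σ).mp (by simpa using hσ')
    have hτ : Struct n τ := (struct_char hn τ).mp (by simpa using hτ')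
    have hKσ := key σ hσ
    have hKτ := key τ hτ
    have hjltσ := hKσ.1
    have hiffσ := hKσ.2.1
    have hcardσ := hKσ.2.2.1
    have hsubσ := hKσ.2.2.2
    have hjltτ := hKτ.1
    have hiffτ := hKτ.2.1
    have hcardτ := hKτ.2.2.1
    have hkτ : (τ.symm (tpv hn) : ℕ) = (σ.symm (tpv hn) : ℕ) := by
      rw [← hcardσ, ← hcardτ, heq]
    have hTcard : ((Finset.univ.erase (tpv hn)) \
        (Finset.Iio (σ.symm (tpv hn))).image σ).card
        = n - 1 - (σ.symm (tpv hn) : ℕ) := by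
      rw [Finset.card_sdiff_of_subset hsubσ, hcard_erase, hcardσ]
    have hSmem : ∀ ρ : Equiv.Perm (Fin n),
        (ρ.symm (tpv hn) : ℕ) = (σ.symm (tpv hn) : ℕ) →
        ∀ x : Fin n, x ∈ (Finset.Iio (ρ.symm (tpv hn))).image ρ ↔
          ∃ m : ℕ, ∃ hm : m < n, m < (σ.symm (tpv hn) : ℕ) ∧ ρ ⟨m, hm⟩ = x := by
      intro ρ hρk x
      constructor
      · intro hx
        obtain ⟨i', hi', he⟩ := Finset.mem_image.mp hx
        rw [Finset.mem_Iio, Fin.lt_def] at hi'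
        exact ⟨(i' : ℕ), i'.isLt, by omega, by simpa using he⟩
      · rintro ⟨m, hm, hmk, he⟩
        refine Finset.mem_image.mpr ⟨⟨m, hm⟩, ?_, he⟩
        rw [Finset.mem_Iio, Fin.lt_def]
        simp only [Fin.val_mk]
        omega
    have hTmem : ∀ x : Fin n, x ∈ (Finset.univ.erase (tpv hn)) \
        (Finset.Iio (σ.symm (tpv hn))).image σ ↔
        (x ∉ (Finset.Iio (σ.symm (tpv hn))).image σ ∧ (x : ℕ) ≠ n - 1) := by
      intro x
      rw [Finset.mem_sdiff, Finset.mem_erase]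
      constructor
      · rintro ⟨⟨h1, _⟩, h2⟩
        exact ⟨h2, fun hv => h1 (Fin.ext (by simpa [tpv] using hv))⟩
      · rintro ⟨h1, h2⟩
        exact ⟨⟨fun hv => h2 (by rw [hv]; rfl), Finset.mem_univ _⟩, h1⟩
    have hdσ := struct_desc hn σ hσ (k := (σ.symm (tpv hn) : ℕ)) hjltσ hiffσ
      hcardσ (hSmem σ rfl) hTcard hTmem
    have hdτ := struct_desc hn τ hτ (k := (σ.symm (tpv hn) : ℕ)) hjltσ
      (fun i => by rw [hiffτ i, hkτ])
      (S := (Finset.Iio (σ.symm (tpv hn))).image σ) hcardσ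
      (fun x => by rw [heq]; exact hSmem τ hkτ x)
      (T := (Finset.univ.erase (tpv hn)) \
        (Finset.Iio (σ.symm (tpv hn))).image σ) hTcard hTmem
    exact Equiv.ext fun i => by rw [hdσ i, hdτ i]
  · -- surjective
    intro S hSB
    rw [Finset.mem_erase, Finset.mem_powerset] at hSB
    obtain ⟨hSne, hSsub⟩ := hSB
    have hklt : S.card < n - 1 := by
      rw [← hcard_erase]
      exact Finset.card_lt_card (Finset.ssubset_iff_subset_ne.mpr ⟨hSsub, hSne⟩)
    have hkn : S.card + 1 < n := by omega
    have hTcard : ((Finset.univ.erase (tpv hn)) \ S).card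
        = n - 1 - S.card := by
      rw [Finset.card_sdiff_of_subset hSsub, hcard_erase]
    have hSnotop : ∀ x ∈ S, (x : ℕ) ≠ n - 1 := by
      intro x hx hv
      have h1 := hSsub hx
      rw [Finset.mem_erase] at h1
      exact h1.1 (Fin.ext (by simpa [tpv] using hv))
    have hTnotop : ∀ x ∈ (Finset.univ.erase (tpv hn)) \ S,
        (x : ℕ) ≠ n - 1 := by
      intro x hx hv
      rw [Finset.mem_sdiff, Finset.mem_erase] at hx
      exact hx.1.1 (Fin.ext (by simpa [tpv] using hv))
    have hTnotS : ∀ x ∈ (Finset.univ.erase (tpv hn)) \ S, x ∉ S := by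
      intro x hx
      rw [Finset.mem_sdiff] at hx
      exact hx.2
    have hval : ∀ i : Fin n,
        ((i : ℕ) < S.card ∧ buildF S _ hkn rfl hTcard i ∈ S) ∨
        ((i : ℕ) = S.card ∧ buildF S _ hkn rfl hTcard i = (tpv hn)) ∨
        ((i : ℕ) > S.card ∧ buildF S _ hkn rfl hTcard i
          ∈ (Finset.univ.erase (tpv hn)) \ S) := by
      intro i
      rcases lt_trichotomy (i : ℕ) S.card with h | h | h
      · refine Or.inl ⟨h, ?_⟩
        rw [buildF_lt hkn rfl hTcard i h]
        exact Finset.orderEmbOfFin_mem _ _ _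
      · exact Or.inr (Or.inl ⟨h, buildF_eq hkn rfl hTcard i h⟩)
      · refine Or.inr (Or.inr ⟨h, ?_⟩)
        rw [buildF_gt hkn rfl hTcard i h]
        exact Finset.orderEmbOfFin_mem _ _ _
    have hftopval : ∀ i : Fin n, (buildF S _ hkn rfl hTcard i : ℕ) = n - 1 ↔
        (i : ℕ) = S.card := by
      intro i
      constructor
      · intro h
        rcases hval i with ⟨_, hm⟩ | ⟨h2, _⟩ | ⟨_, hm⟩
        · exact absurd h (hSnotop _ hm)
        · exact h2
        · exact absurd h (hTnotop _ hm)
      · intro h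
        rw [buildF_eq hkn rfl hTcard i h]
    have hinj : Function.Injective (buildF S _ hkn rfl hTcard) := by
      intro a b hab
      have hvala := hval a
      have hvalb := hval b
      rcases hvala with ⟨ha, hma⟩ | ⟨ha, hma⟩ | ⟨ha, hma⟩ <;>
        rcases hvalb with ⟨hb, hmb⟩ | ⟨hb, hmb⟩ | ⟨hb, hmb⟩
      · rw [buildF_lt hkn rfl hTcard a ha, buildF_lt hkn rfl hTcard b hb] at hab
        have h5 := (S.orderEmbOfFin rfl).injective hab
        exact Fin.ext (by simpa using congrArg Fin.val h5)
      · exact absurd (congrArg Fin.val (hab.trans hmb)) (by simpa [tpv] using hSnotop _ hma)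
      · rw [hab] at hma
        exact absurd hma (hTnotS _ hmb)
      · exact absurd (congrArg Fin.val (hab.symm.trans hma)) (by simpa [tpv] using hSnotop _ hmb)
      · exact Fin.ext (by omega)
      · exact absurd (congrArg Fin.val (hab.symm.trans hma)) (by simpa [tpv] using hTnotop _ hmb)
      · rw [← hab] at hmb
        exact absurd hmb (hTnotS _ hma)
      · exact absurd (congrArg Fin.val (hab.trans hmb)) (by simpa [tpv] using hTnotop _ hma)
      · rw [buildF_gt hkn rfl hTcard a ha, buildF_gt hkn rfl hTcard b hb] at hab
        have h5 := congrArg Fin.val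
          ((((Finset.univ.erase (tpv hn)) \ S).orderEmbOfFin
            hTcard).injective hab)
        simp only [Fin.val_mk] at h5
        exact Fin.ext (by omega)
    have hbij : Function.Bijective (buildF S _ hkn rfl hTcard) :=
      Finite.injective_iff_bijective.mp hinj
    refine ⟨Equiv.ofBijective _ hbij, ?_, ?_⟩
    · have hσtop : ∀ i : Fin n, ((Equiv.ofBijective _ hbij) i : ℕ) = n - 1 ↔
          (i : ℕ) = S.card := hftopval
      have hstruct : Struct n (Equiv.ofBijective _ hbij) := by
        constructor
        · intro i h
          rw [hσtop i]
          show buildF S _ hkn rfl hTcard ⟨(i : ℕ) + 1, h⟩ < buildF S _ hkn rfl hTcard i ↔ _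
          constructor
          · intro hd
            by_contra hik
            rcases lt_trichotomy (i : ℕ) S.card with h1 | h1 | h1
            · by_cases h2 : (i : ℕ) + 1 < S.card
              · rw [buildF_lt hkn rfl hTcard i h1,
                  buildF_lt hkn rfl hTcard ⟨(i : ℕ) + 1, h⟩ (by simpa using h2)] at hd
                have h6 := (S.orderEmbOfFin rfl).strictMono (a := ⟨(i : ℕ), h1⟩)
                  (b := ⟨((⟨(i : ℕ) + 1, h⟩ : Fin n) : ℕ), by simpa using h2⟩)
                  (by rw [Fin.lt_def]; simp)
                exact absurd hd (asymm h6)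
              · have h3 : ((⟨(i : ℕ) + 1, h⟩ : Fin n) : ℕ) = S.card := by simp; omega
                rw [buildF_eq hkn rfl hTcard _ h3, buildF_lt hkn rfl hTcard i h1] at hd
                have hmem := Finset.orderEmbOfFin_mem S rfl ⟨(i : ℕ), h1⟩
                exact absurd hd (asymm (fin_lt_top hn _ (hSnotop _ hmem)))
            · exact hik h1
            · have h3 : ((⟨(i : ℕ) + 1, h⟩ : Fin n) : ℕ) > S.card := by simp; omega
              rw [buildF_gt hkn rfl hTcard i h1, buildF_gt hkn rfl hTcard _ h3] at hd
              have h6 := (((Finset.univ.erase (tpv hn)) \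
                  S).orderEmbOfFin hTcard).strictMono
                (a := ⟨(i : ℕ) - S.card - 1, by have := i.isLt; omega⟩)
                (b := ⟨((⟨(i : ℕ) + 1, h⟩ : Fin n) : ℕ) - S.card - 1, by
                  have := i.isLt; simp; omega⟩)
                (by rw [Fin.lt_def]; simp; omega)
              exact absurd hd (asymm h6)
          · intro hik
            rw [buildF_eq hkn rfl hTcard i hik]
            have h3 : ((⟨(i : ℕ) + 1, h⟩ : Fin n) : ℕ) > S.card := by simp; omega
            rw [buildF_gt hkn rfl hTcard _ h3]
            exact fin_lt_top hn _ (hTnotop _ (Finset.orderEmbOfFin_mem _ hTcard _))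
        · refine ⟨⟨S.card, by omega⟩, by simpa using hkn, ?_⟩
          rw [hσtop]
      simpa using (struct_char hn _).mpr hstruct
    · show (Finset.Iio ((Equiv.ofBijective _ hbij).symm (tpv hn))).image
          (Equiv.ofBijective (buildF S _ hkn rfl hTcard) hbij) = S
      have hjk : (Equiv.ofBijective _ hbij).symm (tpv hn)
          = (⟨S.card, by omega⟩ : Fin n) := by
        rw [Equiv.symm_apply_eq]
        exact (buildF_eq hkn rfl hTcard _ rfl).symm
      rw [hjk]
      apply Finset.eq_of_subset_of_card_le
      · intro x hx
        obtain ⟨i', hi', he⟩ := Finset.mem_image.mp hx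
        rw [Finset.mem_Iio, Fin.lt_def] at hi'
        have h1 : (i' : ℕ) < S.card := by simpa using hi'
        rw [← he]
        show buildF S _ hkn rfl hTcard i' ∈ S
        rw [buildF_lt hkn rfl hTcard i' h1]
        exact Finset.orderEmbOfFin_mem _ _ _
      · rw [Finset.card_image_of_injective _ (Equiv.ofBijective _ hbij).injective,
          Fin.card_Iio]

theorem stmt_9 (n : ℕ) (hn : 2 ≤ n) :
    (∑ x ∈ Finset.range 2, (-1 : ℤ) ^ (1 - x) * ((1 : ℤ) + (x : ℤ)) ^ (n - 1)
        = 2 ^ (n - 1) - 1) ∧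
    (cdes n {n} : ℤ) = 2 ^ (n - 1) - 1 := by
  constructor
  · rw [Finset.sum_range_succ, Finset.sum_range_succ, Finset.sum_range_zero]
    norm_num
    ring
  · unfold cdes
    rw [count_main hn]
    have h1 : (1 : ℕ) ≤ 2 ^ (n - 1) := Nat.one_le_two_pow
    rw [Nat.cast_sub h1]
    push_cast
    ring
end

section
/- For n ≥ 2 and S ⊆ [2,n], cdes_n(S) > 0 if S is nonempty and contained in [2,n]; moreover if 1 ∈ S then cdes_n(S) = 0. -/
lemma exists_perm_cdes (n : ℕ) (hn : 2 ≤ n) (S : Finset ℕ) (hne : S.Nonempty)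
    (hsub : S ⊆ Finset.Icc 2 n) : ∃ σ : Equiv.Perm (Fin n), cdesSet n σ = S := by
  classical
  set T : Finset (Fin n) := Finset.univ.filter (fun t => (t : ℕ) + 1 ∈ S) with hT
  have hmemT : ∀ t : Fin n, t ∈ T ↔ (t : ℕ) + 1 ∈ S := by
    intro t; simp [hT]
  have hS1 : (1 : ℕ) ∉ S := by
    intro h
    have := hsub h
    rw [Finset.mem_Icc] at this
    omega
  have h0T : (⟨0, by omega⟩ : Fin n) ∉ T := by
    rw [hmemT]; simpa using hS1
  have hTne : T.Nonempty := by
    obtain ⟨v, hv⟩ := hne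
    have hv' := hsub hv
    rw [Finset.mem_Icc] at hv'
    refine ⟨⟨v - 1, by omega⟩, (hmemT _).mpr ?_⟩
    have : v - 1 + 1 = v := by omega
    rw [this]; exact hv
  have hk1 : 1 ≤ T.card := Finset.card_pos.mpr hTne
  have hkn : T.card < n := by
    have : T.card < Fintype.card (Fin n) := Finset.card_lt_card
      (Finset.ssubset_univ_iff.mpr (fun h => h0T (h ▸ Finset.mem_univ _)))
    simpa using this
  have hccompl : Tᶜ.card = n - T.card := by
    simp [Finset.card_compl]
  let e := T.orderIsoOfFin rfl
  let e' := Tᶜ.orderIsoOfFin hccompl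
  let f : Fin n → Fin n := fun i =>
    if h : (i : ℕ) < T.card then (e ⟨T.card - 1 - i, by omega⟩ : Fin n)
    else (e' ⟨(i : ℕ) - T.card, by have := i.isLt; omega⟩ : Fin n)
  have hf1 : ∀ (i : Fin n) (h : (i : ℕ) < T.card),
      f i = (e ⟨T.card - 1 - i, by omega⟩ : Fin n) := by
    intro i h; simp only [f, dif_pos h]
  have hf2 : ∀ (i : Fin n) (h : ¬ (i : ℕ) < T.card),
      f i = (e' ⟨(i : ℕ) - T.card, by have := i.isLt; omega⟩ : Fin n) := by
    intro i h; simp only [f, dif_neg h]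
  have hfT : ∀ i : Fin n, ((i : ℕ) < T.card ↔ f i ∈ T) := by
    intro i
    constructor
    · intro h; rw [hf1 i h]; exact (e _).2
    · intro h
      by_contra hc
      rw [hf2 i hc] at h
      exact (Finset.mem_compl.mp (e' _).2) h
  have hE : ∀ a b : Fin T.card, a < b → ((e a : Fin n) : ℕ) < ((e b : Fin n) : ℕ) := by
    intro a b h
    have := e.strictMono h
    exact this
  have hE' : ∀ a b : Fin (n - T.card), a < b → ((e' a : Fin n) : ℕ) < ((e' b : Fin n) : ℕ) := by
    intro a b h
    have := e'.strictMono h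
    exact this
  have hinj : Function.Injective f := by
    intro i j hij
    by_cases hi : (i : ℕ) < T.card <;> by_cases hj : (j : ℕ) < T.card
    · rw [hf1 i hi, hf1 j hj] at hij
      have h2 := e.injective (Subtype.ext hij)
      have h3 : T.card - 1 - (i : ℕ) = T.card - 1 - (j : ℕ) := congrArg Fin.val h2
      exact Fin.ext (by omega)
    · exact absurd ((hfT j).mpr (hij ▸ (hfT i).mp hi)) hj
    · exact absurd ((hfT i).mpr (hij ▸ (hfT j).mp hj)) hi
    · rw [hf2 i hi, hf2 j hj] at hij
      have h2 := e'.injective (Subtype.ext hij)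
      have h3 : (i : ℕ) - T.card = (j : ℕ) - T.card := congrArg Fin.val h2
      push_neg at hi hj
      exact Fin.ext (by omega)
  let σ : Equiv.Perm (Fin n) := Equiv.ofBijective f (Finite.injective_iff_bijective.mp hinj)
  have hσ : ∀ i, σ i = f i := fun i => rfl
  have hnk1 : 1 ≤ n - T.card := by omega
  have h0c : (⟨0, by omega⟩ : Fin n) ∈ Tᶜ := Finset.mem_compl.mpr h0T
  have he'0 : ((e' ⟨0, by omega⟩ : Fin n) : ℕ) = 0 := by
    obtain ⟨j, hj⟩ := e'.surjective ⟨_, h0c⟩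
    have hle : (⟨0, by omega⟩ : Fin (n - T.card)) ≤ j := by
      simp [Fin.le_def]
    have := e'.monotone hle
    rw [hj] at this
    have h2 : ((e' ⟨0, by omega⟩ : Fin n) : ℕ) ≤ 0 := this
    omega
  -- descent characterization
  have hdes : ∀ i : Fin n, isCDesB σ i = true ↔ (i : ℕ) < T.card := by
    intro i
    rw [isCDesB]
    by_cases h : (i : ℕ) + 1 < n
    · rw [dif_pos h, decide_eq_true_iff]
      constructor
      · intro hlt
        by_contra hik
        have h2 : ¬ ((⟨(i : ℕ) + 1, h⟩ : Fin n) : ℕ) < T.card := by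
          simp only [Fin.val_mk]; omega
        rw [hσ, hσ, hf2 _ hik, hf2 _ h2] at hlt
        have := hE' ⟨(i : ℕ) - T.card, by have := i.isLt; omega⟩
          ⟨((⟨(i : ℕ) + 1, h⟩ : Fin n) : ℕ) - T.card, by omega⟩
          (by rw [Fin.lt_def]; simp only [Fin.val_mk]; omega)
        rw [Fin.lt_def] at hlt
        omega
      · intro hik
        rw [hσ, hσ, hf1 i hik, Fin.lt_def]
        by_cases h2 : (i : ℕ) + 1 < T.card
        · rw [hf1 _ (show ((⟨(i : ℕ) + 1, h⟩ : Fin n) : ℕ) < T.card from h2)]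
          have := hE ⟨T.card - 1 - ((⟨(i : ℕ) + 1, h⟩ : Fin n) : ℕ), by omega⟩
            ⟨T.card - 1 - (i : ℕ), by omega⟩
            (by rw [Fin.lt_def]; simp only [Fin.val_mk]; omega)
          exact this
        · rw [hf2 _ (show ¬ ((⟨(i : ℕ) + 1, h⟩ : Fin n) : ℕ) < T.card from h2)]
          have hidx : (⟨((⟨(i : ℕ) + 1, h⟩ : Fin n) : ℕ) - T.card, by
              have := (⟨(i : ℕ) + 1, h⟩ : Fin n).isLt; omega⟩ : Fin (n - T.card))
              = ⟨0, by omega⟩ := by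
            apply Fin.ext; simp only [Fin.val_mk]; omega
          rw [hidx, he'0]
          -- need 0 < e ⟨T.card - 1 - i⟩
          have hmem := (e ⟨T.card - 1 - (i : ℕ), by omega⟩).2
          have hne0 : ((e ⟨T.card - 1 - (i : ℕ), by omega⟩ : Fin n) : ℕ) ≠ 0 := by
            intro hz
            apply h0T
            have : ((e ⟨T.card - 1 - (i : ℕ), by omega⟩ : Fin n)) = ⟨0, by omega⟩ :=
              Fin.ext hz
            rw [← this]
            exact hmem
          omega
    · rw [dif_neg h]
      have := i.isLt
      simp only [Bool.false_eq_true, false_iff]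
      omega
  obtain ⟨i0, hi0⟩ := hTne
  refine ⟨σ, ?_⟩
  ext x
  simp only [cdesSet, Finset.mem_image, Finset.mem_filter, Finset.mem_univ, true_and]
  constructor
  · rintro ⟨i, hi, rfl⟩
    rw [hdes i] at hi
    rw [hσ, hf1 i hi]
    exact (hmemT _).mp (e _).2
  · intro hx
    have hx' := hsub hx
    rw [Finset.mem_Icc] at hx'
    have ht : (⟨x - 1, by omega⟩ : Fin n) ∈ T := by
      rw [hmemT]
      have : x - 1 + 1 = x := by omega
      rw [this]; exact hx
    obtain ⟨j, hj⟩ := e.surjective ⟨_, ht⟩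
    have hjlt : (j : ℕ) < T.card := j.isLt
    refine ⟨⟨T.card - 1 - (j : ℕ), by omega⟩, ?_, ?_⟩
    · rw [hdes]; simp only [Fin.val_mk]; omega
    · rw [hσ, hf1 _ (show ((⟨T.card - 1 - (j : ℕ), by omega⟩ : Fin n) : ℕ) < T.card by
        simp only [Fin.val_mk]; omega)]
      have hidx : (⟨T.card - 1 - ((⟨T.card - 1 - (j : ℕ), by omega⟩ : Fin n) : ℕ), by omega⟩
          : Fin T.card) = j := by
        apply Fin.ext; simp only [Fin.val_mk]; omega
      rw [hidx, hj]
      simp only [Fin.val_mk]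
      omega

theorem stmt_10 (n : ℕ) (hn : 2 ≤ n) (S : Finset ℕ) :
    (S.Nonempty → S ⊆ Finset.Icc 2 n → 0 < cdes n S) ∧ (1 ∈ S → cdes n S = 0) := by
  constructor
  · intro hne hsub
    obtain ⟨σ, hσ⟩ := exists_perm_cdes n hn S hne hsub
    rw [cdes, Finset.card_pos]
    exact ⟨σ, Finset.mem_filter.mpr ⟨Finset.mem_univ _, hσ⟩⟩
  · intro h1
    rw [cdes, Finset.card_eq_zero, Finset.filter_eq_empty_iff]
    intro σ _
    intro hEq
    rw [← hEq] at h1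
    simp only [cdesSet, Finset.mem_image, Finset.mem_filter, Finset.mem_univ, true_and] at h1
    obtain ⟨i, hdes, hval⟩ := h1
    have h0 : (σ i : ℕ) = 0 := by omega
    rw [isCDesB] at hdes
    split at hdes
    · rw [decide_eq_true_iff, Fin.lt_def] at hdes
      omega
    · simp at hdes
end

section
/- For a permutation σ of [n] with |σ^{-1}(i) − σ^{-1}(i−1)| ≥ 2 and i ∈ CDES(σ), i−1 ∉ CDES(σ), the permutation τ obtained by swapping the values i and i−1 in σ satisfies CDES(τ) = CDES(σ) ∪ {i−1} \ {i}. -/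
theorem stmt_15 (n i : ℕ) (h2 : 2 ≤ i) (hin : i ≤ n)
    (σ : Equiv.Perm (Fin n))
    (hdes : i ∈ cdesSet n σ) (hnotdes : i - 1 ∉ cdesSet n σ)
    (hfar : 2 ≤ Nat.dist (σ⁻¹ ⟨i - 1, by omega⟩ : Fin n) (σ⁻¹ ⟨i - 2, by omega⟩ : Fin n)) :
    cdesSet n (Equiv.swap (⟨i - 1, by omega⟩ : Fin n) (⟨i - 2, by omega⟩ : Fin n) * σ) =
      insert (i - 1) ((cdesSet n σ).erase i) := by
  have hn1 : i - 1 < n := by omega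
  have hn2 : i - 2 < n := by omega
  set a : Fin n := ⟨i - 1, hn1⟩
  set b : Fin n := ⟨i - 2, hn2⟩
  have h1 : (a : ℕ) = i - 1 := rfl
  have h1' : (b : ℕ) = i - 2 := rfl
  -- the pair a, b never occurs adjacently in σ
  have hadj : ∀ j k : Fin n, (k : ℕ) = (j : ℕ) + 1 →
      ¬(σ j = a ∧ σ k = b) ∧ ¬(σ j = b ∧ σ k = a) := by
    intro j k hk
    have hd : 2 ≤ Nat.dist (σ⁻¹ a : Fin n) (σ⁻¹ b : Fin n) := hfar
    constructor
    · rintro ⟨hh1, hh2⟩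
      have e1 : σ⁻¹ a = j := by rw [← hh1]; simp
      have e2 : σ⁻¹ b = k := by rw [← hh2]; simp
      rw [e1, e2] at hd
      simp [Nat.dist] at hd; omega
    · rintro ⟨hh1, hh2⟩
      have e1 : σ⁻¹ b = j := by rw [← hh1]; simp
      have e2 : σ⁻¹ a = k := by rw [← hh2]; simp
      rw [e1, e2] at hd
      simp [Nat.dist] at hd; omega
  -- descent positions are unchanged
  have hswap : ∀ j : Fin n, isCDesB (Equiv.swap a b * σ) j = isCDesB σ j := by
    intro j
    simp only [isCDesB]
    by_cases h : (j : ℕ) + 1 < n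
    · simp only [dif_pos h, decide_eq_decide]
      set k : Fin n := ⟨(j : ℕ) + 1, h⟩ with hk
      have huv : σ k ≠ σ j := by
        intro he
        have := σ.injective he
        rw [Fin.ext_iff] at this
        simp [hk] at this
      obtain ⟨hab1, hab2⟩ := hadj j k rfl
      simp only [Equiv.Perm.mul_apply, Equiv.swap_apply_def]
      set u := σ j with hu
      set v := σ k with hv
      clear_value u v
      clear hfar hadj hu hv hk
      rw [Ne, ← Fin.val_eq_val] at huv
      rw [not_and] at hab1 hab2
      split_ifs with e1 e2 e3 e4 <;> simp only [Fin.lt_def] <;> omega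
    · simp [dif_neg h]
  -- extract witnesses from hdes / hnotdes
  simp only [cdesSet, Finset.mem_image, Finset.mem_filter, Finset.mem_univ, true_and]
    at hdes hnotdes
  obtain ⟨p, hp, hpv⟩ := hdes
  have hpa : σ p = a := by rw [Fin.ext_iff, h1]; omega
  have hnb : ∀ j : Fin n, isCDesB σ j = true → σ j ≠ b := by
    intro j hj he
    exact hnotdes ⟨j, hj, by rw [he, h1']; omega⟩
  -- main extensionality argument
  ext x
  simp only [cdesSet, Finset.mem_image, Finset.mem_filter, Finset.mem_univ, true_and,
    Finset.mem_insert, Finset.mem_erase]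
  constructor
  · rintro ⟨j, hj, hval⟩
    rw [hswap j] at hj
    rcases eq_or_ne (σ j) a with he | hea
    · left
      rw [Equiv.Perm.mul_apply, he, Equiv.swap_apply_left] at hval
      rw [← hval, h1']; omega
    · rcases eq_or_ne (σ j) b with he | heb
      · exact absurd he (hnb j hj)
      · right
        rw [Equiv.Perm.mul_apply, Equiv.swap_apply_of_ne_of_ne hea heb] at hval
        refine ⟨?_, j, hj, hval⟩
        intro hx
        apply hea
        rw [Fin.ext_iff, h1]; omega
  · rintro (hx | ⟨hxi, j, hj, hval⟩)
    · refine ⟨p, by rw [hswap p]; exact hp, ?_⟩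
      rw [Equiv.Perm.mul_apply, hpa, Equiv.swap_apply_left, h1', hx]; omega
    · have hea : σ j ≠ a := by
        intro he
        apply hxi
        rw [← hval, he, h1]; omega
      have heb : σ j ≠ b := hnb j hj
      exact ⟨j, by rw [hswap j]; exact hj,
        by rw [Equiv.Perm.mul_apply, Equiv.swap_apply_of_ne_of_ne hea heb]; exact hval⟩
end

section
/- For n ≥ 2, the number of permutations of [n] with circular descent set S equals the number of permutations of [n] with non-weak excedance bottom set S, for every S ⊆ [2,n]. -/
/-- The non-weak excedance bottom set of `σ`, as a set of 1-based positions. -/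
def nwexbSet (n : ℕ) (σ : Equiv.Perm (Fin n)) : Finset ℕ :=
  (Finset.univ.filter (fun p : Fin n => σ p < p)).image (fun p : Fin n => ((p : ℕ) + 1))

def nwexb (n : ℕ) (S : Finset ℕ) : ℕ :=
  (Finset.univ.filter (fun σ : Equiv.Perm (Fin n) => nwexbSet n σ = S)).card

namespace Stmt17

variable {n : ℕ}

/-- the maximum of `w` over positions `≤ i`. -/
def mx (w : Equiv.Perm (Fin n)) (i : Fin n) : Fin n :=
  ((Finset.Iic i).image w).max'
    (Finset.Nonempty.image ⟨i, Finset.mem_Iic.2 le_rfl⟩ w)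

lemma le_mx (w : Equiv.Perm (Fin n)) {i j : Fin n} (h : j ≤ i) : w j ≤ mx w i :=
  Finset.le_max' _ _ (Finset.mem_image_of_mem w (Finset.mem_Iic.2 h))

lemma mx_mem (w : Equiv.Perm (Fin n)) (i : Fin n) :
    ∃ j ≤ i, w j = mx w i := by
  have h := Finset.max'_mem ((Finset.Iic i).image w)
    (Finset.Nonempty.image ⟨i, Finset.mem_Iic.2 le_rfl⟩ w)
  simpa [Finset.mem_image, Finset.mem_Iic, mx] using h

lemma mx_mono (w : Equiv.Perm (Fin n)) {i j : Fin n} (h : i ≤ j) : mx w i ≤ mx w j := by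
  obtain ⟨k, hk, hw⟩ := mx_mem w i
  rw [← hw]
  exact le_mx w (le_trans hk h)

lemma start_le (w : Equiv.Perm (Fin n)) (i : Fin n) : w.symm (mx w i) ≤ i := by
  obtain ⟨j, hj, hw⟩ := mx_mem w i
  rw [← hw, Equiv.symm_apply_apply]
  exact hj

lemma self_le_mx (w : Equiv.Perm (Fin n)) (i : Fin n) : w i ≤ mx w i := le_mx w le_rfl

/-- successor map on positions: cut the word before each left-to-right maximum,
making each block a cycle. -/
def sfun (w : Equiv.Perm (Fin n)) (i : Fin n) : Fin n :=
  if h : (i : ℕ) + 1 < n then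
    if w ⟨(i : ℕ) + 1, h⟩ < mx w i then ⟨(i : ℕ) + 1, h⟩ else w.symm (mx w i)
  else w.symm (mx w i)

lemma sfun_pos (w : Equiv.Perm (Fin n)) {i : Fin n} (h1 : (i : ℕ) + 1 < n)
    (h2 : w ⟨(i : ℕ) + 1, h1⟩ < mx w i) : sfun w i = ⟨(i : ℕ) + 1, h1⟩ := by
  simp [sfun, h1, h2]

lemma sfun_neg (w : Equiv.Perm (Fin n)) {i : Fin n}
    (h : ¬ ∃ h1 : (i : ℕ) + 1 < n, w ⟨(i : ℕ) + 1, h1⟩ < mx w i) :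
    sfun w i = w.symm (mx w i) := by
  unfold sfun
  split_ifs with a b
  · exact absurd ⟨a, b⟩ h
  · rfl
  · rfl

lemma sfun_inj (w : Equiv.Perm (Fin n)) : Function.Injective (sfun w) := by
  intro i j hij
  by_cases Pi : ∃ h1 : (i : ℕ) + 1 < n, w ⟨(i : ℕ) + 1, h1⟩ < mx w i
  · obtain ⟨hi1, hi2⟩ := Pi
    rw [sfun_pos w hi1 hi2] at hij
    by_cases Pj : ∃ h1 : (j : ℕ) + 1 < n, w ⟨(j : ℕ) + 1, h1⟩ < mx w j
    · obtain ⟨hj1, hj2⟩ := Pj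
      rw [sfun_pos w hj1 hj2] at hij
      have : (i : ℕ) + 1 = (j : ℕ) + 1 := congrArg Fin.val hij
      exact Fin.ext (by omega)
    · rw [sfun_neg w Pj] at hij
      -- ⟨i+1⟩ = w.symm (mx w j), so i+1 ≤ j and w ⟨i+1⟩ = mx w j
      have hle : (⟨(i : ℕ) + 1, hi1⟩ : Fin n) ≤ j := hij ▸ start_le w j
      have hij' : w ⟨(i : ℕ) + 1, hi1⟩ = mx w j := by
        rw [hij, Equiv.apply_symm_apply]
      have hij2 : i ≤ j := by
        have h := Fin.le_def.1 hle
        exact Fin.le_def.2 (by simp at h; omega)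
      have : mx w i ≤ mx w j := mx_mono w hij2
      rw [← hij'] at this
      exact absurd (lt_of_lt_of_le hi2 this) (lt_irrefl _)
  · rw [sfun_neg w Pi] at hij
    by_cases Pj : ∃ h1 : (j : ℕ) + 1 < n, w ⟨(j : ℕ) + 1, h1⟩ < mx w j
    · obtain ⟨hj1, hj2⟩ := Pj
      rw [sfun_pos w hj1 hj2] at hij
      have hle : (⟨(j : ℕ) + 1, hj1⟩ : Fin n) ≤ i := hij ▸ start_le w i
      have hij' : w ⟨(j : ℕ) + 1, hj1⟩ = mx w i := by
        rw [← hij, Equiv.apply_symm_apply]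
      have hij2 : j ≤ i := by
        have h := Fin.le_def.1 hle
        exact Fin.le_def.2 (by simp at h; omega)
      have : mx w j ≤ mx w i := mx_mono w hij2
      rw [← hij'] at this
      exact absurd (lt_of_lt_of_le hj2 this) (lt_irrefl _)
    · rw [sfun_neg w Pj] at hij
      have hmx : mx w i = mx w j := w.symm.injective hij
      rcases lt_trichotomy i j with h | h | h
      · exfalso
        have h1 : (i : ℕ) + 1 < n := by
          have := j.isLt; have := (Fin.lt_iff_val_lt_val.1 h); omega
        have hni : ¬ (w ⟨(i : ℕ) + 1, h1⟩ < mx w i) := fun h2 => Pi ⟨h1, h2⟩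
        have hle : w ⟨(i : ℕ) + 1, h1⟩ ≤ mx w j :=
          le_mx w (by exact Fin.mk_le_of_le_val (by have := Fin.lt_iff_val_lt_val.1 h; omega))
        rw [← hmx] at hle
        have heq : w ⟨(i : ℕ) + 1, h1⟩ = mx w i := le_antisymm hle (not_lt.1 hni)
        have : (⟨(i : ℕ) + 1, h1⟩ : Fin n) = w.symm (mx w i) := by
          rw [← heq, Equiv.symm_apply_apply]
        have h2 := this ▸ start_le w i
        have := Fin.le_iff_val_le_val.1 h2
        simp at this
      · exact h
      · exfalso
        have h1 : (j : ℕ) + 1 < n := by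
          have := i.isLt; have := (Fin.lt_iff_val_lt_val.1 h); omega
        have hni : ¬ (w ⟨(j : ℕ) + 1, h1⟩ < mx w j) := fun h2 => Pj ⟨h1, h2⟩
        have hle : w ⟨(j : ℕ) + 1, h1⟩ ≤ mx w i :=
          le_mx w (by exact Fin.mk_le_of_le_val (by have := Fin.lt_iff_val_lt_val.1 h; omega))
        rw [hmx] at hle
        have heq : w ⟨(j : ℕ) + 1, h1⟩ = mx w j := le_antisymm hle (not_lt.1 hni)
        have : (⟨(j : ℕ) + 1, h1⟩ : Fin n) = w.symm (mx w j) := by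
          rw [← heq, Equiv.symm_apply_apply]
        have h2 := this ▸ start_le w j
        have := Fin.le_iff_val_le_val.1 h2
        simp at this

noncomputable def sPerm (w : Equiv.Perm (Fin n)) : Equiv.Perm (Fin n) :=
  Equiv.ofBijective (sfun w) (Finite.injective_iff_bijective.mp (sfun_inj w))

/-- Foata-style bijection. -/
noncomputable def F (w : Equiv.Perm (Fin n)) : Equiv.Perm (Fin n) :=
  w.symm.trans ((sPerm w).trans w)

lemma F_apply (w : Equiv.Perm (Fin n)) (i : Fin n) : F w (w i) = w (sfun w i) := by
  simp [F, sPerm, Equiv.trans_apply, Equiv.symm_apply_apply, Equiv.ofBijective_apply]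

/-- key pointwise fact: circular descent positions of `w` = positions `i` with
`F w (w i) < w i`. -/
lemma key (w : Equiv.Perm (Fin n)) (i : Fin n) :
    w (sfun w i) < w i ↔ isCDesB w i = true := by
  by_cases h1 : (i : ℕ) + 1 < n
  · by_cases h2 : w ⟨(i : ℕ) + 1, h1⟩ < mx w i
    · rw [sfun_pos w h1 h2]
      simp [isCDesB, h1]
    · rw [sfun_neg w (fun ⟨a, b⟩ => h2 b)]
      rw [Equiv.apply_symm_apply]
      simp only [isCDesB, h1, dif_pos, decide_eq_true_eq]
      constructor
      · intro h
        exact absurd h (not_lt.2 (self_le_mx w i))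
      · intro h
        exact absurd (lt_of_lt_of_le h (self_le_mx w i)) h2
  · rw [sfun_neg w (fun ⟨a, b⟩ => h1 a)]
    rw [Equiv.apply_symm_apply]
    simp only [isCDesB, h1, dif_neg]
    constructor
    · intro h
      exact absurd h (not_lt.2 (self_le_mx w i))
    · intro h
      exact absurd h (by simp)

lemma cdes_eq (w : Equiv.Perm (Fin n)) : cdesSet n w = nwexbSet n (F w) := by
  ext x
  simp only [cdesSet, nwexbSet, Finset.mem_image, Finset.mem_filter, Finset.mem_univ, true_and]
  constructor
  · rintro ⟨i, hi, rfl⟩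
    exact ⟨w i, by rw [F_apply]; exact (key w i).2 hi, rfl⟩
  · rintro ⟨p, hp, rfl⟩
    refine ⟨w.symm p, ?_, by rw [Equiv.apply_symm_apply]⟩
    have : F w (w (w.symm p)) < w (w.symm p) := by rw [Equiv.apply_symm_apply]; exact hp
    rw [F_apply] at this
    exact (key w _).1 this

lemma F_inj : Function.Injective (F (n := n)) := by
  intro w w' hF
  have main : ∀ m : ℕ, ∀ j : Fin n, n ≤ (j : ℕ) + m → w j = w' j := by
    intro m
    induction m with
    | zero => intro j hj; exact absurd j.isLt (by omega)
    | succ m ih =>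
      intro j hj
      have hgt : ∀ k : Fin n, j < k → w k = w' k := by
        intro k hk
        exact ih k (by have := Fin.lt_iff_val_lt_val.1 hk; omega)
      -- images over Ioi j agree
      have himg : (Finset.Ioi j).image w = (Finset.Ioi j).image w' :=
        Finset.image_congr (fun x hx => hgt x (Finset.mem_Ioi.1 hx))
      -- images over Iic j agree
      have hIic : ∀ v : Equiv.Perm (Fin n), (Finset.Iic j).image v =
          Finset.univ \ (Finset.Ioi j).image v := by
        intro v
        ext x
        simp only [Finset.mem_image, Finset.mem_Iic, Finset.mem_sdiff, Finset.mem_univ,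
          true_and, Finset.mem_Ioi]
        constructor
        · rintro ⟨a, ha, rfl⟩
          rintro ⟨b, hb, hvb⟩
          have : a = b := v.injective hvb.symm
          subst this
          exact absurd ha (not_le.2 hb)
        · intro hx
          refine ⟨v.symm x, ?_, Equiv.apply_symm_apply v x⟩
          by_contra hc
          exact hx ⟨v.symm x, not_le.1 hc, Equiv.apply_symm_apply v x⟩
      have hIic' : (Finset.Iic j).image w = (Finset.Iic j).image w' := by
        rw [hIic w, hIic w', himg]
      -- hence the running maxima agree
      have hmx : mx w j = mx w' j := by
        apply le_antisymm
        · apply Finset.le_max'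
          rw [← hIic']
          exact Finset.max'_mem _ _
        · apply Finset.le_max'
          rw [hIic']
          exact Finset.max'_mem _ _
      -- main step
      by_cases h1 : (j : ℕ) + 1 < n
      · have hw1 : w ⟨(j : ℕ) + 1, h1⟩ = w' ⟨(j : ℕ) + 1, h1⟩ :=
          hgt _ (Fin.lt_iff_val_lt_val.2 (by simp))
        by_cases h2 : w ⟨(j : ℕ) + 1, h1⟩ < mx w j
        · have h2' : w' ⟨(j : ℕ) + 1, h1⟩ < mx w' j := by rw [← hw1, ← hmx]; exact h2
          have e1 : F w (w j) = w ⟨(j : ℕ) + 1, h1⟩ := by rw [F_apply, sfun_pos w h1 h2]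
          have e2 : F w' (w' j) = w' ⟨(j : ℕ) + 1, h1⟩ := by rw [F_apply, sfun_pos w' h1 h2']
          apply (F w).injective
          rw [e1, hF, e2, hw1]
        · have h2' : ¬ (w' ⟨(j : ℕ) + 1, h1⟩ < mx w' j) := by rw [← hw1, ← hmx]; exact h2
          have e1 : F w (w j) = mx w j := by
            rw [F_apply, sfun_neg w (fun ⟨a, b⟩ => h2 b), Equiv.apply_symm_apply]
          have e2 : F w' (w' j) = mx w' j := by
            rw [F_apply, sfun_neg w' (fun ⟨a, b⟩ => h2' b), Equiv.apply_symm_apply]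
          apply (F w).injective
          rw [e1, hF, e2, hmx]
      · have e1 : F w (w j) = mx w j := by
          rw [F_apply, sfun_neg w (fun ⟨a, b⟩ => h1 a), Equiv.apply_symm_apply]
        have e2 : F w' (w' j) = mx w' j := by
          rw [F_apply, sfun_neg w' (fun ⟨a, b⟩ => h1 a), Equiv.apply_symm_apply]
        apply (F w).injective
        rw [e1, hF, e2, hmx]
  ext j
  exact congrArg Fin.val (main n j (by omega))

lemma F_surj : Function.Surjective (F (n := n)) :=
  Finite.injective_iff_surjective.mp F_inj

end Stmt17

theorem stmt_17 (n : ℕ) (hn : 2 ≤ n) (S : Finset ℕ) (hS : S ⊆ Finset.Icc 2 n) :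
    cdes n S = nwexb n S := by
  classical
  unfold cdes nwexb
  apply Finset.card_bij (fun w _ => Stmt17.F w)
  · intro w hw
    simp only [Finset.mem_filter, Finset.mem_univ, true_and] at *
    rw [← Stmt17.cdes_eq]
    exact hw
  · intro a _ b _ h
    exact Stmt17.F_inj h
  · intro σ hσ
    obtain ⟨w, rfl⟩ := Stmt17.F_surj σ
    simp only [Finset.mem_filter, Finset.mem_univ, true_and] at hσ ⊢
    exact ⟨w, by rw [Stmt17.cdes_eq]; exact hσ, rfl⟩
end

section
/- For n ≥ 2 and nonempty S = {s_1 > ... > s_k} ⊆ [2,n], cdes_n(S) ≤ Π_{i=1}^{k} (1+i)^{d_i} where d_i = s_i − s_{i+1} for i < k and d_k = s_k − 1. -/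
def bigBefore {n : ℕ} (σ : Equiv.Perm (Fin n)) (x : Fin n) : Finset (Fin n) :=
  Finset.univ.filter (fun p => p < σ.symm x ∧ x < σ p)

def code {n k : ℕ} (s : Fin k → ℕ) (σ : Equiv.Perm (Fin n)) (x : Fin n) : ℕ :=
  if h : (bigBefore σ x).Nonempty then
    (Finset.univ.filter (fun m : Fin k =>
      (x : ℕ) + 1 < s m ∧ s m ≤ (σ ((bigBefore σ x).max' h) : ℕ) + 1)).card
  else 0

lemma bigBefore_max'_mem {n : ℕ} (σ : Equiv.Perm (Fin n)) (x : Fin n)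
    (h : (bigBefore σ x).Nonempty) :
    (bigBefore σ x).max' h < σ.symm x ∧ x < σ ((bigBefore σ x).max' h) := by
  have := (bigBefore σ x).max'_mem h
  simp only [bigBefore, Finset.mem_filter, Finset.mem_univ, true_and] at this
  exact this

lemma bigBefore_top_mem {n : ℕ} (σ : Equiv.Perm (Fin n)) (x : Fin n)
    (h : (bigBefore σ x).Nonempty) :
    ((σ ((bigBefore σ x).max' h) : ℕ) + 1) ∈ cdesSet n σ := by
  obtain ⟨hplt, hxlt⟩ := bigBefore_max'_mem σ x h
  set p := (bigBefore σ x).max' h with hp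
  have h1 : (p : ℕ) + 1 < n := by
    have := (σ.symm x).isLt
    rw [Fin.lt_def] at hplt
    omega
  have hq : σ ⟨(p : ℕ) + 1, h1⟩ < σ p := by
    by_cases hqx : (⟨(p : ℕ) + 1, h1⟩ : Fin n) = σ.symm x
    · rw [hqx, Equiv.apply_symm_apply]; exact hxlt
    · have hqlt : (⟨(p : ℕ) + 1, h1⟩ : Fin n) < σ.symm x := by
        rw [Fin.lt_def] at hplt ⊢
        simp only []
        rcases Nat.lt_or_ge ((p : ℕ) + 1) ((σ.symm x : ℕ)) with h' | h'
        · exact h'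
        · exfalso; exact hqx (Fin.ext (by simp only [Fin.val_mk]; omega))
      have hnot : (⟨(p : ℕ) + 1, h1⟩ : Fin n) ∉ bigBefore σ x := by
        intro hmem
        have := Finset.le_max' _ _ hmem
        rw [← hp, Fin.le_def] at this
        simp at this
      simp only [bigBefore, Finset.mem_filter, Finset.mem_univ, true_and, not_and] at hnot
      have h2 := hnot hqlt
      have h3 : σ ⟨(p : ℕ) + 1, h1⟩ ≠ x := by
        intro hEq
        apply hqx
        have := congrArg σ.symm hEq
        simpa using this
      exact lt_trans (lt_of_le_of_ne (not_lt.mp h2) h3) hxlt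
  apply Finset.mem_image.mpr
  refine ⟨p, ?_, rfl⟩
  rw [Finset.mem_filter]
  refine ⟨Finset.mem_univ _, ?_⟩
  unfold isCDesB
  rw [dif_pos h1]
  exact decide_eq_true hq

lemma code_pos {n k : ℕ} (s : Fin k → ℕ) (S : Finset ℕ) (hS : S = Finset.image s Finset.univ)
    (σ : Equiv.Perm (Fin n)) (hσ : cdesSet n σ = S) (x : Fin n)
    (h : (bigBefore σ x).Nonempty) : 0 < code s σ x := by
  rw [code, dif_pos h]
  have hmem := bigBefore_top_mem σ x h
  rw [hσ, hS, Finset.mem_image] at hmem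
  obtain ⟨m, -, hm⟩ := hmem
  apply Finset.card_pos.mpr
  refine ⟨m, Finset.mem_filter.mpr ⟨Finset.mem_univ _, ?_, ?_⟩⟩
  · have hxlt := (bigBefore_max'_mem σ x h).2
    rw [Fin.lt_def] at hxlt
    omega
  · omega

lemma code_le {n k : ℕ} (s : Fin k → ℕ) (σ : Equiv.Perm (Fin n)) (x : Fin n) :
    code s σ x ≤ (Finset.univ.filter (fun m : Fin k => (x : ℕ) + 1 < s m)).card := by
  rw [code]
  split
  · apply Finset.card_le_card
    intro m hm
    rw [Finset.mem_filter] at hm ⊢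
    exact ⟨hm.1, hm.2.1⟩
  · exact Nat.zero_le _

lemma flip_iff {α β : Type*} [LinearOrder α] [LinearOrder β] {p q : α} {r s : β}
    (hpq : p ≠ q) (hrs : r ≠ s) (hiff : q < p ↔ s < r) : p < q ↔ r < s := by
  constructor
  · intro hlt
    rcases hrs.lt_or_gt with h' | h'
    · exact h'
    · exact absurd (hiff.mpr h') (not_lt.mpr hlt.le)
  · intro hlt
    rcases hpq.lt_or_gt with h' | h'
    · exact h'
    · exact absurd (hiff.mp h') (not_lt.mpr hlt.le)

lemma top_eq {n k : ℕ} (s : Fin k → ℕ) (S : Finset ℕ) (hS : S = Finset.image s Finset.univ)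
    (σ τ : Equiv.Perm (Fin n)) (hσ : cdesSet n σ = S) (hτ : cdesSet n τ = S)
    (x : Fin n) (h1 : (bigBefore σ x).Nonempty) (h2 : (bigBefore τ x).Nonempty)
    (hc : code s σ x = code s τ x) :
    σ ((bigBefore σ x).max' h1) = τ ((bigBefore τ x).max' h2) := by
  set a := σ ((bigBefore σ x).max' h1) with ha
  set b := τ ((bigBefore τ x).max' h2) with hb
  have hxa : x < a := (bigBefore_max'_mem σ x h1).2
  have hxb : x < b := (bigBefore_max'_mem τ x h2).2
  have hma : ∃ m : Fin k, s m = (a : ℕ) + 1 := by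
    have := bigBefore_top_mem σ x h1
    rw [hσ, hS, Finset.mem_image] at this
    obtain ⟨m, -, hm⟩ := this
    exact ⟨m, hm⟩
  have hmb : ∃ m : Fin k, s m = (b : ℕ) + 1 := by
    have := bigBefore_top_mem τ x h2
    rw [hτ, hS, Finset.mem_image] at this
    obtain ⟨m, -, hm⟩ := this
    exact ⟨m, hm⟩
  obtain ⟨m1, hm1⟩ := hma
  obtain ⟨m2, hm2⟩ := hmb
  rw [code, dif_pos h1, code, dif_pos h2, ← ha, ← hb] at hc
  have key : ∀ (u v : ℕ), u < v → ((x:ℕ) < v) → (∀ m : Fin k, s m = v + 1) →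
      True := fun _ _ _ _ _ => trivial
  -- show (a : ℕ) = (b : ℕ)
  have hab : (a : ℕ) = (b : ℕ) := by
    rcases lt_trichotomy (a : ℕ) (b : ℕ) with hlt | hEq | hlt
    · exfalso
      have hsub : (Finset.univ.filter (fun m : Fin k => (x:ℕ)+1 < s m ∧ s m ≤ (a:ℕ)+1)) ⊆
          (Finset.univ.filter (fun m : Fin k => (x:ℕ)+1 < s m ∧ s m ≤ (b:ℕ)+1)) := by
        intro m hm
        rw [Finset.mem_filter] at hm ⊢
        exact ⟨hm.1, hm.2.1, by omega⟩
      have hmem : m2 ∈ (Finset.univ.filter (fun m : Fin k => (x:ℕ)+1 < s m ∧ s m ≤ (b:ℕ)+1)) := by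
        rw [Finset.mem_filter]
        have := Fin.lt_def.mp hxb
        exact ⟨Finset.mem_univ _, by omega, by omega⟩
      have hnot : m2 ∉ (Finset.univ.filter (fun m : Fin k => (x:ℕ)+1 < s m ∧ s m ≤ (a:ℕ)+1)) := by
        rw [Finset.mem_filter]
        push_neg
        intro _ _
        omega
      have := Finset.card_lt_card ((Finset.ssubset_iff_of_subset hsub).mpr ⟨m2, hmem, hnot⟩)
      omega
    · exact hEq
    · exfalso
      have hsub : (Finset.univ.filter (fun m : Fin k => (x:ℕ)+1 < s m ∧ s m ≤ (b:ℕ)+1)) ⊆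
          (Finset.univ.filter (fun m : Fin k => (x:ℕ)+1 < s m ∧ s m ≤ (a:ℕ)+1)) := by
        intro m hm
        rw [Finset.mem_filter] at hm ⊢
        exact ⟨hm.1, hm.2.1, by omega⟩
      have hmem : m1 ∈ (Finset.univ.filter (fun m : Fin k => (x:ℕ)+1 < s m ∧ s m ≤ (a:ℕ)+1)) := by
        rw [Finset.mem_filter]
        have := Fin.lt_def.mp hxa
        exact ⟨Finset.mem_univ _, by omega, by omega⟩
      have hnot : m1 ∉ (Finset.univ.filter (fun m : Fin k => (x:ℕ)+1 < s m ∧ s m ≤ (b:ℕ)+1)) := by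
        rw [Finset.mem_filter]
        push_neg
        intro _ _
        omega
      have := Finset.card_lt_card ((Finset.ssubset_iff_of_subset hsub).mpr ⟨m1, hmem, hnot⟩)
      omega
  exact Fin.ext hab

lemma key_step {n k : ℕ} (s : Fin k → ℕ) (S : Finset ℕ) (hS : S = Finset.image s Finset.univ)
    (σ τ : Equiv.Perm (Fin n)) (hσ : cdesSet n σ = S) (hτ : cdesSet n τ = S)
    (x b : Fin n) (hxb : x < b)
    (hcode : code s σ x = code s τ x)
    (ih : ∀ w c : Fin n, x < w → x < c → (σ.symm w < σ.symm c ↔ τ.symm w < τ.symm c)) :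
    σ.symm x < σ.symm b ↔ τ.symm x < τ.symm b := by
  have hxnb : x ≠ b := ne_of_lt hxb
  have hneσ : σ.symm x ≠ σ.symm b := fun hEq => hxnb (σ.symm.injective hEq)
  have hneτ : τ.symm x ≠ τ.symm b := fun hEq => hxnb (τ.symm.injective hEq)
  by_cases h1 : (bigBefore σ x).Nonempty
  · have h2 : (bigBefore τ x).Nonempty := by
      by_contra hemp
      have hpos := code_pos s S hS σ hσ x h1
      rw [hcode, code, dif_neg hemp] at hpos
      omega
    have htop := top_eq s S hS σ τ hσ hτ x h1 h2 hcode
    obtain ⟨hps, hxs⟩ := bigBefore_max'_mem σ x h1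
    obtain ⟨hqt, hxt⟩ := bigBefore_max'_mem τ x h2
    set p := (bigBefore σ x).max' h1 with hp
    set q := (bigBefore τ x).max' h2 with hq
    set w := σ p with hw
    have hqw : q = τ.symm w := by rw [htop, Equiv.symm_apply_apply]
    have hpw : p = σ.symm w := by rw [hw, Equiv.symm_apply_apply]
    have claimσ : σ.symm b < σ.symm x ↔ σ.symm b ≤ p := by
      constructor
      · intro hlt
        apply Finset.le_max'
        simp only [bigBefore, Finset.mem_filter, Finset.mem_univ, true_and]
        exact ⟨hlt, by simpa using hxb⟩
      · intro hle
        exact lt_of_le_of_lt hle hps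
    have claimτ : τ.symm b < τ.symm x ↔ τ.symm b ≤ q := by
      constructor
      · intro hlt
        apply Finset.le_max'
        simp only [bigBefore, Finset.mem_filter, Finset.mem_univ, true_and]
        exact ⟨hlt, by simpa using hxb⟩
      · intro hle
        exact lt_of_le_of_lt hle hqt
    have bridge : σ.symm b ≤ p ↔ τ.symm b ≤ q := by
      rw [hpw, hqw]
      have hiff := ih w b hxs hxb
      constructor
      · intro hle
        exact not_lt.mp (fun hlt => absurd (hiff.mpr hlt) (not_lt.mpr hle))
      · intro hle
        exact not_lt.mp (fun hlt => absurd (hiff.mp hlt) (not_lt.mpr hle))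
    exact flip_iff hneσ hneτ ((claimσ.trans bridge).trans claimτ.symm)
  · have h2 : ¬ (bigBefore τ x).Nonempty := by
      intro h2
      have hpos := code_pos s S hS τ hτ x h2
      rw [← hcode, code, dif_neg h1] at hpos
      omega
    have hsσ : σ.symm x < σ.symm b := by
      rcases hneσ.lt_or_gt with h' | h'
      · exact h'
      · exfalso
        apply h1
        refine ⟨σ.symm b, ?_⟩
        simp only [bigBefore, Finset.mem_filter, Finset.mem_univ, true_and]
        exact ⟨h', by simpa using hxb⟩
    have hsτ : τ.symm x < τ.symm b := by
      rcases hneτ.lt_or_gt with h' | h'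
      · exact h'
      · exfalso
        apply h2
        refine ⟨τ.symm b, ?_⟩
        simp only [bigBefore, Finset.mem_filter, Finset.mem_univ, true_and]
        exact ⟨h', by simpa using hxb⟩
    simp [hsσ, hsτ]

lemma code_inj {n k : ℕ} (s : Fin k → ℕ) (S : Finset ℕ) (hS : S = Finset.image s Finset.univ)
    (σ τ : Equiv.Perm (Fin n)) (hσ : cdesSet n σ = S) (hτ : cdesSet n τ = S)
    (h : ∀ x, code s σ x = code s τ x) : σ = τ := by
  have key : ∀ j : ℕ, ∀ a b : Fin n, n - j ≤ (a : ℕ) → n - j ≤ (b : ℕ) →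
      (σ.symm a < σ.symm b ↔ τ.symm a < τ.symm b) := by
    intro j
    induction j with
    | zero =>
      intro a b ha _
      exact absurd a.isLt (by omega)
    | succ j ih =>
      intro a b ha hb
      by_cases hav : n - (j+1) < (a : ℕ) <;> by_cases hbv : n - (j+1) < (b : ℕ)
      · exact ih a b (by omega) (by omega)
      · -- b is the minimal one, a > b
        have hba : b < a := Fin.lt_def.mpr (by omega)
        have hmain := key_step s S hS σ τ hσ hτ b a hba (h b)
          (fun w c hw hc => ih w c (by omega) (by omega))
        have hneσ : σ.symm a ≠ σ.symm b :=
          fun hEq => absurd (congrArg (fun z : Fin n => (z : ℕ)) (σ.symm.injective hEq)) (by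
            omega)
        have hneτ : τ.symm a ≠ τ.symm b :=
          fun hEq => absurd (congrArg (fun z : Fin n => (z : ℕ)) (τ.symm.injective hEq)) (by
            omega)
        exact flip_iff hneσ hneτ hmain
      · have hab : a < b := Fin.lt_def.mpr (by omega)
        exact key_step s S hS σ τ hσ hτ a b hab (h a)
          (fun w c hw hc => ih w c (by omega) (by omega))
      · have hab : a = b := Fin.ext (by omega)
        subst hab
        simp
  have hiff : ∀ a b : Fin n, σ.symm a < σ.symm b ↔ τ.symm a < τ.symm b :=
    fun a b => key n a b (by omega) (by omega)
  have hsm : StrictMono (fun p => σ.symm (τ p)) := by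
    intro p q hpq
    apply (hiff (τ p) (τ q)).mpr
    simpa using hpq
  have hid : (fun p => σ.symm (τ p)) = id := by
    apply (hsm.range_inj strictMono_id).mp
    rw [Set.range_id, Set.range_eq_univ]
    exact fun y => ⟨τ.symm (σ y), by simp⟩
  ext p
  have h2 : σ.symm (τ p) = p := congrFun hid p
  have h3 := congrArg σ h2
  have h4 : τ p = σ p := by simpa using h3
  rw [h4]

theorem stmt_19 (n k : ℕ) (hn : 2 ≤ n) (hk : 1 ≤ k)
    (s : Fin k → ℕ) (hs : StrictAnti s)
    (S : Finset ℕ) (hS : S = Finset.image s Finset.univ)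
    (hrange : ∀ i, s i ∈ Finset.Icc 2 n)
    (d : Fin k → ℕ)
    (hd : ∀ i : Fin k, d i = if h : (i : ℕ) + 1 < k then s i - s ⟨(i : ℕ) + 1, h⟩ else s i - 1) :
    cdes n S ≤ ∏ i : Fin k, (1 + ((i : ℕ) + 1)) ^ (d i) := by
  classical
  set C : ℕ → ℕ := fun v => (Finset.univ.filter (fun m : Fin k => v < s m)).card with hC
  -- Step 1 : injection
  have step1 : cdes n S ≤ ∏ x : Fin n, (C ((x : ℕ) + 1) + 1) := by
    rw [cdes]
    have hcardpi : ((Finset.univ : Finset (Fin n)).pi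
          (fun x => Finset.range (C ((x : ℕ) + 1) + 1))).card
        = ∏ x : Fin n, (C ((x : ℕ) + 1) + 1) := by
      rw [Finset.card_pi]
      exact Finset.prod_congr rfl (fun x _ => Finset.card_range _)
    rw [← hcardpi]
    apply Finset.card_le_card_of_injOn (fun σ => fun x _ => code s σ x)
    · intro σ _
      rw [Finset.mem_coe, Finset.mem_pi]
      intro x _
      rw [Finset.mem_range]
      exact Nat.lt_succ_of_le (code_le s σ x)
    · intro σ hσm τ hτm heq
      rw [Finset.mem_coe, Finset.mem_filter] at hσm hτm
      apply code_inj s S hS σ τ hσm.2 hτm.2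
      intro x
      exact congrFun (congrFun heq x) (Finset.mem_univ x)
  -- boundary function
  set t : ℕ → ℕ := fun j => if h : j < k then s ⟨j, h⟩ else 1 with hT
  have ht : ∀ j (h : j < k), t j = s ⟨j, h⟩ := by
    intro j h
    simp [hT, dif_pos h]
  have htk : ∀ j, k ≤ j → t j = 1 := by
    intro j h
    simp [hT, dif_neg (by omega : ¬ j < k)]
  have hsge : ∀ i : Fin k, 2 ≤ s i ∧ s i ≤ n := by
    intro i
    have := hrange i
    rw [Finset.mem_Icc] at this
    exact this
  have ht1 : ∀ j, 1 ≤ t j := by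
    intro j
    by_cases h : j < k
    · rw [ht j h]; have := (hsge ⟨j, h⟩).1; omega
    · rw [htk j (by omega)]
  have hmono : ∀ i j : ℕ, i ≤ j → t j ≤ t i := by
    intro i j hij
    by_cases hjk : j < k
    · rw [ht j hjk, ht i (by omega)]
      exact hs.antitone (by rw [Fin.le_def]; exact hij)
    · rw [htk j (by omega)]
      exact ht1 i
  have hCval : ∀ j (hj : j < k) (v : ℕ), t (j+1) ≤ v → v < t j → C v = j + 1 := by
    intro j hj v hv1 hv2
    have hfeq : (Finset.univ.filter (fun m : Fin k => v < s m))
        = Finset.Iic (⟨j, hj⟩ : Fin k) := by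
      ext m
      simp only [Finset.mem_filter, Finset.mem_univ, true_and, Finset.mem_Iic, Fin.le_def]
      constructor
      · intro hvm
        by_contra hmj
        have hjk1 : j + 1 < k := by omega
        have : s m ≤ s ⟨j+1, hjk1⟩ := hs.antitone (by rw [Fin.le_def]; simp; omega)
        rw [← ht (j+1) hjk1] at this
        omega
      · intro hmj
        have : s ⟨j, hj⟩ ≤ s m := hs.antitone (by rw [Fin.le_def]; simpa using hmj)
        rw [← ht j hj] at this
        omega
    rw [hC]
    simp only []
    rw [hfeq, Fin.card_Iic]
  have hCzero : ∀ v : ℕ, t 0 ≤ v → C v = 0 := by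
    intro v hv
    rw [hC]
    simp only []
    rw [Finset.card_eq_zero]
    apply Finset.filter_false_of_mem
    intro m _
    have : s m ≤ s ⟨0, by omega⟩ := hs.antitone (by rw [Fin.le_def]; simp)
    rw [← ht 0 (by omega)] at this
    omega
  -- Step E : interval products
  have E : ∀ j, j ≤ k → ∏ v ∈ Finset.Ico (t j) (t 0), (C v + 1)
      = ∏ i ∈ Finset.range j, (i + 2) ^ (t i - t (i+1)) := by
    intro j
    induction j with
    | zero => simp
    | succ j ihj =>
      intro hjk
      have hj : j < k := by omega
      rw [← Finset.prod_Ico_consecutive (fun v => C v + 1)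
        (hmono j (j+1) (Nat.le_succ j)) (hmono 0 j (Nat.zero_le j))]
      rw [Finset.prod_range_succ, ihj (le_of_lt hj)]
      have hconst : ∏ v ∈ Finset.Ico (t (j+1)) (t j), (C v + 1) = (j + 2) ^ (t j - t (j+1)) := by
        rw [Finset.prod_congr rfl (fun v hv => ?_), Finset.prod_const, Nat.card_Ico]
      

        rw [Finset.mem_Ico] at hv
        rw [hCval j hj v hv.1 hv.2]
      rw [hconst, mul_comm]
  -- assembling the product
  have hprod : ∏ x : Fin n, (C ((x : ℕ) + 1) + 1)
      = ∏ i ∈ Finset.range k, (i + 2) ^ (t i - t (i+1)) := by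
    rw [Fin.prod_univ_eq_prod_range (fun v => C (v + 1) + 1) n]
    have h1 : ∏ v ∈ Finset.range n, (C (v+1) + 1) = ∏ v ∈ Finset.Ico 1 (n+1), (C v + 1) := by
      rw [Finset.prod_Ico_eq_prod_range]
      simp only [Nat.add_sub_cancel]
      exact Finset.prod_congr rfl (fun v _ => by rw [Nat.add_comm 1 v])
    rw [h1]
    have ht0n : t 0 ≤ n := by
      rw [ht 0 (by omega)]
      exact (hsge ⟨0, by omega⟩).2
    rw [← Finset.prod_Ico_consecutive (fun v => C v + 1) (ht1 0) (by omega : t 0 ≤ n + 1)]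
    have h2 : ∏ v ∈ Finset.Ico (t 0) (n+1), (C v + 1) = 1 :=
      Finset.prod_eq_one (fun v hv => by
        rw [Finset.mem_Ico] at hv
        have h0 : C v = 0 := hCzero v hv.1
        omega)

    rw [h2, mul_one]
    have h4 : Finset.Ico 1 (t 0) = Finset.Ico (t k) (t 0) := by rw [htk k le_rfl]
    rw [h4]
    exact E k le_rfl
  -- final rewriting
  have hfinal : ∏ i ∈ Finset.range k, (i + 2) ^ (t i - t (i+1))
      = ∏ i : Fin k, (1 + ((i : ℕ) + 1)) ^ (d i) := by
    rw [← Fin.prod_univ_eq_prod_range (fun i => (i + 2) ^ (t i - t (i+1))) k]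
    apply Finset.prod_congr rfl
    intro i _
    have hdi : t (i : ℕ) - t ((i : ℕ) + 1) = d i := by
      rw [hd i]
      by_cases h : (i : ℕ) + 1 < k
      · rw [dif_pos h, ht _ i.isLt, ht _ h, Fin.eta]
      · rw [dif_neg h, ht _ i.isLt, htk _ (by omega), Fin.eta]
    rw [hdi]
    congr 1
    omega
  exact le_of_le_of_eq step1 (hprod.trans hfinal)
end
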